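/- arXiv:2410.12712 — 9 statements merged into one kernel-verified Lean document; each statement's English description precedes it below -/
import Mathlib

section
/- Let 0 < ε ≤ 1/36 be a real number, set δ = 1/6 − √(1/36 − ε), and let t be a positive natural number. Define two weight functions on x : Fin t → Bool by p(x) = ∏_{i} (if x i then 2/3 else 1/3) and q(x) = ∏_{i} (if x i then 2/3 − δ else 1/3 + δ). If the total variation distance (1/2) Σ_{x : Fin t → Bool} |p(x) − q(x)| is at least 1/3, then t ≥ 1/(360 ε²). -/
open Finset

lemma sum_prod_bool_aux (t : ℕ) (f : Bool → ℝ) :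
    ∑ x : Fin t → Bool, ∏ i, f (x i) = (f false + f true) ^ t := by
  rw [← Fintype.piFinset_univ, ← Finset.prod_univ_sum]
  simp [add_comm (f true) (f false)]

lemma sqrt_prod_aux {ι : Type*} (s : Finset ι) (f : ι → ℝ) (hf : ∀ i ∈ s, 0 ≤ f i) :
    Real.sqrt (∏ i ∈ s, f i) = ∏ i ∈ s, Real.sqrt (f i) := by
  have h1 : (∏ i ∈ s, Real.sqrt (f i)) ^ 2 = ∏ i ∈ s, f i := by
    rw [← Finset.prod_pow]
    exact Finset.prod_congr rfl fun i hi => Real.sq_sqrt (hf i hi)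
  rw [← h1, Real.sqrt_sq (Finset.prod_nonneg fun i _ => Real.sqrt_nonneg _)]


lemma polyA_aux {d : ℝ} (hd : 0 ≤ d) (hu : 0 ≤ 1/6 - d) :
    (1/3 + d/2 - (3/8)*d^2 + (3/8)*d^3)^2 ≤ 1/9 + d/3 := by
  nlinarith [mul_nonneg (mul_nonneg hd hd) hd,
    mul_nonneg (mul_nonneg (mul_nonneg hd hd) hd) hu,
    mul_nonneg (mul_nonneg (mul_nonneg (mul_nonneg hd hd) hd) hu) hu,
    mul_nonneg (mul_nonneg (mul_nonneg (mul_nonneg (mul_nonneg hd hd) hd) hu) hu) hu,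
    mul_nonneg (mul_nonneg (mul_nonneg (mul_nonneg hd hd) hd) hd) hu,
    mul_nonneg (mul_nonneg (mul_nonneg (mul_nonneg (mul_nonneg hd hd) hd) hd) hu) hu]

lemma polyB_aux {d : ℝ} (hd : 0 ≤ d) (hu : 0 ≤ 1/6 - d) :
    (2/3 - d/2 - (3/16)*d^2 - (1/5)*d^3)^2 ≤ 4/9 - 2*d/3 := by
  nlinarith [mul_nonneg (mul_nonneg hd hd) hd,
    mul_nonneg (mul_nonneg (mul_nonneg hd hd) hd) hu,
    mul_nonneg (mul_nonneg (mul_nonneg (mul_nonneg hd hd) hd) hd) hu,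
    mul_nonneg (mul_nonneg (mul_nonneg (mul_nonneg (mul_nonneg hd hd) hd) hd) hu) hu,
    mul_nonneg (mul_nonneg (mul_nonneg (mul_nonneg (mul_nonneg hd hd) hd) hd) hd) hu]

lemma polyC_aux {d : ℝ} (hd : 0 ≤ d) (hu : 0 ≤ 1/6 - d) :
    1 - 20*(d/3 - d^2)^2 ≤
      (1/3 + d/2 - (3/8)*d^2 + (3/8)*d^3) + (2/3 - d/2 - (3/16)*d^2 - (1/5)*d^3) := by
  nlinarith [mul_nonneg hd hd, mul_nonneg (mul_nonneg hd hd) hu,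
    mul_nonneg (mul_nonneg (mul_nonneg hd hd) hu) hu]

set_option maxHeartbeats 4000000 in
/-- Classical core of the `Ω(1/ε²)` lower bound for purity estimation: if the total
variation distance between the `t`-fold products of the distributions `(1/3, 2/3)` and
`(1/3 + δ, 2/3 − δ)` on `Bool` (with `δ = 1/6 − √(1/36 − ε)`) is at least `1/3`, then
`t ≥ 1/(360 ε²)`. -/
theorem stmt_2 (ε : ℝ) (hε0 : 0 < ε) (hε1 : ε ≤ 1 / 36)
    (δ : ℝ) (hδ : δ = 1 / 6 - Real.sqrt (1 / 36 - ε))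
    (t : ℕ) (ht : 0 < t)
    (p q : (Fin t → Bool) → ℝ)
    (hp : ∀ x, p x = ∏ i, (if x i then (2 : ℝ) / 3 else 1 / 3))
    (hq : ∀ x, q x = ∏ i, (if x i then 2 / 3 - δ else 1 / 3 + δ))
    (hTV : (1 / 2 : ℝ) * ∑ x : Fin t → Bool, |p x - q x| ≥ 1 / 3) :
    (t : ℝ) ≥ 1 / (360 * ε ^ 2) := by
  -- basic facts about δ
  have hε36 : (0:ℝ) ≤ 1/36 - ε := by linarith
  have hsq : Real.sqrt (1/36 - ε) ^ 2 = 1/36 - ε := Real.sq_sqrt hε36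
  have hsqnn : 0 ≤ Real.sqrt (1/36 - ε) := Real.sqrt_nonneg _
  have hsqlt : Real.sqrt (1/36 - ε) < 1/6 := by
    have h1 : Real.sqrt (1/36 - ε) < Real.sqrt (1/36) :=
      Real.sqrt_lt_sqrt hε36 (by linarith)
    have h2 : Real.sqrt (1/36 : ℝ) = 1/6 := by
      rw [show (1/36:ℝ) = (1/6)^2 by norm_num, Real.sqrt_sq (by norm_num)]
    linarith [h1, h2.le, h2.ge]
  have hδ0 : 0 < δ := by rw [hδ]; linarith
  have hδ6 : δ ≤ 1/6 := by rw [hδ]; linarith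
  have hεδ : ε = δ/3 - δ^2 := by
    have h2 : (1/6 - δ)^2 = 1/36 - ε := by
      rw [show (1/6 - δ : ℝ) = Real.sqrt (1/36 - ε) by rw [hδ]; ring]
      exact hsq
    linear_combination h2
  -- the single-letter Bhattacharyya coefficient
  set A : ℝ := 1/9 + δ/3 with hA
  set B : ℝ := 4/9 - 2*δ/3 with hB
  have hApos : (0:ℝ) < A := by rw [hA]; linarith
  have hBpos : (0:ℝ) < B := by rw [hB]; linarith
  set ρ : ℝ := Real.sqrt A + Real.sqrt B with hρ
  -- sums of p, q and √(pq)
  have sump : ∑ x : Fin t → Bool, p x = 1 := by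
    have := sum_prod_bool_aux t (fun b => if b then (2:ℝ)/3 else 1/3)
    simp only [hp]
    rw [this]; norm_num
  have sumq : ∑ x : Fin t → Bool, q x = 1 := by
    have := sum_prod_bool_aux t (fun b => if b then (2:ℝ)/3 - δ else 1/3 + δ)
    simp only [hq]
    rw [this]; norm_num
  have hppos : ∀ x, 0 ≤ p x := by
    intro x; rw [hp]
    exact Finset.prod_nonneg fun i _ => by cases x i <;> simp <;> linarith
  have hqpos : ∀ x, 0 ≤ q x := by
    intro x; rw [hq]
    exact Finset.prod_nonneg fun i _ => by cases x i <;> simp <;> linarith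
  have sumpq : ∑ x : Fin t → Bool, Real.sqrt (p x * q x) = ρ ^ t := by
    have hpq : ∀ x : Fin t → Bool, p x * q x =
        ∏ i, (if x i then (2:ℝ)/3 * (2/3 - δ) else 1/3 * (1/3 + δ)) := by
      intro x
      rw [hp, hq, ← Finset.prod_mul_distrib]
      exact Finset.prod_congr rfl fun i _ => by cases x i <;> simp
    have hsqx : ∀ x : Fin t → Bool, Real.sqrt (p x * q x) =
        ∏ i, (if x i then Real.sqrt B else Real.sqrt A) := by
      intro x
      rw [hpq x, sqrt_prod_aux]
      · refine Finset.prod_congr rfl fun i _ => ?_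
        cases x i <;> simp only [if_true, if_false, Bool.false_eq_true]
        · rw [show (1:ℝ)/3 * (1/3 + δ) = A by rw [hA]; ring]
        · rw [show (2:ℝ)/3 * (2/3 - δ) = B by rw [hB]; ring]
      · intro i _; cases x i <;> simp <;> nlinarith
    calc ∑ x : Fin t → Bool, Real.sqrt (p x * q x)
        = ∑ x : Fin t → Bool, ∏ i, (fun b => if b then Real.sqrt B else Real.sqrt A) (x i) :=
          Finset.sum_congr rfl fun x _ => hsqx x
      _ = (Real.sqrt A + Real.sqrt B) ^ t := by
          simpa using sum_prod_bool_aux t (fun b => if b then Real.sqrt B else Real.sqrt A)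
  -- Cauchy–Schwarz: (ρ^t)² ≤ 8/9
  have key : (ρ ^ t) ^ 2 ≤ 8/9 := by
    have hmin : ∀ x : Fin t → Bool, 0 ≤ min (p x) (q x) :=
      fun x => le_min (hppos x) (hqpos x)
    have hCS := Finset.sum_mul_sq_le_sq_mul_sq Finset.univ
      (fun x : Fin t → Bool => Real.sqrt (min (p x) (q x)))
      (fun x : Fin t → Bool => Real.sqrt (max (p x) (q x)))
    have e1 : ∑ x : Fin t → Bool,
        Real.sqrt (min (p x) (q x)) * Real.sqrt (max (p x) (q x)) = ρ ^ t := by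
      rw [← sumpq]
      refine Finset.sum_congr rfl fun x _ => ?_
      rw [← Real.sqrt_mul (hmin x), min_mul_max]
    have e2 : ∑ x : Fin t → Bool, Real.sqrt (min (p x) (q x)) ^ 2
        = ∑ x : Fin t → Bool, min (p x) (q x) :=
      Finset.sum_congr rfl fun x _ => Real.sq_sqrt (hmin x)
    have e3 : ∑ x : Fin t → Bool, Real.sqrt (max (p x) (q x)) ^ 2
        = ∑ x : Fin t → Bool, max (p x) (q x) :=
      Finset.sum_congr rfl fun x _ =>
        Real.sq_sqrt (le_trans (hppos x) (le_max_left _ _))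
    rw [e1, e2, e3] at hCS
    have hsum : (∑ x : Fin t → Bool, min (p x) (q x))
        + ∑ x : Fin t → Bool, max (p x) (q x) = 2 := by
      rw [← Finset.sum_add_distrib]
      have : ∀ x : Fin t → Bool, min (p x) (q x) + max (p x) (q x) = p x + q x :=
        fun x => min_add_max _ _
      rw [Finset.sum_congr rfl fun x _ => this x, Finset.sum_add_distrib, sump, sumq]
      norm_num
    have hdiff : (∑ x : Fin t → Bool, max (p x) (q x))
        - ∑ x : Fin t → Bool, min (p x) (q x) = ∑ x : Fin t → Bool, |p x - q x| := by
      rw [← Finset.sum_sub_distrib]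
      exact Finset.sum_congr rfl fun x _ => by rw [max_sub_min_eq_abs, abs_sub_comm]
    have habs : (2:ℝ)/3 ≤ ∑ x : Fin t → Bool, |p x - q x| := by linarith
    set S := ∑ x : Fin t → Bool, |p x - q x| with hS
    set sm := ∑ x : Fin t → Bool, min (p x) (q x) with hsm'
    set sM := ∑ x : Fin t → Bool, max (p x) (q x) with hsM'
    have hsm2 : sm = (2 - S)/2 := by linarith
    have hsM2 : sM = (2 + S)/2 := by linarith
    calc (ρ ^ t) ^ 2 ≤ sm * sM := hCS
      _ = (2 - S)/2 * ((2 + S)/2) := by rw [hsm2, hsM2]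
      _ = 1 - S^2/4 := by ring
      _ ≤ 8/9 := by
          have h9 : (2/3:ℝ)^2 ≤ S^2 := pow_le_pow_left₀ (by norm_num) habs 2
          linarith
  -- lower bound on ρ via polynomial estimates on the square roots
  have hu : (0:ℝ) ≤ 1/6 - δ := by linarith
  have hd : (0:ℝ) ≤ δ := hδ0.le
  have hsA : 1/3 + δ/2 - (3/8)*δ^2 + (3/8)*δ^3 ≤ Real.sqrt A := by
    rw [show A = 1/9 + δ/3 from hA]
    exact Real.le_sqrt_of_sq_le (polyA_aux hd hu)
  have hsB : 2/3 - δ/2 - (3/16)*δ^2 - (1/5)*δ^3 ≤ Real.sqrt B := by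
    rw [show B = 4/9 - 2*δ/3 from hB]
    exact Real.le_sqrt_of_sq_le (polyB_aux hd hu)
  have hρlb : 1 - 20*ε^2 ≤ ρ := by
    rw [hρ, hεδ]
    have := polyC_aux hd hu
    linarith [hsA, hsB, this]
  have hρub : ρ ≤ 1 := by
    have h1 : Real.sqrt A ≤ 1/3 + δ/2 := by
      rw [show (1/3 + δ/2 : ℝ) = Real.sqrt ((1/3 + δ/2)^2) by
        rw [Real.sqrt_sq (by linarith)]]
      exact Real.sqrt_le_sqrt (by rw [hA]; nlinarith [sq_nonneg δ])
    have h2 : Real.sqrt B ≤ 2/3 - δ/2 := by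
      rw [show (2/3 - δ/2 : ℝ) = Real.sqrt ((2/3 - δ/2)^2) by
        rw [Real.sqrt_sq (by linarith)]]
      exact Real.sqrt_le_sqrt (by rw [hB]; nlinarith [sq_nonneg δ])
    rw [hρ]; linarith
  have hε2 : ε^2 ≤ 1/1296 := by nlinarith [hε0, hε1]
  have hρ319 : (319:ℝ)/324 ≤ ρ := by linarith
  have hρpos : (0:ℝ) < ρ := by linarith
  -- logarithm estimates
  have hlog98 : (6:ℝ)/53 ≤ Real.log (9/8) := by
    have hs : Real.sqrt ((8:ℝ)/9) ≤ 50/53 := by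
      rw [show (50/53 : ℝ) = Real.sqrt ((50/53)^2) by
        rw [Real.sqrt_sq (by norm_num)]]
      exact Real.sqrt_le_sqrt (by norm_num)
    have hspos : (0:ℝ) < Real.sqrt (8/9) := Real.sqrt_pos.mpr (by norm_num)
    have h1 : Real.log (Real.sqrt ((8:ℝ)/9)) ≤ 50/53 - 1 := by
      have := Real.log_le_sub_one_of_pos hspos
      linarith
    have h2 : Real.log ((8:ℝ)/9) = 2 * Real.log (Real.sqrt ((8:ℝ)/9)) := by
      rw [Real.log_sqrt (by norm_num)]; ring
    have h3 : Real.log ((9:ℝ)/8) = - Real.log ((8:ℝ)/9) := by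
      rw [show (9/8 : ℝ) = ((8:ℝ)/9)⁻¹ by norm_num, Real.log_inv]
    rw [h3, h2]; linarith
  have hlogρ : - Real.log ρ ≤ (324/319) * (20*ε^2) := by
    have h1 : Real.log (ρ⁻¹) ≤ ρ⁻¹ - 1 := Real.log_le_sub_one_of_pos (by positivity)
    rw [Real.log_inv] at h1
    have h2 : ρ⁻¹ - 1 = (1 - ρ)/ρ := by field_simp
    have h3 : (1 - ρ)/ρ ≤ (324/319) * (1 - ρ) := by
      rw [div_le_iff₀ hρpos]
      nlinarith [hρ319, hρub]
    have h4 : (324/319 : ℝ) * (1 - ρ) ≤ (324/319) * (20*ε^2) := by nlinarith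
    linarith
  -- combine
  have hlogkey : Real.log ((ρ ^ t) ^ 2) ≤ Real.log (8/9) := by
    apply Real.log_le_log (by positivity) key
  have hlogpow : Real.log ((ρ ^ t) ^ 2) = (2 * (t:ℝ)) * Real.log ρ := by
    rw [← pow_mul, Real.log_pow]
    push_cast; ring
  have h98 : Real.log ((8:ℝ)/9) = - Real.log ((9:ℝ)/8) := by
    rw [show (8/9 : ℝ) = ((9:ℝ)/8)⁻¹ by norm_num, Real.log_inv]
  have hmain : (6:ℝ)/53 ≤ 2 * (t:ℝ) * ((324/319) * (20*ε^2)) := by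
    have h5 : (6:ℝ)/53 ≤ 2 * (t:ℝ) * (- Real.log ρ) := by
      rw [hlogpow, h98] at hlogkey
      nlinarith [hlogkey, hlog98]
    have h6 : 2 * (t:ℝ) * (- Real.log ρ) ≤ 2 * (t:ℝ) * ((324/319) * (20*ε^2)) := by
      apply mul_le_mul_of_nonneg_left hlogρ
      positivity
    linarith
  rw [ge_iff_le, div_le_iff₀ (by positivity)]
  ring_nf at hmain ⊢
  linarith [hmain]
end

section
/- Let d, s ≥ 1 be natural numbers, let μ be the Haar probability measure on the unitary group of (Fin d × Fin s)-indexed complex matrices, and let e₀ be a fixed standard basis unit vector of ℂ^(Fin d × Fin s). For a unitary U let v = U e₀ and let ψ_U be the d×d matrix with entries ψ_U(i, j) = Σ_{k : Fin s} v(i, k) · conj(v(j, k)) (the partial trace over the s-dimensional factor of the rank-one projector onto the Haar-random pure state U e₀). Then ∫ tr(ψ_U²) dμ(U) = (d + s)/(d·s + 1). -/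
open MeasureTheory Matrix

/-- Borel measurable-space structure on the unitary group (as a subspace of matrices). -/
noncomputable instance unitaryGroupMeasurableSpace (n : Type*) [Fintype n] [DecidableEq n] :
    MeasurableSpace (Matrix.unitaryGroup n ℂ) := borel _

instance unitaryGroupBorelSpace (n : Type*) [Fintype n] [DecidableEq n] :
    BorelSpace (Matrix.unitaryGroup n ℂ) := ⟨rfl⟩

namespace StmtAux
variable {n : Type*} [Fintype n] [DecidableEq n]

/-- the first column of `U` (with respect to a basis vector index `e0`) -/
def uv (e0 : n) (U : Matrix.unitaryGroup n ℂ) : n → ℂ := fun p => (U : Matrix n n ℂ) p e0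

lemma uv_norm (e0 : n) (U : Matrix.unitaryGroup n ℂ) :
    ∑ p, uv e0 U p * (starRingEnd ℂ) (uv e0 U p) = 1 := by
  have h : (star (U : Matrix n n ℂ) * (U : Matrix n n ℂ)) e0 e0 = 1 := by
    rw [U.2.1]; simp [Matrix.one_apply]
  rw [Matrix.mul_apply] at h
  rw [← h]
  simp [uv, Matrix.star_apply, mul_comm]

lemma uv_bound (e0 : n) (U : Matrix.unitaryGroup n ℂ) (p : n) : ‖uv e0 U p‖ ≤ 1 := by
  have h := uv_norm e0 U
  have h2 : ∑ q, Complex.normSq (uv e0 U q) = 1 := by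
    have := congrArg Complex.re h
    simpa [Complex.mul_conj] using this
  have h3 : Complex.normSq (uv e0 U p) ≤ 1 := by
    rw [← h2]
    exact Finset.single_le_sum (fun q _ => Complex.normSq_nonneg _) (Finset.mem_univ p)
  have : ‖uv e0 U p‖ ^ 2 ≤ 1 := by rwa [← Complex.sq_norm] at h3
  nlinarith [norm_nonneg (uv e0 U p)]

lemma uv_continuous (e0 : n) (p : n) : Continuous fun U : Matrix.unitaryGroup n ℂ => uv e0 U p := by
  exact ((continuous_apply e0).comp ((continuous_apply p).comp continuous_subtype_val))

/-- quartic monomial -/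
def mon (e0 : n) (a b c d : n) (U : Matrix.unitaryGroup n ℂ) : ℂ :=
  uv e0 U a * (starRingEnd ℂ) (uv e0 U b) * uv e0 U c * (starRingEnd ℂ) (uv e0 U d)

lemma mon_continuous (e0 a b c d : n) : Continuous (mon e0 a b c d) := by
  have h := uv_continuous (n := n) e0
  exact (((h a).mul ((Complex.continuous_conj).comp (h b))).mul (h c)).mul
    ((Complex.continuous_conj).comp (h d))


/-- a diagonal unitary with `i` at position `x` and `1` elsewhere -/
def phU (x : n) : Matrix.unitaryGroup n ℂ :=
  ⟨Matrix.diagonal (fun p => if p = x then Complex.I else 1), by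
    rw [Matrix.mem_unitaryGroup_iff]
    rw [Matrix.star_eq_conjTranspose, Matrix.diagonal_conjTranspose, Matrix.diagonal_mul_diagonal]
    have h1 : (fun i => (if i = x then Complex.I else 1) * star (fun p => if p = x then Complex.I else 1) i) = (1 : n → ℂ) := by
      funext p
      by_cases h : p = x <;>
        simp [h, Pi.star_apply, Complex.star_def, Complex.mul_conj, Pi.one_apply]
    rw [h1]; exact Matrix.diagonal_one⟩

lemma phU_mulVec (x : n) (w : n → ℂ) (p : n) :
    ((phU x : Matrix n n ℂ).mulVec w) p = (if p = x then Complex.I else 1) * w p := by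
  simp [phU, Matrix.mulVec_diagonal]

/-- permutation unitary -/
def permU (σ : Equiv.Perm n) : Matrix.unitaryGroup n ℂ :=
  ⟨Matrix.of (fun p q => if q = σ p then 1 else 0), by
    rw [Matrix.mem_unitaryGroup_iff]
    ext p q
    simp only [Matrix.mul_apply, Matrix.star_eq_conjTranspose, Matrix.conjTranspose_apply,
      Matrix.of_apply, Matrix.one_apply]
    rw [Finset.sum_congr rfl (g := fun r => if r = σ p then (if r = σ q then 1 else 0) else 0)
      (fun r _ => by by_cases h1 : r = σ p <;> by_cases h2 : r = σ q <;> simp [h1, h2])]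
    simp [Finset.sum_ite_eq', EmbeddingLike.apply_eq_iff_eq, eq_comm]⟩

lemma permU_mulVec (σ : Equiv.Perm n) (w : n → ℂ) (p : n) :
    ((permU σ : Matrix n n ℂ).mulVec w) p = w (σ p) := by
  simp [permU, Matrix.mulVec, dotProduct]

noncomputable def rc : ℂ := ((Real.sqrt 2)⁻¹ : ℝ)

lemma rc_mul_rc : rc * rc = 2⁻¹ := by
  rw [rc, ← Complex.ofReal_mul, ← Real.sqrt_inv, Real.mul_self_sqrt (by norm_num)]
  norm_num

lemma rc_conj : (starRingEnd ℂ) rc = rc := Complex.conj_ofReal _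

noncomputable def rotM (a c : n) : Matrix n n ℂ := Matrix.of fun p q =>
  if p = a then (if q = a then rc else if q = c then rc else 0)
  else if p = c then (if q = a then rc else if q = c then -rc else 0)
  else (if q = p then 1 else 0)

lemma rotM_mulVec (a c : n) (hac : a ≠ c) (w : n → ℂ) (p : n) :
    ((rotM a c).mulVec w) p =
      if p = a then rc * (w a + w c) else if p = c then rc * (w a - w c) else w p := by
  unfold rotM Matrix.mulVec dotProduct
  by_cases hpa : p = a
  · simp only [hpa, Matrix.of_apply, if_pos rfl]
    rw [Finset.sum_congr rfl (g := fun q =>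
        (if q = a then rc * w q else 0) + (if q = c then rc * w q else 0))
      (fun q _ => by
        by_cases h1 : q = a
        · simp [h1, hac]
        · by_cases h2 : q = c <;> simp [h1, h2, hac, hac.symm])]
    rw [Finset.sum_add_distrib, Finset.sum_ite_eq', Finset.sum_ite_eq']
    simp [mul_add]
  · by_cases hpc : p = c
    · simp only [hpa, hpc, Matrix.of_apply, if_neg, if_pos rfl]
      rw [Finset.sum_congr rfl (g := fun q =>
          (if q = a then rc * w q else 0) + (if q = c then -rc * w q else 0))
        (fun q _ => by
          by_cases h1 : q = a
          · simp [h1, hpa, hac, hac.symm]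
          · by_cases h2 : q = c <;> simp [h1, h2, hpa, hac, hac.symm])]
      rw [Finset.sum_add_distrib, Finset.sum_ite_eq', Finset.sum_ite_eq']
      simp [hac.symm]; ring
    · simp only [Matrix.of_apply, hpa, hpc, if_neg]
      rw [Finset.sum_congr rfl (g := fun q => if q = p then w q else 0)
        (fun q _ => by
          by_cases h1 : q = p
          · simp [h1, hpa, hpc]
          · simp [h1, hpa, hpc])]
      rw [Finset.sum_ite_eq']
      simp

lemma rotM_symm (a c : n) (hac : a ≠ c) : (rotM a c)ᴴ = rotM a c := by
  ext p q
  simp only [Matrix.conjTranspose_apply, rotM, Matrix.of_apply]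
  by_cases h1 : p = a <;> by_cases h2 : q = a <;> by_cases h3 : p = c <;> by_cases h4 : q = c <;>
    simp_all [rc_conj, map_zero, map_neg, eq_comm] <;> simp [Complex.conj_ofReal, rc]

lemma rotM_apply_a (a c q : n) : rotM a c a q = if q = a then rc else if q = c then rc else 0 := by
  simp [rotM]

lemma rotM_apply_c (a c : n) (hac : a ≠ c) (q : n) :
    rotM a c c q = if q = a then rc else if q = c then -rc else 0 := by
  simp [rotM, hac.symm]

lemma rotM_apply_other (a c p : n) (hpa : p ≠ a) (hpc : p ≠ c) (q : n) :
    rotM a c p q = if q = p then 1 else 0 := by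
  simp [rotM, hpa, hpc]

noncomputable def rotU (a c : n) (hac : a ≠ c) : Matrix.unitaryGroup n ℂ :=
  ⟨rotM a c, by
    rw [Matrix.mem_unitaryGroup_iff, Matrix.star_eq_conjTranspose, rotM_symm a c hac]
    ext p q
    rw [Matrix.mul_apply]
    have key := rotM_mulVec a c hac (fun r => rotM a c r q) p
    unfold Matrix.mulVec dotProduct at key
    rw [key, rotM_apply_a a c q, rotM_apply_c a c hac q]
    have h2 := rc_mul_rc
    rw [Matrix.one_apply]
    by_cases hpa : p = a
    · by_cases hqa : q = a
      · simp only [hpa, hqa, if_pos rfl, if_true]; linear_combination 2 * h2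
      · by_cases hqc : q = c
        · simp only [hpa, hqc, if_pos rfl, if_neg hqa, if_neg hac, if_neg (Ne.symm hac), if_true]
          ring
        · have hpq : ¬a = q := fun h => hqa h.symm
          simp only [hpa, if_pos rfl, if_neg hqa, if_neg hqc, if_neg hpq, if_true]
          ring
    · by_cases hpc : p = c
      · have hca : ¬c = a := Ne.symm hac
        by_cases hqa : q = a
        · simp only [hpc, hqa, if_pos rfl, if_neg hca, if_neg (fun h : c = a => hca h), if_true]
          ring
        · by_cases hqc : q = c
          · simp [hpc, hqc, hca, hqa]
            linear_combination 2 * h2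
          · have hpq : ¬c = q := fun h => hqc h.symm
            simp only [hpc, if_pos rfl, if_neg hca, if_neg hqa, if_neg hqc, if_neg hpq, if_true]
            ring
      · rw [if_neg hpa, if_neg hpc, rotM_apply_other a c p hpa hpc q]
        by_cases hqp : q = p
        · simp [hqp]
        · have hpq : ¬p = q := fun h => hqp h.symm
          simp [hqp, hpq]⟩

lemma rotU_mulVec (a c : n) (hac : a ≠ c) (w : n → ℂ) (p : n) :
    (((rotU a c hac : Matrix.unitaryGroup n ℂ) : Matrix n n ℂ).mulVec w) p =
      if p = a then rc * (w a + w c) else if p = c then rc * (w a - w c) else w p :=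
  rotM_mulVec a c hac w p

variable (μ : Measure (Matrix.unitaryGroup n ℂ)) [IsProbabilityMeasure μ] [μ.IsMulLeftInvariant]

lemma mon_integrable (e0 a b c d : n) : Integrable (mon e0 a b c d) μ := by
  refine (integrable_const (1 : ℝ)).mono'
    ((mon_continuous e0 a b c d).aestronglyMeasurable) ?_
  filter_upwards with U
  have h := uv_bound e0 U
  simp only [mon, norm_mul, norm_one]
  calc ‖uv e0 U a‖ * ‖(starRingEnd ℂ) (uv e0 U b)‖ * ‖uv e0 U c‖ * ‖(starRingEnd ℂ) (uv e0 U d)‖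
      ≤ 1 * 1 * 1 * 1 := by
        gcongr <;> simpa using h _
    _ = 1 := by ring

/-- key invariance: composing with a fixed unitary `W` on the left doesn't change integrals. -/
lemma integral_left_invariant (f : (n → ℂ) → ℂ) (e0 : n) (W : Matrix.unitaryGroup n ℂ) :
    ∫ U, f ((W : Matrix n n ℂ).mulVec (uv e0 U)) ∂μ = ∫ U, f (uv e0 U) ∂μ := by
  have key : ∀ U : Matrix.unitaryGroup n ℂ, uv e0 (W * U) = (W : Matrix n n ℂ).mulVec (uv e0 U) := by
    intro U
    funext p
    simp [uv, Matrix.mulVec, Matrix.mul_apply, dotProduct]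
  have := MeasureTheory.integral_mul_left_eq_self (μ := μ) (fun U => f (uv e0 U)) W
  rw [← this]
  refine integral_congr_ae (Filter.Eventually.of_forall fun U => ?_)
  simp only [key U]

noncomputable def m (e0 : n) (a b c d : n) : ℂ := ∫ U, mon e0 a b c d U ∂μ

/-- factor picked up by a phase rotation at `x` -/
noncomputable def phf (x a b c d : n) : ℂ :=
  (if a = x then Complex.I else 1) * (starRingEnd ℂ) (if b = x then Complex.I else 1) *
    (if c = x then Complex.I else 1) * (starRingEnd ℂ) (if d = x then Complex.I else 1)

lemma m_phase (e0 x a b c d : n) : m μ e0 a b c d = phf x a b c d * m μ e0 a b c d := by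
  have h := integral_left_invariant μ
    (fun w => w a * (starRingEnd ℂ) (w b) * w c * (starRingEnd ℂ) (w d)) e0 (phU x)
  have hpt : ∀ U : Matrix.unitaryGroup n ℂ,
      (((phU x : Matrix.unitaryGroup n ℂ) : Matrix n n ℂ).mulVec (uv e0 U)) a *
        (starRingEnd ℂ) ((((phU x : Matrix.unitaryGroup n ℂ) : Matrix n n ℂ).mulVec (uv e0 U)) b) *
        (((phU x : Matrix.unitaryGroup n ℂ) : Matrix n n ℂ).mulVec (uv e0 U)) c *
        (starRingEnd ℂ) ((((phU x : Matrix.unitaryGroup n ℂ) : Matrix n n ℂ).mulVec (uv e0 U)) d)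
      = phf x a b c d * mon e0 a b c d U := by
    intro U
    simp only [phU_mulVec, _root_.map_mul, phf, mon]
    ring
  calc m μ e0 a b c d
      = ∫ U, (((phU x : Matrix.unitaryGroup n ℂ) : Matrix n n ℂ).mulVec (uv e0 U)) a *
          (starRingEnd ℂ) ((((phU x : Matrix.unitaryGroup n ℂ) : Matrix n n ℂ).mulVec (uv e0 U)) b) *
          (((phU x : Matrix.unitaryGroup n ℂ) : Matrix n n ℂ).mulVec (uv e0 U)) c *
          (starRingEnd ℂ) ((((phU x : Matrix.unitaryGroup n ℂ) : Matrix n n ℂ).mulVec (uv e0 U)) d) ∂μ := (h).symm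
    _ = ∫ U, phf x a b c d * mon e0 a b c d U ∂μ := by simp only [hpt]
    _ = phf x a b c d * m μ e0 a b c d := integral_const_mul _ _

lemma m_vanish (e0 x a b c d : n) (h : phf x a b c d ≠ 1) : m μ e0 a b c d = 0 := by
  have h1 := m_phase μ e0 x a b c d
  have h2 : (phf x a b c d - 1) * m μ e0 a b c d = 0 := by linear_combination -h1
  rcases mul_eq_zero.mp h2 with h3 | h3
  · exact absurd (by linear_combination h3) h
  · exact h3

lemma m_perm (e0 : n) (σ : Equiv.Perm n) (a b c d : n) :
    m μ e0 (σ a) (σ b) (σ c) (σ d) = m μ e0 a b c d := by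
  have h := integral_left_invariant μ
    (fun w => w a * (starRingEnd ℂ) (w b) * w c * (starRingEnd ℂ) (w d)) e0 (permU σ)
  have hpt : ∀ U : Matrix.unitaryGroup n ℂ,
      (fun w => w a * (starRingEnd ℂ) (w b) * w c * (starRingEnd ℂ) (w d))
        (((permU σ : Matrix.unitaryGroup n ℂ) : Matrix n n ℂ).mulVec (uv e0 U))
      = mon e0 (σ a) (σ b) (σ c) (σ d) U := by
    intro U
    simp only [permU_mulVec, mon]
  calc m μ e0 (σ a) (σ b) (σ c) (σ d)
      = ∫ U, (fun w => w a * (starRingEnd ℂ) (w b) * w c * (starRingEnd ℂ) (w d))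
          (((permU σ : Matrix.unitaryGroup n ℂ) : Matrix n n ℂ).mulVec (uv e0 U)) ∂μ := by
        unfold m; simp only [hpt]
    _ = m μ e0 a b c d := h

lemma m_rot (e0 a c : n) (hac : a ≠ c) :
    m μ e0 a a a a = 4⁻¹ * (m μ e0 a a a a + m μ e0 c c c c) + m μ e0 a a c c := by
  classical
  have key : ∀ x y : ℂ, (rc*(x+y)) * (starRingEnd ℂ) (rc*(x+y)) * (rc*(x+y)) *
      (starRingEnd ℂ) (rc*(x+y)) =
    4⁻¹ * (x * (starRingEnd ℂ) x * x * (starRingEnd ℂ) x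
      + (y * (starRingEnd ℂ) y * y * (starRingEnd ℂ) y
      + (4 * (x * (starRingEnd ℂ) x * y * (starRingEnd ℂ) y)
      + (x * (starRingEnd ℂ) y * x * (starRingEnd ℂ) y
      + (y * (starRingEnd ℂ) x * y * (starRingEnd ℂ) x
      + (2 * (x * (starRingEnd ℂ) x * x * (starRingEnd ℂ) y)
      + (2 * (x * (starRingEnd ℂ) x * y * (starRingEnd ℂ) x)
      + (2 * (x * (starRingEnd ℂ) y * y * (starRingEnd ℂ) y)
      + 2 * (y * (starRingEnd ℂ) x * y * (starRingEnd ℂ) y))))))))) := by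
    intro x y
    simp only [_root_.map_mul, map_add, rc_conj]
    linear_combination (rc * rc + 2⁻¹) *
      ((x + y) * ((starRingEnd ℂ) x + (starRingEnd ℂ) y))^2 * rc_mul_rc
  have h := integral_left_invariant μ
    (fun w => w a * (starRingEnd ℂ) (w a) * w a * (starRingEnd ℂ) (w a)) e0 (rotU a c hac)
  have hpt : ∀ U : Matrix.unitaryGroup n ℂ,
      (fun w => w a * (starRingEnd ℂ) (w a) * w a * (starRingEnd ℂ) (w a))
        (((rotU a c hac : Matrix.unitaryGroup n ℂ) : Matrix n n ℂ).mulVec (uv e0 U))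
      = 4⁻¹ * (mon e0 a a a a U + (mon e0 c c c c U + (4 * mon e0 a a c c U +
          (mon e0 a c a c U + (mon e0 c a c a U + (2 * mon e0 a a a c U +
          (2 * mon e0 a a c a U + (2 * mon e0 a c c c U + 2 * mon e0 c a c c U)))))))) := by
    intro U
    simp only [rotU_mulVec, if_pos rfl, mon]
    exact key (uv e0 U a) (uv e0 U c)
  have hint : ∀ a' b' c' d' : n, Integrable (mon e0 a' b' c' d') μ := fun a' b' c' d' =>
    mon_integrable μ e0 a' b' c' d'
  have h2 : m μ e0 a a a a
      = 4⁻¹ * (m μ e0 a a a a + (m μ e0 c c c c + (4 * m μ e0 a a c c +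
          (m μ e0 a c a c + (m μ e0 c a c a + (2 * m μ e0 a a a c +
          (2 * m μ e0 a a c a + (2 * m μ e0 a c c c + 2 * m μ e0 c a c c)))))))) := by
    calc m μ e0 a a a a
        = ∫ U, (fun w => w a * (starRingEnd ℂ) (w a) * w a * (starRingEnd ℂ) (w a))
            (((rotU a c hac : Matrix.unitaryGroup n ℂ) : Matrix n n ℂ).mulVec (uv e0 U)) ∂μ :=
          (h).symm
      _ = ∫ U, 4⁻¹ * (mon e0 a a a a U + (mon e0 c c c c U + (4 * mon e0 a a c c U +
            (mon e0 a c a c U + (mon e0 c a c a U + (2 * mon e0 a a a c U +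
            (2 * mon e0 a a c a U + (2 * mon e0 a c c c U + 2 * mon e0 c a c c U)))))))) ∂μ := by
          simp only [hpt]
      _ = _ := by
          rw [integral_const_mul]
          congr 1
          have i1 : Integrable (fun U => mon e0 a a a a U) μ := hint a a a a
          have i2 : Integrable (fun U => mon e0 c c c c U) μ := hint c c c c
          have i3 : Integrable (fun U => 4 * mon e0 a a c c U) μ := (hint a a c c).const_mul 4
          have i4 : Integrable (fun U => mon e0 a c a c U) μ := hint a c a c
          have i5 : Integrable (fun U => mon e0 c a c a U) μ := hint c a c a
          have i6 : Integrable (fun U => 2 * mon e0 a a a c U) μ := (hint a a a c).const_mul 2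
          have i7 : Integrable (fun U => 2 * mon e0 a a c a U) μ := (hint a a c a).const_mul 2
          have i8 : Integrable (fun U => 2 * mon e0 a c c c U) μ := (hint a c c c).const_mul 2
          have i9 : Integrable (fun U => 2 * mon e0 c a c c U) μ := (hint c a c c).const_mul 2
          have i89 : Integrable (fun U => 2 * mon e0 a c c c U + 2 * mon e0 c a c c U) μ := i8.add i9
          have i789 : Integrable (fun U => 2 * mon e0 a a c a U +
              (2 * mon e0 a c c c U + 2 * mon e0 c a c c U)) μ := i7.add i89
          have i6789 : Integrable (fun U => 2 * mon e0 a a a c U + (2 * mon e0 a a c a U +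
              (2 * mon e0 a c c c U + 2 * mon e0 c a c c U))) μ := i6.add i789
          have i56789 : Integrable (fun U => mon e0 c a c a U + (2 * mon e0 a a a c U +
              (2 * mon e0 a a c a U + (2 * mon e0 a c c c U + 2 * mon e0 c a c c U)))) μ :=
            i5.add i6789
          have i456789 : Integrable (fun U => mon e0 a c a c U + (mon e0 c a c a U +
              (2 * mon e0 a a a c U + (2 * mon e0 a a c a U +
              (2 * mon e0 a c c c U + 2 * mon e0 c a c c U))))) μ := i4.add i56789
          have i3456789 : Integrable (fun U => 4 * mon e0 a a c c U + (mon e0 a c a c U +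
              (mon e0 c a c a U + (2 * mon e0 a a a c U + (2 * mon e0 a a c a U +
              (2 * mon e0 a c c c U + 2 * mon e0 c a c c U)))))) μ := i3.add i456789
          have i23456789 : Integrable (fun U => mon e0 c c c c U + (4 * mon e0 a a c c U +
              (mon e0 a c a c U + (mon e0 c a c a U + (2 * mon e0 a a a c U +
              (2 * mon e0 a a c a U + (2 * mon e0 a c c c U + 2 * mon e0 c a c c U))))))) μ :=
            i2.add i3456789
          rw [integral_add i1 i23456789, integral_add i2 i3456789, integral_add i3 i456789,
            integral_add i4 i56789, integral_add i5 i6789, integral_add i6 i789,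
            integral_add i7 i89, integral_add i8 i9]
          simp only [integral_const_mul]
          rfl
  have hca : ¬c = a := Ne.symm hac
  have v1 : m μ e0 a c a c = 0 := m_vanish μ e0 a a c a c (by
    simp only [phf, if_pos rfl, if_neg hca, _root_.map_one, Complex.conj_I]
    norm_num [Complex.ext_iff])
  have v2 : m μ e0 c a c a = 0 := m_vanish μ e0 a c a c a (by
    simp only [phf, if_pos rfl, if_neg hca, _root_.map_one, Complex.conj_I]
    norm_num [Complex.ext_iff])
  have v3 : m μ e0 a a a c = 0 := m_vanish μ e0 a a a a c (by
    simp only [phf, if_pos rfl, if_neg hca, _root_.map_one, Complex.conj_I]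
    norm_num [Complex.ext_iff])
  have v4 : m μ e0 a a c a = 0 := m_vanish μ e0 a a a c a (by
    simp only [phf, if_pos rfl, if_neg hca, _root_.map_one, Complex.conj_I]
    norm_num [Complex.ext_iff])
  have v5 : m μ e0 a c c c = 0 := m_vanish μ e0 c a c c c (by
    simp only [phf, if_pos rfl, if_neg hac, _root_.map_one, Complex.conj_I]
    norm_num [Complex.ext_iff])
  have v6 : m μ e0 c a c c = 0 := m_vanish μ e0 c c a c c (by
    simp only [phf, if_pos rfl, if_neg hac, _root_.map_one, Complex.conj_I]
    norm_num [Complex.ext_iff])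
  rw [v1, v2, v3, v4, v5, v6] at h2
  linear_combination h2

lemma m_diag_symm (e0 a c : n) : m μ e0 c c c c = m μ e0 a a a a := by
  have h := m_perm μ e0 (Equiv.swap a c) a a a a
  simpa [Equiv.swap_apply_left] using h

lemma m_A_eq_two_B (e0 a c : n) (hac : a ≠ c) :
    m μ e0 a a a a = 2 * m μ e0 a a c c := by
  have h := m_rot μ e0 a c hac
  rw [m_diag_symm μ e0 a c] at h
  linear_combination 2 * h

lemma m_B_symm (e0 : n) (a c a' c' : n) (hac : a ≠ c) (hac' : a' ≠ c') :
    m μ e0 a a c c = m μ e0 a' a' c' c' := by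
  classical
  set σ1 := Equiv.swap a' a
  have h1 : σ1 a' = a := Equiv.swap_apply_left a' a
  set c1 := σ1 c'
  have hc1 : c1 ≠ a := by
    intro h
    exact hac' (σ1.injective (h.trans h1.symm)).symm
  set σ2 := Equiv.swap c1 c
  have hσa : σ2 a = a := Equiv.swap_apply_of_ne_of_ne (Ne.symm hc1) hac
  have hσc : σ2 c1 = c := Equiv.swap_apply_left c1 c
  have h := m_perm μ e0 (σ1.trans σ2) a' a' c' c'
  rw [show (σ1.trans σ2) a' = a by simp [Equiv.trans_apply, h1, hσa],
      show (σ1.trans σ2) c' = c by simp [Equiv.trans_apply, hσc]; exact hσc] at h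
  exact h

lemma m_sum_eq_one (e0 : n) : ∑ a : n, ∑ c : n, m μ e0 a a c c = 1 := by
  classical
  have hpt : ∀ U : Matrix.unitaryGroup n ℂ, ∑ a : n, ∑ c : n, mon e0 a a c c U = 1 := by
    intro U
    have expand : ∑ a : n, ∑ c : n, mon e0 a a c c U
        = (∑ a : n, uv e0 U a * (starRingEnd ℂ) (uv e0 U a)) *
          (∑ c : n, uv e0 U c * (starRingEnd ℂ) (uv e0 U c)) := by
      rw [Finset.sum_mul_sum]
      refine Finset.sum_congr rfl fun a _ => Finset.sum_congr rfl fun c _ => ?_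
      unfold mon; ring
    rw [expand, uv_norm e0 U, one_mul]
  have : ∑ a : n, ∑ c : n, m μ e0 a a c c
      = ∫ U, ∑ a : n, ∑ c : n, mon e0 a a c c U ∂μ := by
    rw [integral_finset_sum _ (fun a _ => integrable_finset_sum _
      (fun c _ => mon_integrable μ e0 a a c c))]
    refine Finset.sum_congr rfl fun a _ => ?_
    rw [integral_finset_sum _ (fun c _ => mon_integrable μ e0 a a c c)]
    rfl
  rw [this]
  simp only [hpt]
  simp

/-- value of the basic moments, for `card n ≥ 2` -/
lemma m_B_value (e0 : n) (hn : 1 < Fintype.card n) (a c : n) (hac : a ≠ c) :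
    m μ e0 a a c c = ((Fintype.card n : ℂ) * ((Fintype.card n : ℂ) + 1))⁻¹ := by
  classical
  have hnt : Nontrivial n := Fintype.one_lt_card_iff_nontrivial.mp hn
  set N := Fintype.card n
  set B := m μ e0 a a c c with hB
  have hBall : ∀ a' c' : n, a' ≠ c' → m μ e0 a' a' c' c' = B :=
    fun a' c' h => m_B_symm μ e0 a' c' a c h hac
  have hA : ∀ a' : n, m μ e0 a' a' a' a' = 2 * B := by
    intro a'
    obtain ⟨c', hc'⟩ := exists_ne a'
    rw [m_A_eq_two_B μ e0 a' c' (Ne.symm hc'), hBall a' c' (Ne.symm hc')]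
  have hsum := m_sum_eq_one μ e0
  have hrow : ∀ a' : n, ∑ c' : n, m μ e0 a' a' c' c' = (N + 1 : ℂ) * B := by
    intro a'
    rw [← Finset.add_sum_erase _ _ (Finset.mem_univ a'), hA a']
    rw [Finset.sum_congr rfl (fun c' hc' => hBall a' c' (Ne.symm (Finset.ne_of_mem_erase hc')))]
    rw [Finset.sum_const, Finset.card_erase_of_mem (Finset.mem_univ a'), Finset.card_univ]
    push_cast [nsmul_eq_mul]
    have hN1 : (1:ℕ) ≤ N := le_of_lt hn
    rw [Nat.cast_sub hN1]
    push_cast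
    ring
  rw [Finset.sum_congr rfl (fun a' _ => hrow a')] at hsum
  rw [Finset.sum_const, Finset.card_univ, nsmul_eq_mul] at hsum
  have hN0 : ((N : ℂ) * ((N : ℂ) + 1)) ≠ 0 := by
    have h1 : (N:ℂ) ≠ 0 := Nat.cast_ne_zero.mpr (by omega)
    have h2 : ((N:ℂ) + 1) ≠ 0 := by
      have h3 : ((N + 1 : ℕ) : ℂ) ≠ 0 := Nat.cast_ne_zero.mpr (Nat.succ_ne_zero N)
      push_cast at h3
      exact h3
    exact mul_ne_zero h1 h2
  have hsum' : (N:ℂ) * ((N+1)*B) = 1 := hsum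
  apply eq_inv_of_mul_eq_one_left
  linear_combination hsum'


lemma m_swap_mid (e0 a c : n) : m μ e0 a c c a = m μ e0 a a c c := by
  unfold m
  refine integral_congr_ae (Filter.Eventually.of_forall fun U => ?_)
  unfold mon; ring

lemma m_A_value (e0 : n) (hn : 1 < Fintype.card n) (a : n) :
    m μ e0 a a a a = 2 * ((Fintype.card n : ℂ) * ((Fintype.card n : ℂ) + 1))⁻¹ := by
  have hnt : Nontrivial n := Fintype.one_lt_card_iff_nontrivial.mp hn
  obtain ⟨c, hc⟩ := exists_ne a
  rw [m_A_eq_two_B μ e0 a c (Ne.symm hc), m_B_value μ e0 hn a c (Ne.symm hc)]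

lemma mulVec_basis (U : Matrix.unitaryGroup n ℂ) (e0 : n) (p : n) :
    ((U : Matrix n n ℂ).mulVec (fun q => if q = e0 then 1 else 0)) p = uv e0 U p := by
  simp [uv, Matrix.mulVec, dotProduct, Finset.sum_ite_eq']

end StmtAux

open StmtAux in
/-- The expected purity of a random induced state obtained by tracing out an `s`-dimensional
factor from a Haar-random pure state in dimension `d·s` equals `(d + s)/(d·s + 1)`.
The Haar probability measure is encoded as an arbitrary left-invariant Borel probability
measure `μ` on the unitary group (such a measure is unique, and is the Haar measure). -/
theorem stmt_3 (d s : ℕ) (hd : 0 < d) (hs : 0 < s)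
    (μ : Measure (Matrix.unitaryGroup (Fin d × Fin s) ℂ))
    [IsProbabilityMeasure μ] [μ.IsMulLeftInvariant]
    (e₀ : Fin d × Fin s → ℂ)
    (he₀ : e₀ = fun p => if p = (⟨0, hd⟩, ⟨0, hs⟩) then 1 else 0)
    (ψ : Matrix.unitaryGroup (Fin d × Fin s) ℂ → Matrix (Fin d) (Fin d) ℂ)
    (hψ : ∀ U i j, ψ U i j =
      ∑ k : Fin s,
        ((U : Matrix (Fin d × Fin s) (Fin d × Fin s) ℂ).mulVec e₀ (i, k)) *
          (starRingEnd ℂ) ((U : Matrix (Fin d × Fin s) (Fin d × Fin s) ℂ).mulVec e₀ (j, k))) :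
    ∫ U, (Matrix.trace (ψ U * ψ U)).re ∂μ = ((d : ℝ) + s) / ((d : ℝ) * s + 1) := by
  classical
  set e0 : Fin d × Fin s := (⟨0, hd⟩, ⟨0, hs⟩) with he0def
  have hv : ∀ (U : Matrix.unitaryGroup (Fin d × Fin s) ℂ) (p : Fin d × Fin s),
      (U : Matrix (Fin d × Fin s) (Fin d × Fin s) ℂ).mulVec e₀ p = uv e0 U p := by
    intro U p
    rw [he₀]
    exact mulVec_basis U e0 p
  have htr : ∀ U, Matrix.trace (ψ U * ψ U)
      = ∑ a : Fin d × Fin s, ∑ c : Fin d × Fin s, mon e0 a (c.1, a.2) c (a.1, c.2) U := by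
    intro U
    have hψ' : ∀ i j, ψ U i j
        = ∑ k : Fin s, uv e0 U (i,k) * (starRingEnd ℂ) (uv e0 U (j,k)) := by
      intro i j
      rw [hψ U i j]
      exact Finset.sum_congr rfl fun k _ => by rw [hv, hv]
    calc Matrix.trace (ψ U * ψ U) = ∑ i, ∑ j, ψ U i j * ψ U j i := by
          simp [Matrix.trace, Matrix.diag, Matrix.mul_apply]
      _ = ∑ i, ∑ j, ∑ k, ∑ l, uv e0 U (i,k) * (starRingEnd ℂ) (uv e0 U (j,k)) *
            (uv e0 U (j,l) * (starRingEnd ℂ) (uv e0 U (i,l))) := by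
          refine Finset.sum_congr rfl fun i _ => Finset.sum_congr rfl fun j _ => ?_
          rw [hψ' i j, hψ' j i, Finset.sum_mul_sum]
      _ = ∑ a : Fin d × Fin s, ∑ c : Fin d × Fin s, mon e0 a (c.1, a.2) c (a.1, c.2) U := by
          simp only [Fintype.sum_prod_type]
          refine Finset.sum_congr rfl fun i _ => ?_
          rw [Finset.sum_comm]
          refine Finset.sum_congr rfl fun k _ => Finset.sum_congr rfl fun j _ =>
            Finset.sum_congr rfl fun l _ => ?_
          unfold StmtAux.mon
          ring
  by_cases hds : 1 < d * s
  · -- main case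
    have hn' : 1 < Fintype.card (Fin d × Fin s) := by simpa using hds
    set B : ℂ := ((Fintype.card (Fin d × Fin s) : ℂ) *
      ((Fintype.card (Fin d × Fin s) : ℂ) + 1))⁻¹ with hBdef
    have key : ∀ a c : Fin d × Fin s, m μ e0 a (c.1, a.2) c (a.1, c.2)
        = (if a.1 = c.1 then B else 0) + (if a.2 = c.2 then B else 0) := by
      intro a c
      by_cases h1 : a.1 = c.1
      · by_cases h2 : a.2 = c.2
        · have hac : a = c := Prod.ext h1 h2
          subst hac
          rw [if_pos rfl, if_pos rfl]
          have hmk : (a.1, a.2) = a := rfl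
          rw [hmk, m_A_value μ e0 hn' a]
          ring
        · rw [if_pos h1, if_neg h2, add_zero]
          have hb : ((c.1 : Fin d), a.2) = a := by rw [← h1]
          have hdd : ((a.1 : Fin d), c.2) = c := by rw [h1]
          rw [hb, hdd]
          exact m_B_value μ e0 hn' a c (fun h => h2 (by rw [h]))
      · by_cases h2 : a.2 = c.2
        · rw [if_neg h1, if_pos h2, zero_add]
          have hb : ((c.1 : Fin d), a.2) = c := by rw [h2]
          have hdd : ((a.1 : Fin d), c.2) = a := by rw [← h2]
          rw [hb, hdd, m_swap_mid μ e0 a c]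
          exact m_B_value μ e0 hn' a c (fun h => h1 (by rw [h]))
        · rw [if_neg h1, if_neg h2, add_zero]
          refine m_vanish μ e0 a a (c.1, a.2) c (a.1, c.2) ?_
          have hba : ((c.1 : Fin d), a.2) ≠ a := fun h => h1 ((congrArg Prod.fst h).symm)
          have hca : c ≠ a := fun h => h1 ((congrArg Prod.fst h).symm)
          have hda : ((a.1 : Fin d), c.2) ≠ a := fun h => h2 ((congrArg Prod.snd h).symm)
          simp only [phf, if_pos rfl, if_neg hba, if_neg hca, if_neg hda, _root_.map_one]
          norm_num [Complex.ext_iff]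
    have hint : Integrable
        (fun U => ∑ a : Fin d × Fin s, ∑ c : Fin d × Fin s,
          mon e0 a (c.1, a.2) c (a.1, c.2) U) μ :=
      integrable_finset_sum _ (fun a _ => integrable_finset_sum _
        (fun c _ => mon_integrable μ e0 _ _ _ _))
    have hre := integral_re (𝕜 := ℂ) hint
    simp only [RCLike.re_to_complex] at hre
    have hci : (∫ U, (∑ a : Fin d × Fin s, ∑ c : Fin d × Fin s,
        mon e0 a (c.1, a.2) c (a.1, c.2) U) ∂μ)
        = ∑ a : Fin d × Fin s, ∑ c : Fin d × Fin s, m μ e0 a (c.1, a.2) c (a.1, c.2) := by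
      rw [integral_finset_sum _ (fun a _ => integrable_finset_sum _
        (fun c _ => mon_integrable μ e0 _ _ _ _))]
      refine Finset.sum_congr rfl fun a _ => ?_
      rw [integral_finset_sum _ (fun c _ => mon_integrable μ e0 _ _ _ _)]
      rfl
    have e1 : ∀ a : Fin d × Fin s,
        (∑ c : Fin d × Fin s, if a.1 = c.1 then B else 0) = (s : ℂ) * B := by
      intro a
      rw [Fintype.sum_prod_type]
      have hx : ∀ x : Fin d, (∑ _x1 : Fin s, if a.1 = x then B else 0)
          = if a.1 = x then (s:ℂ)*B else 0 := fun x => by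
        by_cases h : a.1 = x <;> simp [h, Finset.sum_const, Finset.card_univ, nsmul_eq_mul]
      rw [Finset.sum_congr rfl (fun x _ => hx x), Finset.sum_ite_eq]
      simp
    have e2 : ∀ a : Fin d × Fin s,
        (∑ c : Fin d × Fin s, if a.2 = c.2 then B else 0) = (d : ℂ) * B := by
      intro a
      simp [Fintype.sum_prod_type, Finset.sum_ite_eq, Finset.sum_const, Finset.card_univ,
        nsmul_eq_mul]
    have hval : ∑ a : Fin d × Fin s, ∑ c : Fin d × Fin s, m μ e0 a (c.1, a.2) c (a.1, c.2)
        = ((d : ℂ) * s) * ((s : ℂ) * B + (d : ℂ) * B) := by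
      calc ∑ a : Fin d × Fin s, ∑ c : Fin d × Fin s, m μ e0 a (c.1, a.2) c (a.1, c.2)
          = ∑ _a : Fin d × Fin s, ((s : ℂ) * B + (d : ℂ) * B) :=
            Finset.sum_congr rfl (fun a _ => by
              rw [Finset.sum_congr rfl (fun c _ => key a c), Finset.sum_add_distrib, e1 a, e2 a])
        _ = ((d : ℂ) * s) * ((s : ℂ) * B + (d : ℂ) * B) := by
            rw [Finset.sum_const, Finset.card_univ, nsmul_eq_mul]
            simp only [Fintype.card_prod, Fintype.card_fin]
            push_cast
            ring
    have hBval : B = ((d*s : ℂ) * ((d*s : ℂ) + 1))⁻¹ := by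
      rw [hBdef]
      norm_num
    have hfinal : (((d : ℂ) * s) * ((s : ℂ) * B + (d : ℂ) * B))
        = ((((d : ℝ) + s) / ((d : ℝ) * s + 1) : ℝ) : ℂ) := by
      rw [hBval]
      have hd0 : (d : ℂ) ≠ 0 := Nat.cast_ne_zero.mpr (by omega)
      have hs0 : (s : ℂ) ≠ 0 := Nat.cast_ne_zero.mpr (by omega)
      have hds1 : ((d : ℂ) * s + 1) ≠ 0 := by
        have : ((d * s + 1 : ℕ) : ℂ) ≠ 0 := Nat.cast_ne_zero.mpr (Nat.succ_ne_zero _)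
        push_cast at this
        convert this using 2
      have hds1' : ((d : ℝ) * s + 1) ≠ 0 := by positivity
      push_cast
      field_simp
      ring
    calc ∫ U, (Matrix.trace (ψ U * ψ U)).re ∂μ
        = ∫ U, (∑ a : Fin d × Fin s, ∑ c : Fin d × Fin s,
            mon e0 a (c.1, a.2) c (a.1, c.2) U).re ∂μ := by
          refine integral_congr_ae (Filter.Eventually.of_forall fun U => ?_)
          show (Matrix.trace (ψ U * ψ U)).re = _
          rw [htr U]
      _ = (∫ U, (∑ a : Fin d × Fin s, ∑ c : Fin d × Fin s,
            mon e0 a (c.1, a.2) c (a.1, c.2) U) ∂μ).re := hre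
      _ = ((d : ℝ) + s) / ((d : ℝ) * s + 1) := by
          rw [hci, hval, hfinal, Complex.ofReal_re]
  · -- degenerate case d = s = 1
    have hds1 : d * s = 1 := le_antisymm (not_lt.mp hds) (Nat.one_le_iff_ne_zero.mpr
      (by positivity))
    have hd1 : d = 1 := by nlinarith
    have hs1 : s = 1 := by nlinarith
    subst hd1
    subst hs1
    have hpt : ∀ U : Matrix.unitaryGroup (Fin 1 × Fin 1) ℂ,
        (Matrix.trace (ψ U * ψ U)).re = 1 := by
      intro U
      have h00 : ((0 : Fin 1), (0 : Fin 1)) = e0 := Subsingleton.elim _ _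
      have h1 : uv e0 U e0 * (starRingEnd ℂ) (uv e0 U e0) = 1 := by
        have h := uv_norm e0 U
        rw [Fintype.sum_prod_type] at h
        simpa [Fin.sum_univ_one, h00] using h
      have h1' : ∀ p : Fin 1 × Fin 1, uv e0 U p * (starRingEnd ℂ) (uv e0 U p) = 1 := fun p => by
        rw [Subsingleton.elim p e0]; exact h1
      have hψ00 : ψ U 0 0 = 1 := by
        rw [hψ U 0 0, Fin.sum_univ_one, hv]
        exact h1' _
      have htr1 : Matrix.trace (ψ U * ψ U) = ψ U 0 0 * ψ U 0 0 := by
        simp [Matrix.trace, Matrix.diag, Matrix.mul_apply, Fin.sum_univ_one]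
      rw [htr1, hψ00, one_mul, Complex.one_re]
    rw [integral_congr_ae (Filter.Eventually.of_forall hpt)]
    simp
end

section
/- Let d, T ≥ 1 be natural numbers and ε > 0 a real number such that T < √d/(100 ε) and 1/ε < √d. Let x = (x₁, …, x_T) be drawn from the uniform distribution on (Fin T → Fin d). Define X(x) = #{(i, j) : i < j and x_i = x_j} and Y(x) = #{(i, j, k) : i < j < k and x_i = x_j = x_k}. Then with probability at least 97/100, (ε − ε²/2)·X(x) − (ε/d)·(T choose 2) − ε²·Y(x) ≥ −13/100. -/
open Finset
open scoped Classical

lemma determined_card_le {T d : ℕ} (P : (Fin T → Fin d) → Prop) [DecidablePred P]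
    (S : Finset (Fin T))
    (h : ∀ x y, P x → P y → (∀ i, i ∉ S → x i = y i) → x = y) :
    (univ.filter P).card ≤ d ^ (T - S.card) := by
  classical
  have key : (univ.filter P).card ≤ (univ : Finset ((↥(Sᶜ : Finset (Fin T))) → Fin d)).card := by
    apply Finset.card_le_card_of_injOn (fun x (i : ↥(Sᶜ : Finset (Fin T))) => x i)
      (fun x _ => Finset.mem_univ _)
    intro x hx y hy hxy
    simp only [coe_filter, Set.mem_setOf_eq, mem_univ, true_and] at hx hy
    exact h x y hx hy (fun i hi => congrFun hxy ⟨i, by simpa using hi⟩)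
  simpa [Finset.card_compl] using key

lemma pair_count {T d : ℕ} (i j : Fin T) (hij : i ≠ j) :
    (univ.filter fun x : Fin T → Fin d => x i = x j).card = d ^ (T - 1) := by
  classical
  apply le_antisymm
  · have := determined_card_le (fun x : Fin T → Fin d => x i = x j) {j}
      (by
        intro x y hx hy hag
        funext k
        by_cases hk : k = j
        · subst hk
          rw [← hx, ← hy]
          exact hag i (by simpa using hij)
        · exact hag k (by simpa using hk))
    simpa using this
  · have key : (univ : Finset ((↥(({j}ᶜ : Finset (Fin T)))) → Fin d)).card ≤
        (univ.filter fun x : Fin T → Fin d => x i = x j).card := by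
      apply Finset.card_le_card_of_injOn
        (fun g (k : Fin T) => if hk : k = j then g ⟨i, by simp [hij]⟩ else g ⟨k, by simp [hk]⟩)
      · intro g _
        simp only [mem_filter, mem_univ, true_and]
        simp [hij]
      · intro g _ g' _ hgg
        funext k
        obtain ⟨k, hk⟩ := k
        have hkj : k ≠ j := by simpa using hk
        have := congrFun hgg k
        simpa [dif_neg hkj] using this
    simpa [Finset.card_compl] using key

lemma two_pair_count_le {T d : ℕ} (p q : Fin T × Fin T) (hp : p.1 < p.2) (hq : q.1 < q.2)
    (hpq : p ≠ q) :
    (univ.filter fun x : Fin T → Fin d => x p.1 = x p.2 ∧ x q.1 = x q.2).card ≤ d ^ (T - 2) := by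
  classical
  by_cases h2 : p.2 = q.2
  · have h1 : p.1 ≠ q.1 := by
      intro h1; exact hpq (Prod.ext h1 h2)
    have := determined_card_le (fun x : Fin T → Fin d => x p.1 = x p.2 ∧ x q.1 = x q.2)
      {p.1, q.1}
      (by
        intro x y hx hy hag
        have hp2 : p.2 ∉ ({p.1, q.1} : Finset (Fin T)) := by
          simp only [mem_insert, mem_singleton]
          push_neg
          exact ⟨hp.ne', by rw [← h2] at hq; exact hq.ne'⟩
        have key : x p.2 = y p.2 := hag _ hp2
        funext k
        by_cases hk1 : k = p.1
        · subst hk1; rw [hx.1, hy.1, key]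
        · by_cases hk2 : k = q.1
          · subst hk2; rw [hx.2, hy.2, h2] at *; rw [← h2, key, h2]
          · exact hag k (by simp [hk1, hk2]))
    simpa [Finset.card_insert_of_notMem, h1] using this
  · have := determined_card_le (fun x : Fin T → Fin d => x p.1 = x p.2 ∧ x q.1 = x q.2)
      {p.2, q.2}
      (by
        intro x y hx hy hag
        have claim : x p.2 = y p.2 ∧ x q.2 = y q.2 := by
          by_cases hq1 : q.1 = p.2
          · have hp1 : p.1 ≠ q.2 := by
              intro h
              have : p.1 < p.1 := by
                calc p.1 < p.2 := hp
                _ = q.1 := hq1.symm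
                _ < q.2 := hq
                _ = p.1 := h.symm
              exact absurd this (lt_irrefl _)
            have hp1m : p.1 ∉ ({p.2, q.2} : Finset (Fin T)) := by
              simp [hp.ne, hp1]
            have e1 : x p.2 = y p.2 := by rw [← hx.1, ← hy.1]; exact hag _ hp1m
            refine ⟨e1, ?_⟩
            rw [← hx.2, ← hy.2, hq1, e1]
          · have hq1m : q.1 ∉ ({p.2, q.2} : Finset (Fin T)) := by
              simp [hq1, hq.ne]
            have e2 : x q.2 = y q.2 := by rw [← hx.2, ← hy.2]; exact hag _ hq1m
            refine ⟨?_, e2⟩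
            by_cases hp1 : p.1 = q.2
            · rw [← hx.1, ← hy.1, hp1, e2]
            · have hp1m : p.1 ∉ ({p.2, q.2} : Finset (Fin T)) := by simp [hp.ne, hp1]
              rw [← hx.1, ← hy.1]; exact hag _ hp1m
        funext k
        by_cases hk1 : k = p.2
        · subst hk1; exact claim.1
        · by_cases hk2 : k = q.2
          · subst hk2; exact claim.2
          · exact hag k (by simp [hk1, hk2]))
    simpa [Finset.card_insert_of_notMem, h2] using this

lemma triple_count_le {T d : ℕ} (i j k : Fin T) (hij : i < j) (hjk : j < k) :
    (univ.filter fun x : Fin T → Fin d => x i = x j ∧ x j = x k).card ≤ d ^ (T - 2) := by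
  classical
  have := determined_card_le (fun x : Fin T → Fin d => x i = x j ∧ x j = x k) {j, k}
    (by
      intro x y hx hy hag
      have him : i ∉ ({j, k} : Finset (Fin T)) := by simp [hij.ne, (hij.trans hjk).ne]
      have e : x i = y i := hag _ him
      funext m
      by_cases hm1 : m = j
      · subst hm1; rw [← hx.1, ← hy.1, e]
      · by_cases hm2 : m = k
        · subst hm2; rw [← hx.1.trans hx.2, ← hy.1.trans hy.2, e]
        · exact hag m (by simp [hm1, hm2]))
  simpa [Finset.card_insert_of_notMem, hjk.ne] using this

lemma card_lt_pairs (T : ℕ) :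
    ((univ : Finset (Fin T × Fin T)).filter fun p => p.1 < p.2).card = T.choose 2 := by
  classical
  have hswap : ((univ : Finset (Fin T × Fin T)).filter fun p => p.1 < p.2).card
      = ((univ : Finset (Fin T × Fin T)).filter fun p => p.2 < p.1).card := by
    apply Finset.card_bij (fun p _ => p.swap)
    · intro p hp; simp only [mem_filter, mem_univ, true_and] at *; exact hp
    · intro p _ q _ h
      exact Prod.swap_injective h
    · intro p hp
      exact ⟨p.swap, by simp only [mem_filter, mem_univ, true_and] at *; exact hp, by simp⟩
  have hdiag : ((univ : Finset (Fin T × Fin T)).filter fun p => p.1 = p.2).card = T := by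
    rw [show ((univ : Finset (Fin T × Fin T)).filter fun p => p.1 = p.2)
        = (univ : Finset (Fin T)).diag by
      ext p; simp [Finset.mem_diag, Prod.ext_iff]]
    simp [Finset.diag_card]
  have htot : ((univ : Finset (Fin T × Fin T)).filter fun p => p.1 < p.2).card
      + ((univ : Finset (Fin T × Fin T)).filter fun p => p.2 < p.1).card
      + ((univ : Finset (Fin T × Fin T)).filter fun p => p.1 = p.2).card = T * T := by
    have h1 : ((univ : Finset (Fin T × Fin T)).filter fun p => p.1 < p.2).card
        + ((univ : Finset (Fin T × Fin T)).filter fun p => ¬ p.1 < p.2).card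
        = (univ : Finset (Fin T × Fin T)).card :=
      Finset.card_filter_add_card_filter_not _
    have h2 : ((univ : Finset (Fin T × Fin T)).filter fun p => ¬ p.1 < p.2).card
        = ((univ : Finset (Fin T × Fin T)).filter fun p => p.2 < p.1).card
        + ((univ : Finset (Fin T × Fin T)).filter fun p => p.1 = p.2).card := by
      rw [← Finset.card_union_of_disjoint, ← Finset.filter_or]
      · congr 1
        ext p
        simp only [not_lt, mem_filter]
        constructor
        · rintro ⟨_, h⟩
          rcases lt_or_eq_of_le h with h' | h'
          · exact ⟨mem_univ _, Or.inl h'⟩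
          · exact ⟨mem_univ _, Or.inr h'.symm⟩
        · rintro ⟨_, h | h⟩
          · exact ⟨mem_univ _, le_of_lt h⟩
          · exact ⟨mem_univ _, le_of_eq h.symm⟩
      · rw [Finset.disjoint_filter]
        intro p _ h h'
        rw [h'] at h
        exact absurd h (lt_irrefl _)
    simp only [card_univ, Fintype.card_prod, Fintype.card_fin] at h1
    omega
  have hch : 2 * T.choose 2 = T * T - T := by
    rw [Nat.choose_two_right]
    rcases Nat.eq_zero_or_pos T with h | h
    · simp [h]
    · have : T * (T - 1) = (T - 1) * ((T - 1) + 1) := by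
        rw [Nat.sub_add_cancel h]; ring
      have hev : 2 ∣ T * (T - 1) := by
        rw [this]; exact (Nat.even_mul_succ_self (T - 1)).two_dvd
      rw [Nat.mul_div_cancel' hev]
      obtain ⟨n, rfl⟩ : ∃ n, T = n + 1 := ⟨T - 1, by omega⟩
      have e : (n+1)*(n+1) = (n+1)*((n+1)-1) + (n+1) := by simp; ring
      omega
  omega

lemma ite_one_mul_ite_one (a b : Prop) [Decidable a] [Decidable b] :
    (if a then (1:ℕ) else 0) * (if b then 1 else 0) = if a ∧ b then 1 else 0 := by
  by_cases ha : a <;> by_cases hb : b <;> simp [ha, hb]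

set_option maxHeartbeats 1000000 in
/-- Counting argument for the improved purity-estimation lower bound: if `T < √d/(100ε)`
and `1/ε < √d`, then for `x₁, …, x_T` drawn uniformly from a set of size `d`, with
probability at least `97/100` we have
`(ε − ε²/2)·X(x) − (ε/d)·(T choose 2) − ε²·Y(x) ≥ −13/100`, where `X` counts collision
pairs and `Y` counts collision triples. -/
theorem stmt_5 (d T : ℕ) (hd : 1 ≤ d) (hT : 1 ≤ T) (ε : ℝ) (hε : 0 < ε)
    (hTd : (T : ℝ) < Real.sqrt d / (100 * ε)) (hεd : 1 / ε < Real.sqrt d)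
    (X Y : (Fin T → Fin d) → ℕ)
    (hX : ∀ x, X x = (Finset.univ.filter
      (fun p : Fin T × Fin T => p.1 < p.2 ∧ x p.1 = x p.2)).card)
    (hY : ∀ x, Y x = (Finset.univ.filter
      (fun p : Fin T × Fin T × Fin T =>
        p.1 < p.2.1 ∧ p.2.1 < p.2.2 ∧ x p.1 = x p.2.1 ∧ x p.2.1 = x p.2.2)).card) :
    (97 : ℝ) / 100 ≤
      ((Finset.univ.filter (fun x : Fin T → Fin d =>
          (ε - ε ^ 2 / 2) * (X x : ℝ) - (ε / d) * (T.choose 2 : ℝ) - ε ^ 2 * (Y x : ℝ)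
            ≥ -(13 / 100))).card : ℝ) / (Fintype.card (Fin T → Fin d) : ℝ) := by
  classical
  have hd0 : (0:ℝ) < d := by exact_mod_cast hd
  have hcard : (0:ℝ) < (Fintype.card (Fin T → Fin d) : ℝ) := by
    have : 0 < Fintype.card (Fin T → Fin d) := by
      rw [Fintype.card_fun, Fintype.card_fin, Fintype.card_fin]
      exact Nat.pow_pos hd
    exact_mod_cast this
  -- dispose of the case T = 1
  rcases eq_or_lt_of_le hT with hT1 | hT2
  · -- T = 1
    subst hT1
    have hfil : (Finset.univ.filter (fun x : Fin 1 → Fin d =>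
          (ε - ε ^ 2 / 2) * (X x : ℝ) - (ε / d) * ((1:ℕ).choose 2 : ℝ) - ε ^ 2 * (Y x : ℝ)
            ≥ -(13 / 100))) = univ := by
      apply Finset.filter_true_of_mem
      intro x _
      have hX0 : X x = 0 := by
        rw [hX x, Finset.card_eq_zero, Finset.filter_eq_empty_iff]
        intro p _
        have : p.1 = p.2 := Subsingleton.elim _ _
        simp [this]
      have hY0 : Y x = 0 := by
        rw [hY x, Finset.card_eq_zero, Finset.filter_eq_empty_iff]
        intro p _
        have : p.1 = p.2.1 := Subsingleton.elim _ _
        simp [this]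
      have : ((1:ℕ).choose 2 : ℝ) = 0 := by norm_num [Nat.choose]
      rw [hX0, hY0, this]
      norm_num
    rw [hfil, Finset.card_univ, div_self (ne_of_gt hcard)]
    norm_num
  -- main case : 2 ≤ T
  have hT2' : 2 ≤ T := hT2
  set N : ℝ := (d:ℝ)^T with hNdef
  have hN : (0:ℝ) < N := pow_pos hd0 T
  have hNcard : (Fintype.card (Fin T → Fin d) : ℝ) = N := by
    rw [Fintype.card_fun, Fintype.card_fin, Fintype.card_fin, hNdef]
    push_cast
    rfl
  set M : ℝ := (T.choose 2 : ℝ) with hMdef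
  set μ : ℝ := M / d with hμdef
  have hμd : μ * d = M := by rw [hμdef]; field_simp
  -- power identities
  have e1 : (d:ℝ)^(T-1) * d = N := by
    rw [hNdef, ← pow_succ]
    congr 1
    omega
  have e2 : (d:ℝ)^(T-2) * d^2 = N := by
    rw [hNdef, ← pow_add]
    congr 1
    omega
  have e3 : (d:ℝ)^(T-2) * d = (d:ℝ)^(T-1) := by
    rw [← pow_succ]
    congr 1
    omega
  -- the set of "good" pairs
  set P2 : Finset (Fin T × Fin T) := univ.filter (fun p => p.1 < p.2) with hP2def
  have hP2card : (P2.card : ℝ) = M := by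
    rw [hP2def, card_lt_pairs, hMdef]
  have hXalt : ∀ x : (Fin T → Fin d), X x = ∑ p ∈ P2, (if x p.1 = x p.2 then 1 else 0) := by
    intro x
    rw [hX x, ← Finset.card_filter]
    rw [hP2def, Finset.filter_filter]
  -- sum of X
  have nSX : ∑ x : (Fin T → Fin d), X x = T.choose 2 * d^(T-1) := by
    simp only [hXalt]
    rw [Finset.sum_comm]
    calc ∑ p ∈ P2, ∑ x : (Fin T → Fin d), (if x p.1 = x p.2 then 1 else 0)
        = ∑ _p ∈ P2, d^(T-1) := by
          apply Finset.sum_congr rfl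
          intro p hp
          have hplt : p.1 < p.2 := by
            rw [hP2def] at hp; simpa using hp
          rw [← Finset.card_filter, pair_count p.1 p.2 (ne_of_lt hplt)]
      _ = T.choose 2 * d^(T-1) := by
          rw [Finset.sum_const, smul_eq_mul, hP2def, card_lt_pairs]
  -- sum of X^2
  have nSX2 : ∑ x : (Fin T → Fin d), (X x)^2 ≤ T.choose 2 * d^(T-1) + (T.choose 2)^2 * d^(T-2) := by
    have expand : ∀ x : (Fin T → Fin d), (X x)^2
        = ∑ p ∈ P2, ∑ q ∈ P2, (if (x p.1 = x p.2) ∧ (x q.1 = x q.2) then 1 else 0) := by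
      intro x
      rw [hXalt x, sq, Finset.sum_mul_sum]
      apply Finset.sum_congr rfl; intro p _
      apply Finset.sum_congr rfl; intro q _
      exact ite_one_mul_ite_one _ _
    simp only [expand]
    rw [Finset.sum_comm]
    have inner : ∀ p ∈ P2, (∑ q ∈ P2, ∑ x : (Fin T → Fin d),
        (if (x p.1 = x p.2) ∧ (x q.1 = x q.2) then 1 else 0))
        ≤ d^(T-1) + T.choose 2 * d^(T-2) := by
      intro p hp
      have hplt : p.1 < p.2 := by rw [hP2def] at hp; simpa using hp
      rw [← Finset.add_sum_erase _ _ hp]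
      gcongr
      · have hdg : (∑ x : Fin T → Fin d, if (x p.1 = x p.2) ∧ (x p.1 = x p.2) then 1 else 0)
            = (univ.filter fun x : Fin T → Fin d => x p.1 = x p.2).card := by
          rw [Finset.card_filter]
          apply Finset.sum_congr rfl
          intro x _
          simp
        rw [hdg, pair_count p.1 p.2 (ne_of_lt hplt)]
      · calc ∑ q ∈ P2.erase p, ∑ x : (Fin T → Fin d),
            (if (x p.1 = x p.2) ∧ (x q.1 = x q.2) then 1 else 0)
            ≤ ∑ q ∈ P2.erase p, d^(T-2) := by
              apply Finset.sum_le_sum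
              intro q hq
              have hq' : q ∈ P2 := Finset.mem_of_mem_erase hq
              have hqlt : q.1 < q.2 := by rw [hP2def] at hq'; simpa using hq'
              have hqp : q ≠ p := Finset.ne_of_mem_erase hq
              rw [← Finset.card_filter]
              exact two_pair_count_le p q hplt hqlt (Ne.symm hqp)
          _ ≤ T.choose 2 * d^(T-2) := by
              rw [Finset.sum_const, smul_eq_mul]
              apply Nat.mul_le_mul_right
              calc (P2.erase p).card ≤ P2.card := Finset.card_erase_le
                _ = T.choose 2 := by rw [hP2def, card_lt_pairs]
    calc ∑ p ∈ P2, ∑ x : (Fin T → Fin d), ∑ q ∈ P2, (if (x p.1 = x p.2) ∧ (x q.1 = x q.2) then 1 else 0)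
        = ∑ p ∈ P2, ∑ q ∈ P2, ∑ x : (Fin T → Fin d), (if (x p.1 = x p.2) ∧ (x q.1 = x q.2) then 1 else 0) :=
          Finset.sum_congr rfl (fun p _ => Finset.sum_comm)
      _ ≤ ∑ _p ∈ P2, (d^(T-1) + T.choose 2 * d^(T-2)) := Finset.sum_le_sum inner
      _ = P2.card * (d^(T-1) + T.choose 2 * d^(T-2)) := by rw [Finset.sum_const, smul_eq_mul]
      _ = T.choose 2 * d^(T-1) + (T.choose 2)^2 * d^(T-2) := by
          rw [hP2def, card_lt_pairs]; ring
  -- sum of Y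
  have nSY : ∑ x : (Fin T → Fin d), Y x ≤ T^3 * d^(T-2) := by
    have : ∀ x : (Fin T → Fin d), Y x = ∑ t : Fin T × Fin T × Fin T,
        (if t.1 < t.2.1 ∧ t.2.1 < t.2.2 ∧ x t.1 = x t.2.1 ∧ x t.2.1 = x t.2.2
          then 1 else 0) := by
      intro x
      rw [hY x, Finset.card_filter]
    simp only [this]
    rw [Finset.sum_comm]
    calc ∑ t : Fin T × Fin T × Fin T, ∑ x : (Fin T → Fin d),
          (if t.1 < t.2.1 ∧ t.2.1 < t.2.2 ∧ x t.1 = x t.2.1 ∧ x t.2.1 = x t.2.2 then 1 else 0)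
        ≤ ∑ _t : Fin T × Fin T × Fin T, d^(T-2) := by
          apply Finset.sum_le_sum
          intro t _
          by_cases hord : t.1 < t.2.1 ∧ t.2.1 < t.2.2
          · calc ∑ x : (Fin T → Fin d), (if t.1 < t.2.1 ∧ t.2.1 < t.2.2 ∧ x t.1 = x t.2.1 ∧ x t.2.1 = x t.2.2
                then 1 else 0)
                = (univ.filter fun x : (Fin T → Fin d) => x t.1 = x t.2.1 ∧ x t.2.1 = x t.2.2).card := by
                  rw [Finset.card_filter]
                  apply Finset.sum_congr rfl
                  intro x _
                  congr 1
                  simp [hord.1, hord.2, and_assoc]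
              _ ≤ d^(T-2) := triple_count_le t.1 t.2.1 t.2.2 hord.1 hord.2
          · have : ∀ x : (Fin T → Fin d), (if t.1 < t.2.1 ∧ t.2.1 < t.2.2 ∧ x t.1 = x t.2.1 ∧ x t.2.1 = x t.2.2
                then (1:ℕ) else 0) = 0 := by
              intro x
              rw [if_neg]
              tauto
            simp only [this]
            simp
      _ = T^3 * d^(T-2) := by
          rw [Finset.sum_const, smul_eq_mul, card_univ]
          simp only [Fintype.card_prod, Fintype.card_fin]
          ring_nf
  -- real versions
  have rSX : ∑ x : (Fin T → Fin d), (X x : ℝ) = M * (d:ℝ)^(T-1) := by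
    rw [hMdef]
    exact_mod_cast nSX
  have rSX2 : ∑ x : (Fin T → Fin d), (X x : ℝ)^2 ≤ M * (d:ℝ)^(T-1) + M^2 * (d:ℝ)^(T-2) := by
    rw [hMdef]
    exact_mod_cast nSX2
  have rSY : ∑ x : (Fin T → Fin d), (Y x : ℝ) ≤ (T:ℝ)^3 * (d:ℝ)^(T-2) := by
    exact_mod_cast nSY
  -- bad sets
  set B1 : Finset (Fin T → Fin d) := univ.filter (fun x => (X x : ℝ) * (100*ε) < μ * (100*ε) - 6) with hB1def
  set B2 : Finset (Fin T → Fin d) := univ.filter (fun x => 7/100 < ε^2 * ((X x : ℝ)/2 + (Y x : ℝ))) with hB2def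
  set G : Finset (Fin T → Fin d) := univ.filter (fun x : (Fin T → Fin d) =>
    (ε - ε ^ 2 / 2) * (X x : ℝ) - (ε / d) * (T.choose 2 : ℝ) - ε ^ 2 * (Y x : ℝ)
      ≥ -(13 / 100)) with hGdef
  -- covering
  have cover : (univ : Finset (Fin T → Fin d)) ⊆ G ∪ B1 ∪ B2 := by
    intro x _
    simp only [Finset.mem_union, hGdef, hB1def, hB2def, Finset.mem_filter, mem_univ, true_and]
    by_cases h1 : (X x : ℝ) * (100*ε) < μ * (100*ε) - 6
    · tauto
    · by_cases h2 : 7/100 < ε^2 * ((X x : ℝ)/2 + (Y x : ℝ))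
      · tauto
      · left; left
        push_neg at h1 h2
        have key : (ε - ε ^ 2 / 2) * (X x : ℝ) - (ε / d) * (T.choose 2 : ℝ) - ε ^ 2 * (Y x : ℝ)
            = ε * ((X x : ℝ) - μ) - ε^2 * ((X x : ℝ)/2 + (Y x : ℝ)) := by
          rw [hμdef, hMdef]
          field_simp
          ring
        rw [ge_iff_le, key]
        have h1' : ε * ((X x : ℝ) - μ) ≥ -(6/100) := by
          have : μ * (100*ε) - (X x : ℝ) * (100*ε) ≤ 6 := by linarith
          nlinarith
        linarith
  have hcardcover : (Fintype.card (Fin T → Fin d) : ℝ) ≤ (G.card : ℝ) + (B1.card : ℝ) + (B2.card : ℝ) := by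
    have h1 : Fintype.card (Fin T → Fin d) ≤ (G ∪ B1 ∪ B2).card := by
      rw [← Finset.card_univ]
      exact Finset.card_le_card cover
    have h2 : (G ∪ B1 ∪ B2).card ≤ G.card + B1.card + B2.card :=
      le_trans (Finset.card_union_le _ _) (by
        have := Finset.card_union_le G B1
        omega)
    exact_mod_cast le_trans h1 h2
  -- variance bound
  have hvarexp : ∑ x : (Fin T → Fin d), ((X x : ℝ) - μ)^2
      = (∑ x : (Fin T → Fin d), (X x : ℝ)^2) - 2*μ*(∑ x : (Fin T → Fin d), (X x : ℝ)) + (Fintype.card (Fin T → Fin d) : ℝ) * μ^2 := by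
    calc ∑ x : (Fin T → Fin d), ((X x : ℝ) - μ)^2
        = ∑ x : (Fin T → Fin d), ((X x : ℝ)^2 - 2*μ*(X x : ℝ) + μ^2) := by
          apply Finset.sum_congr rfl; intros; ring
      _ = (∑ x : (Fin T → Fin d), (X x : ℝ)^2) - 2*μ*(∑ x : (Fin T → Fin d), (X x : ℝ))
          + (Fintype.card (Fin T → Fin d) : ℝ) * μ^2 := by
          rw [Finset.sum_add_distrib, Finset.sum_sub_distrib, ← Finset.mul_sum,
            Finset.sum_const, card_univ, nsmul_eq_mul]
  have hA : N * μ^2 = M^2 * (d:ℝ)^(T-2) := by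
    calc N * μ^2 = ((d:ℝ)^(T-2) * d^2) * μ^2 := by rw [e2]
      _ = (d:ℝ)^(T-2) * (μ*d)^2 := by ring
      _ = M^2 * (d:ℝ)^(T-2) := by rw [hμd]; ring
  have hB : μ * (M * (d:ℝ)^(T-1)) = M^2 * (d:ℝ)^(T-2) := by
    calc μ * (M * (d:ℝ)^(T-1)) = μ * (M * ((d:ℝ)^(T-2) * d)) := by rw [e3]
      _ = M * (d:ℝ)^(T-2) * (μ * d) := by ring
      _ = M^2 * (d:ℝ)^(T-2) := by rw [hμd]; ring
  have hvar : ∑ x : (Fin T → Fin d), ((X x : ℝ) - μ)^2 ≤ M * (d:ℝ)^(T-1) := by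
    rw [hvarexp, rSX, hNcard]
    linarith [rSX2, hA, hB]
  -- Chebyshev for B1
  have hCheb : (B1.card : ℝ) * 36 ≤ (100*ε)^2 * (M * (d:ℝ)^(T-1)) := by
    have hperel : ∀ x ∈ B1, (36 : ℝ) ≤ ((X x : ℝ) - μ)^2 * (100*ε)^2 := by
      intro x hx
      rw [hB1def, Finset.mem_filter] at hx
      have := hx.2
      nlinarith
    calc (B1.card : ℝ) * 36 ≤ ∑ x ∈ B1, ((X x : ℝ) - μ)^2 * (100*ε)^2 := by
          have hss : ∑ _x ∈ B1, (36:ℝ) ≤ ∑ x ∈ B1, ((X x : ℝ) - μ)^2 * (100*ε)^2 :=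
            Finset.sum_le_sum hperel
          simpa [Finset.sum_const, nsmul_eq_mul, mul_comm] using hss
      _ = (100*ε)^2 * ∑ x ∈ B1, ((X x : ℝ) - μ)^2 := by rw [Finset.mul_sum]; apply Finset.sum_congr rfl; intros; ring
      _ ≤ (100*ε)^2 * ∑ x : (Fin T → Fin d), ((X x : ℝ) - μ)^2 := by
          apply mul_le_mul_of_nonneg_left _ (by positivity)
          apply Finset.sum_le_sum_of_subset_of_nonneg (Finset.subset_univ _)
          intros
          positivity
      _ ≤ (100*ε)^2 * (M * (d:ℝ)^(T-1)) := by
          apply mul_le_mul_of_nonneg_left hvar (by positivity)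
  -- Markov for B2
  have hMark : (B2.card : ℝ) * (7/100) ≤ ε^2 * (M * (d:ℝ)^(T-1)/2 + (T:ℝ)^3 * (d:ℝ)^(T-2)) := by
    have hperel : ∀ x ∈ B2, (7/100 : ℝ) ≤ ε^2 * ((X x : ℝ)/2 + (Y x : ℝ)) := by
      intro x hx
      rw [hB2def, Finset.mem_filter] at hx
      exact le_of_lt hx.2
    calc (B2.card : ℝ) * (7/100) ≤ ∑ x ∈ B2, ε^2 * ((X x : ℝ)/2 + (Y x : ℝ)) := by
          have hss : ∑ _x ∈ B2, (7/100:ℝ) ≤ ∑ x ∈ B2, ε^2 * ((X x : ℝ)/2 + (Y x : ℝ)) :=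
            Finset.sum_le_sum hperel
          simpa [Finset.sum_const, nsmul_eq_mul, mul_comm] using hss
      _ ≤ ∑ x : (Fin T → Fin d), ε^2 * ((X x : ℝ)/2 + (Y x : ℝ)) := by
          apply Finset.sum_le_sum_of_subset_of_nonneg (Finset.subset_univ _)
          intros
          positivity
      _ = ε^2 * ((∑ x : (Fin T → Fin d), (X x : ℝ))/2 + (∑ x : (Fin T → Fin d), (Y x : ℝ))) := by
          rw [← Finset.mul_sum, Finset.sum_add_distrib, ← Finset.sum_div]
      _ ≤ ε^2 * (M * (d:ℝ)^(T-1)/2 + (T:ℝ)^3 * (d:ℝ)^(T-2)) := by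
          apply mul_le_mul_of_nonneg_left _ (by positivity)
          rw [rSX]
          linarith [rSY]
  -- numeric bounds from hypotheses
  have hsq : Real.sqrt d * Real.sqrt d = d := Real.mul_self_sqrt (by positivity)
  have hTs : (T:ℝ) * (100*ε) < Real.sqrt d := by
    rw [div_eq_mul_inv] at hTd
    have h100 : (0:ℝ) < 100*ε := by positivity
    calc (T:ℝ) * (100*ε) < (Real.sqrt d * (100*ε)⁻¹) * (100*ε) := by
          apply mul_lt_mul_of_pos_right hTd h100
      _ = Real.sqrt d := by field_simp
  have hεs : 1 < ε * Real.sqrt d := by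
    have := hεd
    rw [div_lt_iff₀ hε] at this
    linarith [mul_comm ε (Real.sqrt d)]
  have h4 : (T:ℝ)^2 * (100*ε)^2 < d := by
    have hpos : (0:ℝ) ≤ (T:ℝ) * (100*ε) := by positivity
    nlinarith [hTs, hsq]
  have h5 : 1000000 * ε^2 * (T:ℝ)^3 < d^2 := by
    have hs0 : (0:ℝ) < Real.sqrt d := Real.sqrt_pos.2 hd0
    have ha : (0:ℝ) < (T:ℝ) * (100*ε) := by
      have : (0:ℝ) < (T:ℝ) := by exact_mod_cast hT
      positivity
    have hcube : ((T:ℝ) * (100*ε))^3 < (Real.sqrt d)^3 := by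
      exact pow_lt_pow_left₀ hTs (le_of_lt ha) (by norm_num)
    set sd : ℝ := Real.sqrt d with hsddef
    have k2 : 1000000*ε^3*(T:ℝ)^3 * sd < sd^3 * sd := by
      have : ((T:ℝ) * (100*ε))^3 = 1000000*ε^3*(T:ℝ)^3 := by ring
      rw [← this]
      exact mul_lt_mul_of_pos_right hcube hs0
    have k1 : 1000000 * ε^2 * (T:ℝ)^3 < 1000000 * ε^2 * (T:ℝ)^3 * (ε * sd) := by
      have hTpos : (0:ℝ) < (T:ℝ) := by exact_mod_cast hT
      have hApos : (0:ℝ) < 1000000 * ε^2 * (T:ℝ)^3 := by positivity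
      exact (lt_mul_iff_one_lt_right hApos).2 hεs
    have keq : 1000000 * ε^2 * (T:ℝ)^3 * (ε * sd) = 1000000*ε^3*(T:ℝ)^3 * sd := by ring
    have keq2 : sd^3 * sd = (sd * sd)^2 := by ring
    have keq3 : (sd * sd)^2 = (d:ℝ)^2 := by rw [hsq]
    linarith [k1, k2]
  -- bound cards
  have hMT : M ≤ (T:ℝ)^2 := by
    rw [hMdef]
    have : T.choose 2 ≤ T * T := by
      rw [← card_lt_pairs T]
      calc ((univ : Finset (Fin T × Fin T)).filter fun p => p.1 < p.2).card
          ≤ (univ : Finset (Fin T × Fin T)).card := Finset.card_le_card (Finset.filter_subset _ _)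
        _ = T * T := by simp
    have := (Nat.cast_le (α := ℝ)).2 this
    push_cast at this
    calc ((T.choose 2 : ℕ) : ℝ) ≤ (T:ℝ) * (T:ℝ) := this
      _ = (T:ℝ)^2 := by ring
  have hM0 : (0:ℝ) ≤ M := by rw [hMdef]; positivity
  have b1 : (B1.card : ℝ) * 36 ≤ N := by
    have step : (B1.card : ℝ) * 36 * d ≤ (100*ε)^2 * M * N := by
      calc (B1.card : ℝ) * 36 * d ≤ (100*ε)^2 * (M * (d:ℝ)^(T-1)) * d := by
            apply mul_le_mul_of_nonneg_right hCheb (le_of_lt hd0)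
        _ = (100*ε)^2 * M * ((d:ℝ)^(T-1) * d) := by ring
        _ = (100*ε)^2 * M * N := by rw [e1]
      done
    have step2 : (100*ε)^2 * M * N ≤ (T:ℝ)^2 * (100*ε)^2 * N := by
      apply mul_le_mul_of_nonneg_right _ (le_of_lt hN)
      calc (100*ε)^2 * M ≤ (100*ε)^2 * (T:ℝ)^2 :=
            mul_le_mul_of_nonneg_left hMT (by positivity)
        _ = (T:ℝ)^2 * (100*ε)^2 := by ring
    have step3 : (T:ℝ)^2 * (100*ε)^2 * N ≤ d * N := by
      apply mul_le_mul_of_nonneg_right (le_of_lt h4) (le_of_lt hN)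
    have hfin : (B1.card : ℝ) * 36 * d ≤ N * d := by linarith
    exact le_of_mul_le_mul_right hfin hd0
  have b2 : (B2.card : ℝ) ≤ 3 * N / 4000 := by
    have step : (B2.card : ℝ) * (7/100) * d^2 ≤ ε^2 * (M * N * d / 2 + (T:ℝ)^3 * N) := by
      calc (B2.card : ℝ) * (7/100) * d^2
          ≤ ε^2 * (M * (d:ℝ)^(T-1)/2 + (T:ℝ)^3 * (d:ℝ)^(T-2)) * d^2 := by
            apply mul_le_mul_of_nonneg_right hMark (by positivity)
        _ = ε^2 * (M * ((d:ℝ)^(T-1) * d) * d / 2 + (T:ℝ)^3 * ((d:ℝ)^(T-2) * d^2)) := by ring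
        _ = ε^2 * (M * N * d / 2 + (T:ℝ)^3 * N) := by rw [e1, e2]
    have s1 : ε^2 * (M * N * d) ≤ ε^2 * ((T:ℝ)^2 * N * d) := by
      apply mul_le_mul_of_nonneg_left _ (sq_nonneg ε)
      calc M * N * d = M * (N * d) := by ring
        _ ≤ (T:ℝ)^2 * (N * d) := mul_le_mul_of_nonneg_right hMT (by positivity)
        _ = (T:ℝ)^2 * N * d := by ring
    have s2 : ε^2 * ((T:ℝ)^2 * N * d) < (d/10000) * N * d := by
      have h4' : ε^2 * (T:ℝ)^2 < d/10000 := by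
        have : (T:ℝ)^2 * (100*ε)^2 = 10000 * (ε^2 * (T:ℝ)^2) := by ring
        rw [this] at h4
        linarith
      calc ε^2 * ((T:ℝ)^2 * N * d) = (ε^2 * (T:ℝ)^2) * (N * d) := by ring
        _ < (d/10000) * (N * d) := mul_lt_mul_of_pos_right h4' (by positivity)
        _ = (d/10000) * N * d := by ring
    have s3 : ε^2 * ((T:ℝ)^3 * N) < (d^2/1000000) * N := by
      have h5' : ε^2 * (T:ℝ)^3 < d^2/1000000 := by linarith
      calc ε^2 * ((T:ℝ)^3 * N) = (ε^2 * (T:ℝ)^3) * N := by ring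
        _ < (d^2/1000000) * N := mul_lt_mul_of_pos_right h5' hN
    have final : (B2.card : ℝ) * (7/100) * d^2 ≤ (51/1000000) * N * d^2 := by
      have expand : ε^2 * (M * N * d / 2 + (T:ℝ)^3 * N)
          = ε^2 * (M * N * d) / 2 + ε^2 * ((T:ℝ)^3 * N) := by ring
      rw [expand] at step
      linarith
    have hd2 : (0:ℝ) < (d:ℝ)^2 := by positivity
    have final2 : (B2.card : ℝ) * (7/100) ≤ (51/1000000) * N :=
      le_of_mul_le_mul_right (by linarith) hd2
    linarith
  -- conclude
  rw [le_div_iff₀ hcard]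
  rw [hNcard] at hcardcover ⊢
  show 97/100 * N ≤ (G.card : ℝ)
  linarith [hcardcover, b1, b2]
end

section
/- Let d, T ≥ 1 be natural numbers, x : Fin T → Fin d a function, and ε a real number. For y : Fin d let b_y = #{i : x i = y}. Then Σ over permutations π of Fin T satisfying x(π i) = x i for all i of ε^(T − c(π)) equals ∏_{y : Fin d} ∏_{i=1}^{b_y − 1} (1 + i·ε), where empty products equal 1. -/
open Finset Equiv Equiv.Perm

section helpers
variable {α : Type*} [DecidableEq α] [Fintype α]

private lemma multiset_card_le_sum (s : Multiset ℕ) (h : ∀ x ∈ s, 1 ≤ x) :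
    Multiset.card s ≤ s.sum := by
  induction s using Multiset.induction with
  | empty => simp
  | cons a s ih =>
    have h1 := h a (Multiset.mem_cons_self a s)
    have h2 := ih (fun x hx => h x (Multiset.mem_cons_of_mem hx))
    simp only [Multiset.card_cons, Multiset.sum_cons]
    omega

private lemma cT_card_le_sum (σ : Perm α) : Multiset.card σ.cycleType ≤ σ.cycleType.sum :=
  multiset_card_le_sum _ fun x hx => le_trans (by norm_num) (two_le_of_mem_cycleType hx)

private lemma swap_mul_support_char {c : Perm α} {a b : α}
    (hac : a ∉ c.support) (hbc : b ∈ c.support) (hab : a ≠ b) (x : α) :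
    (swap a b * c) x ≠ x ↔ (x = a ∨ x ∈ c.support) := by
  have hca : c a = a := notMem_support.mp hac
  constructor
  · intro hx
    by_contra hcon
    push_neg at hcon
    obtain ⟨hxa, hxc⟩ := hcon
    have hcx : c x = x := notMem_support.mp hxc
    have hxb : x ≠ b := fun h => hxc (h ▸ hbc)
    apply hx
    rw [Perm.mul_apply, hcx, swap_apply_of_ne_of_ne hxa hxb]
  · intro hx
    rcases hx with rfl | hx
    · rw [Perm.mul_apply, hca, swap_apply_left]
      exact hab.symm
    · have hxa : x ≠ a := fun h => hac (h ▸ hx)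
      have hcxa : c x ≠ a := fun h => hxa (c.injective (by rw [h, hca]))
      rw [Perm.mul_apply]
      by_cases hcxb : c x = b
      · rw [hcxb, swap_apply_right]
        exact (Ne.symm hxa)
      · rw [swap_apply_of_ne_of_ne hcxa hcxb]
        exact mem_support.mp hx

private lemma sameCycle_pow_b {c : Perm α} {a b : α}
    (hac : a ∉ c.support) (hbc : b ∈ c.support) (hab : a ≠ b) :
    ∀ i : ℕ, SameCycle (swap a b * c) a ((c ^ i) b) := by
  have hca : c a = a := notMem_support.mp hac
  have hstep : SameCycle (swap a b * c) a b := by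
    refine ⟨1, ?_⟩
    simp [Perm.mul_apply, hca]
  intro i
  induction i with
  | zero => simpa using hstep
  | succ i ih =>
    set z := (c ^ i) b with hz
    have hzc : z ∈ c.support := (pow_apply_mem_support).mpr hbc
    have h1 : (c ^ (i + 1)) b = c z := by rw [hz, pow_succ', Perm.mul_apply]
    by_cases hcz : c z = b
    · rw [h1, hcz]; exact hstep
    · have hcza : c z ≠ a := fun h => hac (h ▸ (apply_mem_support.mpr hzc))
      have : (swap a b * c) z = c z := by
        rw [Perm.mul_apply, swap_apply_of_ne_of_ne hcza hcz]
      rw [h1]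
      exact ih.trans ⟨1, by simpa using this⟩

private lemma isCycle_swap_mul_of_fixed {c : Perm α} (hc : c.IsCycle) {a b : α}
    (hac : a ∉ c.support) (hbc : b ∈ c.support) (hab : a ≠ b) :
    IsCycle (swap a b * c) ∧ (swap a b * c).support = insert a c.support := by
  have hca : c a = a := notMem_support.mp hac
  constructor
  · refine ⟨a, ?_, ?_⟩
    · exact (swap_mul_support_char hac hbc hab a).mpr (Or.inl rfl)
    · intro y hy
      rcases (swap_mul_support_char hac hbc hab y).mp hy with rfl | hyc
      · exact SameCycle.refl _ _
      · obtain ⟨i, hi⟩ := hc.exists_pow_eq (mem_support.mp hbc) (mem_support.mp hyc)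
        exact hi ▸ sameCycle_pow_b hac hbc hab i
  · ext x
    rw [mem_support, swap_mul_support_char hac hbc hab, Finset.mem_insert]

private lemma e_swap_mul {σ : Perm α} {a b : α} (ha : σ a = a) (hab : a ≠ b) :
    (swap a b * σ).cycleType.sum - Multiset.card (swap a b * σ).cycleType
      = (σ.cycleType.sum - Multiset.card σ.cycleType) + 1 := by
  by_cases hb : σ b = b
  · have hd : Perm.Disjoint (swap a b) σ := by
      intro x
      by_cases hxa : x = a
      · exact Or.inr (hxa ▸ ha)
      · by_cases hxb : x = b
        · exact Or.inr (hxb ▸ hb)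
        · exact Or.inl (swap_apply_of_ne_of_ne hxa hxb)
    rw [hd.cycleType_mul]
    have h2 : (swap a b).cycleType = {2} := by
      rw [(isCycle_swap hab).cycleType, card_support_swap hab]
    rw [h2]
    have := cT_card_le_sum σ
    simp only [Multiset.sum_add, Multiset.card_add, Multiset.sum_singleton,
      Multiset.card_singleton]
    omega
  · set c := σ.cycleOf b with hcdef
    have hc : c.IsCycle := isCycle_cycleOf σ hb
    have hbc : b ∈ c.support := by
      rw [mem_support, hcdef, cycleOf_apply_self]; exact hb
    have hac : a ∉ c.support := by
      intro h
      have := (support_cycleOf_le σ b) h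
      rw [mem_support] at this
      exact this ha
    have hmem : c ∈ σ.cycleFactorsFinset :=
      cycleOf_mem_cycleFactorsFinset_iff.mpr (mem_support.mpr hb)
    have hd : Perm.Disjoint (σ * c⁻¹) c := disjoint_mul_inv_of_mem_cycleFactorsFinset hmem
    set τ := σ * c⁻¹ with hτ
    have hστ : σ = c * τ := by
      have h1 : τ * c = σ := by rw [hτ, inv_mul_cancel_right]
      rw [← hd.commute.eq, h1]
    obtain ⟨hg, hgs⟩ := isCycle_swap_mul_of_fixed hc hac hbc hab
    have hτa : τ a = a := by
      have hca : c a = a := notMem_support.mp hac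
      have : c⁻¹ a = a := by rw [← hca, Perm.inv_def, Equiv.symm_apply_apply, hca]
      rw [hτ, Perm.mul_apply, this, ha]
    have hdg : Perm.Disjoint (swap a b * c) τ := by
      intro x
      by_cases hx : (swap a b * c) x = x
      · exact Or.inl hx
      · rcases (swap_mul_support_char hac hbc hab x).mp hx with rfl | hxc
        · exact Or.inr hτa
        · rcases hd.symm x with h | h
          · exact absurd h (mem_support.mp hxc)
          · exact Or.inr h
    have key : swap a b * σ = (swap a b * c) * τ := by rw [hστ, mul_assoc]
    have hdc : Perm.Disjoint c τ := by
      intro x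
      rcases hd x with h | h
      · exact Or.inr h
      · exact Or.inl h
    rw [key, hdg.cycleType_mul, hg.cycleType, hgs,
      Finset.card_insert_of_notMem hac]
    have hσct : σ.cycleType = c.cycleType + τ.cycleType := by
      rw [hστ, hdc.cycleType_mul]
    rw [hσct, hc.cycleType]
    have := cT_card_le_sum τ
    have hcs : 1 ≤ c.support.card := Finset.card_pos.mpr ⟨b, hbc⟩
    simp only [Multiset.sum_add, Multiset.card_add, Multiset.coe_singleton,
      Multiset.sum_singleton, Multiset.card_singleton]
    omega

end helpers

private lemma decomposeFin_zero_eq {n : ℕ} (e0 : Perm (Fin n)) :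
    Equiv.Perm.decomposeFin.symm (0, e0)
      = e0.extendDomain (finSuccAboveEquiv (0 : Fin (n + 1))) := by
  apply Equiv.ext
  intro i
  refine Fin.cases ?_ (fun j => ?_) i
  · rw [Equiv.Perm.decomposeFin_symm_apply_zero]
    rw [Equiv.Perm.extendDomain_apply_not_subtype]
    simp
  · have hmem : (j.succ : Fin (n + 1)) ≠ 0 := Fin.succ_ne_zero j
    have happ : (finSuccAboveEquiv (0 : Fin (n + 1))) j = ⟨j.succ, hmem⟩ := by
      rw [finSuccAboveEquiv_apply]
      simp [Fin.zero_succAbove]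
    have hsymm : (finSuccAboveEquiv (0 : Fin (n + 1))).symm ⟨j.succ, hmem⟩ = j := by
      rw [← happ, Equiv.symm_apply_apply]
    rw [Equiv.Perm.decomposeFin_symm_apply_succ, swap_self, Equiv.refl_apply,
      Equiv.Perm.extendDomain_apply_subtype e0 (finSuccAboveEquiv (0 : Fin (n + 1))) hmem,
      hsymm, finSuccAboveEquiv_apply]
    simp [Fin.zero_succAbove]

private lemma decomposeFin_symm_eq_swap {n : ℕ} (p : Fin (n + 1)) (e0 : Perm (Fin n)) :
    Equiv.Perm.decomposeFin.symm (p, e0)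
      = Equiv.swap 0 p * Equiv.Perm.decomposeFin.symm (0, e0) := by
  apply Equiv.ext
  intro i
  refine Fin.cases ?_ (fun j => ?_) i
  · simp [Perm.mul_apply]
  · simp [Perm.mul_apply, swap_self]

private lemma e_decomposeFin {n : ℕ} (p : Fin (n + 1)) (e0 : Perm (Fin n)) :
    (Equiv.Perm.decomposeFin.symm (p, e0)).cycleType.sum
        - Multiset.card (Equiv.Perm.decomposeFin.symm (p, e0)).cycleType
      = (e0.cycleType.sum - Multiset.card e0.cycleType) + (if p = 0 then 0 else 1) := by
  have hct : (Equiv.Perm.decomposeFin.symm ((0 : Fin (n+1)), e0)).cycleType = e0.cycleType := by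
    rw [decomposeFin_zero_eq, Equiv.Perm.cycleType_extendDomain]
  by_cases hp : p = 0
  · subst hp
    rw [hct]
    simp
  · rw [decomposeFin_symm_eq_swap p e0, if_neg hp]
    have h0 : (Equiv.Perm.decomposeFin.symm ((0 : Fin (n+1)), e0)) 0 = 0 :=
      Equiv.Perm.decomposeFin_symm_apply_zero 0 e0
    rw [e_swap_mul h0 (Ne.symm hp), hct]

private lemma aux_sum {d : ℕ} (ε : ℝ) :
    ∀ (T : ℕ) (x : Fin T → Fin d),
    ∑ π ∈ Finset.univ.filter (fun π : Equiv.Perm (Fin T) => ∀ i, x (π i) = x i),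
        ε ^ (π.cycleType.sum - Multiset.card π.cycleType)
      = ∏ y : Fin d, ∏ i ∈ Finset.range
          ((Finset.univ.filter (fun i : Fin T => x i = y)).card - 1), (1 + (i + 1 : ℕ) * ε) := by
  intro T
  induction T with
  | zero =>
    intro x
    have h1 : (Finset.univ.filter (fun π : Equiv.Perm (Fin 0) => ∀ i, x (π i) = x i))
        = {1} := by
      apply Finset.eq_singleton_iff_unique_mem.mpr
      constructor
      · refine Finset.mem_filter.mpr ⟨Finset.mem_univ _, fun i => i.elim0⟩
      · intro π _
        ext i; exact i.elim0
    rw [h1]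
    simp
  | succ n IH =>
    intro x
    set x' : Fin n → Fin d := fun j => x j.succ with hx'
    -- condition equivalence
    have hcond : ∀ (p : Fin (n + 1)) (e0 : Perm (Fin n)),
        (∀ i, x (Equiv.Perm.decomposeFin.symm (p, e0) i) = x i)
          ↔ (x p = x 0 ∧ ∀ j, x' (e0 j) = x' j) := by
      intro p e0
      constructor
      · intro h
        have hp : x p = x 0 := by
          have := h 0
          rwa [Equiv.Perm.decomposeFin_symm_apply_zero] at this
        refine ⟨hp, fun j => ?_⟩
        have := h j.succ
        rw [Equiv.Perm.decomposeFin_symm_apply_succ] at this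
        have hswap : ∀ s : Fin (n + 1), x (Equiv.swap 0 p s) = x s := by
          intro s
          rcases eq_or_ne s 0 with rfl | hs0
          · rw [Equiv.swap_apply_left]; exact hp
          · rcases eq_or_ne s p with rfl | hsp
            · rw [Equiv.swap_apply_right]; exact hp.symm
            · rw [Equiv.swap_apply_of_ne_of_ne hs0 hsp]
        rw [hswap] at this
        exact this
      · rintro ⟨hp, h⟩ i
        have hswap : ∀ s : Fin (n + 1), x (Equiv.swap 0 p s) = x s := by
          intro s
          rcases eq_or_ne s 0 with rfl | hs0
          · rw [Equiv.swap_apply_left]; exact hp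
          · rcases eq_or_ne s p with rfl | hsp
            · rw [Equiv.swap_apply_right]; exact hp.symm
            · rw [Equiv.swap_apply_of_ne_of_ne hs0 hsp]
        refine Fin.cases ?_ (fun j => ?_) i
        · rw [Equiv.Perm.decomposeFin_symm_apply_zero]; exact hp
        · rw [Equiv.Perm.decomposeFin_symm_apply_succ, hswap]
          exact h j
    rw [Finset.univ_perm_fin_succ, Finset.filter_map, Finset.sum_map]
    have hfilter : Finset.filter
          ((fun π : Equiv.Perm (Fin (n+1)) => ∀ i, x (π i) = x i) ∘
            Equiv.Perm.decomposeFin.symm.toEmbedding)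
          (Finset.univ : Finset (Fin (n+1) × Perm (Fin n)))
        = (Finset.univ.filter fun p : Fin (n+1) => x p = x 0) ×ˢ
          (Finset.univ.filter fun e0 : Perm (Fin n) => ∀ j, x' (e0 j) = x' j) := by
      ext q
      rcases q with ⟨p, e0⟩
      simp only [Finset.mem_filter, Finset.mem_product, Finset.mem_univ, true_and,
        Function.comp_apply, Equiv.coe_toEmbedding]
      rw [hcond p e0]
    rw [hfilter, Finset.sum_product]
    have hterm : ∀ (p : Fin (n+1)) (e0 : Perm (Fin n)),
        ε ^ ((Equiv.Perm.decomposeFin.symm.toEmbedding (p, e0) : Perm (Fin (n+1))).cycleType.sum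
            - Multiset.card (Equiv.Perm.decomposeFin.symm.toEmbedding (p, e0)
                : Perm (Fin (n+1))).cycleType)
          = (if p = 0 then (1:ℝ) else ε)
            * ε ^ (e0.cycleType.sum - Multiset.card e0.cycleType) := by
      intro p e0
      have : (Equiv.Perm.decomposeFin.symm.toEmbedding (p, e0) : Perm (Fin (n+1)))
          = Equiv.Perm.decomposeFin.symm (p, e0) := rfl
      rw [this, e_decomposeFin, pow_add]
      by_cases hp : p = 0 <;> simp [hp, mul_comm]
    simp only [hterm]
    rw [← Finset.sum_mul_sum]
    rw [IH x']
    -- now handle the two factors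
    set A := (Finset.univ.filter fun p : Fin (n+1) => x p = x 0) with hA
    have h0A : (0 : Fin (n+1)) ∈ A := by simp [hA]
    have hsumA : ∑ p ∈ A, (if p = 0 then (1:ℝ) else ε) = 1 + (A.card - 1 : ℕ) * ε := by
      rw [← Finset.add_sum_erase A _ h0A, if_pos rfl]
      have : ∑ p ∈ A.erase 0, (if p = 0 then (1:ℝ) else ε) = (A.card - 1 : ℕ) * ε := by
        rw [Finset.sum_congr rfl (fun p hp => if_neg (Finset.ne_of_mem_erase hp)),
          Finset.sum_const, Finset.card_erase_of_mem h0A, nsmul_eq_mul]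
      rw [this]
    rw [hsumA]
    -- cardinal bookkeeping
    set B : Fin d → ℕ := fun y => (Finset.univ.filter fun i : Fin (n+1) => x i = y).card with hB
    set B' : Fin d → ℕ := fun y => (Finset.univ.filter fun j : Fin n => x' j = y).card with hB'
    have hBB : ∀ y, B y = (if x 0 = y then 1 else 0) + B' y := by
      intro y
      rw [hB, hB']
      simp only [Finset.card_filter]
      rw [Fin.sum_univ_succ]
    have hAB : A.card = B (x 0) := by
      rw [hA, hB]
    have hBx0 : B (x 0) = B' (x 0) + 1 := by rw [hBB (x 0), if_pos rfl]; omega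
    -- both sides: split off y = x 0
    rw [← Finset.mul_prod_erase Finset.univ _ (Finset.mem_univ (x 0)),
      ← Finset.mul_prod_erase Finset.univ
        (fun y => ∏ i ∈ Finset.range (B y - 1), (1 + (i + 1 : ℕ) * ε))
        (Finset.mem_univ (x 0))]
    have hprod_eq : ∏ y ∈ Finset.univ.erase (x 0),
          ∏ i ∈ Finset.range (B' y - 1), (1 + (i + 1 : ℕ) * ε)
        = ∏ y ∈ Finset.univ.erase (x 0),
          ∏ i ∈ Finset.range (B y - 1), (1 + (i + 1 : ℕ) * ε) := by
      apply Finset.prod_congr rfl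
      intro y hy
      have hne : x 0 ≠ y := Ne.symm (Finset.ne_of_mem_erase hy)
      rw [hBB y, if_neg hne, Nat.zero_add]
    rw [← mul_assoc, ← hprod_eq]
    congr 1
    -- (1 + (A.card - 1) ε) * ∏_{range (B' x0 - 1)} = ∏_{range (B x0 - 1)}
    have hcast : ((A.card - 1 : ℕ) : ℝ) = (B' (x 0) : ℝ) := by
      rw [hAB, hBx0]; norm_num
    rw [hcast]
    have hBm1 : B (x 0) - 1 = B' (x 0) := by omega
    rw [hBm1]
    have hC : (Finset.univ.filter (fun i : Fin n => x' i = x 0)).card = B' (x 0) := rfl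
    rw [hC]
    rcases Nat.eq_zero_or_pos (B' (x 0)) with h0 | hpos
    · rw [h0]; simp
    · obtain ⟨m, hm⟩ : ∃ m, B' (x 0) = m + 1 := ⟨B' (x 0) - 1, by omega⟩
      rw [hm, Finset.prod_range_succ]
      have h1 : m + 1 - 1 = m := by omega
      rw [h1]
      push_cast
      ring

/-- For a function `x : Fin T → Fin d` with fiber sizes `b_y`, the sum of
`ε^(T − c(π))` over all permutations `π` preserving every fiber of `x` (where `c(π)` is the
number of cycles of `π` counting fixed points, so that
`T − c(π) = π.cycleType.sum − π.cycleType.card`) equals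
`∏_y ∏_{i=1}^{b_y − 1} (1 + i·ε)`. -/
theorem stmt_7 (d T : ℕ) (hd : 1 ≤ d) (hT : 1 ≤ T) (x : Fin T → Fin d) (ε : ℝ)
    (b : Fin d → ℕ)
    (hb : ∀ y, b y = (Finset.univ.filter (fun i : Fin T => x i = y)).card) :
    ∑ π ∈ Finset.univ.filter (fun π : Equiv.Perm (Fin T) => ∀ i, x (π i) = x i),
        ε ^ (π.cycleType.sum - π.cycleType.card)
      = ∏ y : Fin d, ∏ i ∈ Finset.range (b y - 1), (1 + (i + 1 : ℕ) * ε) := by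
  have := aux_sum (d := d) ε T x
  simp only [hb]
  exact this
end

section
/- Let d ≥ 1 be a natural number, b : Fin d → ℕ, T = Σ_y b_y, and ε ≥ 0 a real number. Then Σ_{y : Fin d} Σ_{i=1}^{b_y − 1} log(1 + i·ε) − Σ_{i=1}^{T − 1} log(1 + i·ε/d) ≥ (ε − ε²/2)·Σ_y (b_y choose 2) − (ε/d)·(T choose 2) − ε²·Σ_y (b_y choose 3). -/
open Finset


lemma two_mul_choose_two' (n : ℕ) : 2 * n.choose 2 = n * (n - 1) := by
  rw [Nat.choose_two_right, Nat.mul_div_cancel']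
  exact (Nat.even_mul_pred_self n).two_dvd

lemma nat_s1 (n : ℕ) : ∑ i ∈ range n, (i + 1) = (n + 1).choose 2 := by
  induction n with
  | zero => simp
  | succ k ih =>
    rw [Finset.sum_range_succ, ih, Nat.choose_succ_succ (k+1) 1]
    simp only [Nat.succ_eq_add_one, Nat.choose_one_right]; norm_num
    omega

lemma nat_s2 (n : ℕ) : ∑ i ∈ range n, (i + 1) ^ 2 = (n + 1).choose 2 + 2 * (n + 1).choose 3 := by
  induction n with
  | zero => simp [Nat.choose_eq_zero_of_lt]
  | succ k ih =>
    rw [Finset.sum_range_succ, ih, Nat.choose_succ_succ (k+1) 1,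
      Nat.choose_succ_succ (k+1) 2]
    simp only [Nat.succ_eq_add_one, Nat.choose_one_right]; norm_num
    have h := two_mul_choose_two' (k+1)
    have e0 : (k+1) * (k+1-1) = k*k + k := by rw [Nat.add_sub_cancel]; ring
    have e1 : (k+1)^2 = k*k + 2*k + 1 := by ring
    omega

lemma real_s1 (m : ℕ) : ∑ i ∈ range (m - 1), ((i + 1 : ℕ) : ℝ) = (m.choose 2 : ℝ) := by
  cases m with
  | zero => simp
  | succ n =>
    rw [Nat.add_sub_cancel]
    exact_mod_cast congrArg (Nat.cast : ℕ → ℝ) (nat_s1 n)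

lemma real_s2 (m : ℕ) :
    ∑ i ∈ range (m - 1), ((i + 1 : ℕ) : ℝ) ^ 2 = (m.choose 2 : ℝ) + 2 * (m.choose 3 : ℝ) := by
  cases m with
  | zero => simp
  | succ n =>
    rw [Nat.add_sub_cancel]
    have := congrArg (Nat.cast : ℕ → ℝ) (nat_s2 n)
    push_cast at this ⊢
    simpa using this

lemma log_lb (x : ℝ) (hx : 0 ≤ x) : x - x ^ 2 / 2 ≤ Real.log (1 + x) := by
  have key : MonotoneOn (fun t : ℝ => Real.log (1 + t) - t + t ^ 2 / 2) (Set.Ici 0) := by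
    have hderiv : ∀ t ∈ Set.Ioi (0:ℝ),
        HasDerivAt (fun t : ℝ => Real.log (1 + t) - t + t ^ 2 / 2)
          ((1 + t)⁻¹ * 1 - 1 + t) t := by
      intro t ht
      have ht' : 0 < t := ht
      have h1 : HasDerivAt (fun t : ℝ => 1 + t) 1 t := by
        simpa using (hasDerivAt_id t).const_add 1
      have hlog : HasDerivAt (fun t : ℝ => Real.log (1 + t)) ((1 + t)⁻¹ * 1) t :=
        (Real.hasDerivAt_log (by linarith : (1:ℝ) + t ≠ 0)).comp t h1
      have hsq : HasDerivAt (fun t : ℝ => t ^ 2 / 2) t t := by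
        simpa using (hasDerivAt_pow 2 t).div_const 2
      exact (hlog.sub (hasDerivAt_id t)).add hsq
    apply monotoneOn_of_deriv_nonneg (convex_Ici 0)
    · apply ContinuousOn.add
      apply ContinuousOn.sub
      · exact Real.continuousOn_log.comp (by fun_prop)
          (fun t ht => by simp at ht ⊢; positivity)
      · fun_prop
      · fun_prop
    · intro t ht
      rw [interior_Ici] at ht
      exact (hderiv t ht).differentiableAt.differentiableWithinAt
    · intro t ht
      rw [interior_Ici] at ht
      have ht' : 0 < t := ht
      rw [(hderiv t ht).deriv]
      have h0 : (0:ℝ) < 1 + t := by linarith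
      have e : (1 + t)⁻¹ * 1 - 1 + t = t ^ 2 / (1 + t) := by field_simp; ring
      rw [e]; positivity
  have := key (Set.self_mem_Ici) (hx : x ∈ Set.Ici 0) hx
  simp at this
  linarith

/-- Key analytic estimate for the improved purity-estimation lower bound: for
`b : Fin d → ℕ` with `T = Σ_y b_y` and `ε ≥ 0`,
`Σ_y Σ_{i=1}^{b_y − 1} log(1 + iε) − Σ_{i=1}^{T − 1} log(1 + iε/d)`
is at least
`(ε − ε²/2)·Σ_y (b_y choose 2) − (ε/d)·(T choose 2) − ε²·Σ_y (b_y choose 3)`. -/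
theorem stmt_8 (d : ℕ) (hd : 1 ≤ d) (b : Fin d → ℕ) (T : ℕ) (hT : T = ∑ y, b y)
    (ε : ℝ) (hε : 0 ≤ ε) :
    (∑ y : Fin d, ∑ i ∈ Finset.range (b y - 1), Real.log (1 + (i + 1 : ℕ) * ε))
        - ∑ i ∈ Finset.range (T - 1), Real.log (1 + (i + 1 : ℕ) * ε / d)
      ≥ (ε - ε ^ 2 / 2) * ∑ y : Fin d, ((b y).choose 2 : ℝ)
        - (ε / d) * (T.choose 2 : ℝ)
        - ε ^ 2 * ∑ y : Fin d, ((b y).choose 3 : ℝ) := by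
  have hd' : (0:ℝ) < d := by exact_mod_cast hd
  -- lower bound for each inner sum
  have hlow : ∀ m : ℕ, ε * (m.choose 2 : ℝ) - ε ^ 2 / 2 * ((m.choose 2 : ℝ) + 2 * (m.choose 3 : ℝ))
      ≤ ∑ i ∈ Finset.range (m - 1), Real.log (1 + (i + 1 : ℕ) * ε) := by
    intro m
    have h1 : ∑ i ∈ Finset.range (m - 1), (((i + 1 : ℕ) : ℝ) * ε - (((i + 1 : ℕ) : ℝ) * ε) ^ 2 / 2)
        ≤ ∑ i ∈ Finset.range (m - 1), Real.log (1 + (i + 1 : ℕ) * ε) :=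
      Finset.sum_le_sum fun i _ => log_lb _ (by positivity)
    have h2 : ∑ i ∈ Finset.range (m - 1), (((i + 1 : ℕ) : ℝ) * ε - (((i + 1 : ℕ) : ℝ) * ε) ^ 2 / 2)
        = ε * (∑ i ∈ Finset.range (m - 1), ((i + 1 : ℕ) : ℝ))
          - ε ^ 2 / 2 * (∑ i ∈ Finset.range (m - 1), ((i + 1 : ℕ) : ℝ) ^ 2) := by
      rw [Finset.sum_sub_distrib, Finset.mul_sum, Finset.mul_sum]
      congr 1
      · exact Finset.sum_congr rfl fun i _ => by ring
      · exact Finset.sum_congr rfl fun i _ => by ring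
    rw [h2, real_s1, real_s2] at h1
    exact h1
  -- upper bound for the big sum
  have hup : ∑ i ∈ Finset.range (T - 1), Real.log (1 + (i + 1 : ℕ) * ε / d)
      ≤ (ε / d) * (T.choose 2 : ℝ) := by
    have h1 : ∑ i ∈ Finset.range (T - 1), Real.log (1 + (i + 1 : ℕ) * ε / d)
        ≤ ∑ i ∈ Finset.range (T - 1), ((i + 1 : ℕ) : ℝ) * ε / d := by
      refine Finset.sum_le_sum fun i _ => ?_
      have hx : (0:ℝ) ≤ ((i + 1 : ℕ) : ℝ) * ε / d := by positivity
      have := Real.log_le_sub_one_of_pos (show (0:ℝ) < 1 + ((i + 1 : ℕ) : ℝ) * ε / d by linarith)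
      linarith
    have h2 : ∑ i ∈ Finset.range (T - 1), ((i + 1 : ℕ) : ℝ) * ε / d
        = (ε / d) * (∑ i ∈ Finset.range (T - 1), ((i + 1 : ℕ) : ℝ)) := by
      rw [Finset.mul_sum]
      exact Finset.sum_congr rfl fun i _ => by ring
    rw [h2, real_s1] at h1
    exact h1
  have hsum : ∑ y : Fin d, (ε * ((b y).choose 2 : ℝ)
        - ε ^ 2 / 2 * (((b y).choose 2 : ℝ) + 2 * ((b y).choose 3 : ℝ)))
      ≤ ∑ y : Fin d, ∑ i ∈ Finset.range (b y - 1), Real.log (1 + (i + 1 : ℕ) * ε) :=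
    Finset.sum_le_sum fun y _ => hlow (b y)
  have heq : ∑ y : Fin d, (ε * ((b y).choose 2 : ℝ)
        - ε ^ 2 / 2 * (((b y).choose 2 : ℝ) + 2 * ((b y).choose 3 : ℝ)))
      = (ε - ε ^ 2 / 2) * ∑ y : Fin d, ((b y).choose 2 : ℝ)
        - ε ^ 2 * ∑ y : Fin d, ((b y).choose 3 : ℝ) := by
    rw [Finset.mul_sum, Finset.mul_sum, ← Finset.sum_sub_distrib]
    exact Finset.sum_congr rfl fun y _ => by ring
  rw [heq] at hsum
  linarith
end

section
/- Let d, k ≥ 1 be natural numbers, let ρ be a d×d positive semidefinite complex matrix with trace 1, and let M be a complex matrix indexed by (Fin k → Fin d) such that 1 − MᴴM is positive semidefinite (i.e., the operator norm of M is at most 1). For any d×d complex matrix A, write A^{⊗k} for the matrix indexed by f, g : Fin k → Fin d with entries ∏_{i : Fin k} A (f i) (g i). Then for any unitaries U, V in the unitary group of d×d complex matrices, |tr(M·(U ρ Uᴴ)^{⊗k}) − tr(M·(V ρ Vᴴ)^{⊗k})| ≤ 2·k·√(Re tr(ρ²))·‖U − V‖₂, where ‖X‖₂ = √(Σ_{i,j}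 |X i j|²) is the Frobenius norm. In other words, U ↦ tr(M·(U ρ Uᴴ)^{⊗k}) is Lipschitz with constant 2k√(tr(ρ²)) with respect to the Frobenius norm. -/
open Matrix
open scoped ComplexOrder

/-- The `k`-th tensor power of a `d × d` matrix, indexed by functions `Fin k → Fin d`. -/
noncomputable def tensorPow {d : ℕ} (k : ℕ) (A : Matrix (Fin d) (Fin d) ℂ) :
    Matrix (Fin k → Fin d) (Fin k → Fin d) ℂ :=
  fun f g => ∏ i : Fin k, A (f i) (g i)

/-- The Frobenius (Schatten 2) norm of a matrix. -/
noncomputable def frobNorm {m n : Type*} [Fintype m] [Fintype n]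
    (X : Matrix m n ℂ) : ℝ :=
  Real.sqrt (∑ i : m, ∑ j : n, ‖X i j‖ ^ 2)

namespace Stmt9Aux

/-- Squared Frobenius norm. -/
noncomputable def frobSq {m n : Type*} [Fintype m] [Fintype n] (X : Matrix m n ℂ) : ℝ :=
  ∑ i : m, ∑ j : n, ‖X i j‖ ^ 2

lemma frobNorm_eq {m n : Type*} [Fintype m] [Fintype n] (X : Matrix m n ℂ) :
    frobNorm X = Real.sqrt (frobSq X) := rfl

lemma frobSq_nonneg {m n : Type*} [Fintype m] [Fintype n] (X : Matrix m n ℂ) :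
    0 ≤ frobSq X :=
  Finset.sum_nonneg fun _ _ => Finset.sum_nonneg fun _ _ => by positivity

lemma frobSq_eq_re_trace {m n : Type*} [Fintype m] [Fintype n] (X : Matrix m n ℂ) :
    frobSq X = (Matrix.trace (Xᴴ * X)).re := by
  rw [Matrix.trace]
  rw [Complex.re_sum]
  rw [frobSq, Finset.sum_comm]
  refine Finset.sum_congr rfl fun j _ => ?_
  rw [Matrix.diag_apply, Matrix.mul_apply, Complex.re_sum]
  refine Finset.sum_congr rfl fun i _ => ?_
  rw [Matrix.conjTranspose_apply, Complex.sq_norm]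
  simp [Complex.normSq_apply, Complex.mul_re]

/-- products over slots, the basic tensor-product construction -/
noncomputable def prodMat {d : ℕ} (k : ℕ) (P : Fin k → Matrix (Fin d) (Fin d) ℂ) :
    Matrix (Fin k → Fin d) (Fin k → Fin d) ℂ :=
  fun f g => ∏ i : Fin k, P i (f i) (g i)

lemma tensorPow_eq_prodMat {d k : ℕ} (A : Matrix (Fin d) (Fin d) ℂ) :
    tensorPow k A = prodMat k (fun _ => A) := rfl

lemma prodMat_mul {d k : ℕ} (P Q : Fin k → Matrix (Fin d) (Fin d) ℂ) :
    prodMat k P * prodMat k Q = prodMat k (fun i => P i * Q i) := by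
  ext f g
  show ∑ h : Fin k → Fin d, (∏ i, P i (f i) (h i)) * ∏ i, Q i (h i) (g i)
      = ∏ i, (P i * Q i) (f i) (g i)
  simp only [Matrix.mul_apply]
  rw [Finset.prod_univ_sum, Fintype.piFinset_univ]
  exact Finset.sum_congr rfl fun h _ => (Finset.prod_mul_distrib).symm

lemma prodMat_conjTranspose {d k : ℕ} (P : Fin k → Matrix (Fin d) (Fin d) ℂ) :
    (prodMat k P)ᴴ = prodMat k (fun i => (P i)ᴴ) := by
  ext f g
  show star (∏ i, P i (g i) (f i)) = ∏ i, (P i)ᴴ (f i) (g i)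
  rw [star_prod]
  exact Finset.prod_congr rfl fun i _ => rfl

lemma frobSq_prodMat {d k : ℕ} (P : Fin k → Matrix (Fin d) (Fin d) ℂ) :
    frobSq (prodMat k P) = ∏ i : Fin k, frobSq (P i) := by
  simp only [frobSq, prodMat]
  rw [Finset.prod_univ_sum, Fintype.piFinset_univ]
  refine Finset.sum_congr rfl fun f _ => ?_
  rw [Finset.prod_univ_sum, Fintype.piFinset_univ]
  refine Finset.sum_congr rfl fun g _ => ?_
  rw [norm_prod, ← Finset.prod_pow]

lemma prodMat_update_apply {d k : ℕ} (P : Fin k → Matrix (Fin d) (Fin d) ℂ) (t : Fin k)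
    (c : Matrix (Fin d) (Fin d) ℂ) (f g : Fin k → Fin d) :
    prodMat k (Function.update P t c) f g
      = c (f t) (g t) * ∏ i ∈ Finset.univ.erase t, P i (f i) (g i) := by
  rw [prodMat, ← Finset.mul_prod_erase _ _ (Finset.mem_univ t), Function.update_self]
  congr 1
  exact Finset.prod_congr rfl fun i hi => by
    rw [Function.update_of_ne (Finset.ne_of_mem_erase hi)]

lemma prodMat_update_add {d k : ℕ} (P : Fin k → Matrix (Fin d) (Fin d) ℂ) (t : Fin k)
    (a b : Matrix (Fin d) (Fin d) ℂ) :
    prodMat k (Function.update P t (a + b))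
      = prodMat k (Function.update P t a) + prodMat k (Function.update P t b) := by
  ext f g
  show prodMat k _ f g = prodMat k _ f g + prodMat k _ f g
  rw [prodMat_update_apply, prodMat_update_apply, prodMat_update_apply,
    Matrix.add_apply, add_mul]

lemma prodMat_update_sub {d k : ℕ} (P : Fin k → Matrix (Fin d) (Fin d) ℂ) (t : Fin k)
    (a b : Matrix (Fin d) (Fin d) ℂ) :
    prodMat k (Function.update P t (a - b))
      = prodMat k (Function.update P t a) - prodMat k (Function.update P t b) := by
  ext f g
  show prodMat k _ f g = prodMat k _ f g - prodMat k _ f g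
  rw [prodMat_update_apply, prodMat_update_apply, prodMat_update_apply,
    Matrix.sub_apply, sub_mul]

lemma trace_re_nonneg {ι : Type*} [Fintype ι] [DecidableEq ι] {X : Matrix ι ι ℂ}
    (h : X.PosSemidef) : 0 ≤ (X.trace).re := by
  rw [Matrix.trace, Complex.re_sum]
  refine Finset.sum_nonneg fun i _ => ?_
  have h2 : (0 : ℂ) ≤ X i i := by
    exact h.diag_nonneg
  simpa using (Complex.le_def.mp h2).1

lemma abs_trace_mul_conjTranspose_le {ι : Type*} [Fintype ι] (Z Y : Matrix ι ι ℂ) :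
    ‖Matrix.trace (Z * Yᴴ)‖
      ≤ Real.sqrt (frobSq Z) * Real.sqrt (frobSq Y) := by
  have h1 : Matrix.trace (Z * Yᴴ) = ∑ p : ι × ι, Z p.1 p.2 * star (Y p.1 p.2) := by
    rw [Matrix.trace, Fintype.sum_prod_type]
    refine Finset.sum_congr rfl fun i _ => ?_
    rw [Matrix.diag_apply, Matrix.mul_apply]
    exact Finset.sum_congr rfl fun j _ => rfl
  rw [h1]
  calc ‖∑ p : ι × ι, Z p.1 p.2 * star (Y p.1 p.2)‖
      ≤ ∑ p : ι × ι, ‖Z p.1 p.2‖ * ‖Y p.1 p.2‖ := by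
        refine le_trans (norm_sum_le _ _) (le_of_eq ?_)
        refine Finset.sum_congr rfl fun p _ => ?_
        rw [norm_mul]
        simp
    _ ≤ Real.sqrt (frobSq Z) * Real.sqrt (frobSq Y) := by
        have hZ : frobSq Z = ∑ p : ι × ι, ‖Z p.1 p.2‖ ^ 2 := by
          rw [frobSq, Fintype.sum_prod_type]
        have hY : frobSq Y = ∑ p : ι × ι, ‖Y p.1 p.2‖ ^ 2 := by
          rw [frobSq, Fintype.sum_prod_type]
        rw [hZ, hY, ← Real.sqrt_mul (by positivity)]
        rw [Real.le_sqrt (by positivity) (by positivity)]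
        exact Finset.sum_mul_sq_le_sq_mul_sq _ _ _
  -- done

lemma frobSq_mul_le {ι : Type*} [Fintype ι] [DecidableEq ι] {M : Matrix ι ι ℂ}
    (hM : (1 - Mᴴ * M).PosSemidef) (X : Matrix ι ι ℂ) :
    frobSq (M * X) ≤ frobSq X := by
  have h := hM.conjTranspose_mul_mul_same X
  have htr := trace_re_nonneg h
  have expand : Xᴴ * (1 - Mᴴ * M) * X = Xᴴ * X - (M * X)ᴴ * (M * X) := by
    rw [Matrix.mul_sub, Matrix.mul_one, Matrix.sub_mul, Matrix.conjTranspose_mul]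
    simp [Matrix.mul_assoc]
  rw [expand, Matrix.trace_sub, Complex.sub_re, sub_nonneg] at htr
  rw [frobSq_eq_re_trace, frobSq_eq_re_trace]
  exact htr

lemma key_bound {ι : Type*} [Fintype ι] [DecidableEq ι] {M : Matrix ι ι ℂ}
    (hM : (1 - Mᴴ * M).PosSemidef) (X Y : Matrix ι ι ℂ) :
    ‖Matrix.trace (M * (X * Yᴴ))‖
      ≤ Real.sqrt (frobSq X) * Real.sqrt (frobSq Y) := by
  rw [← Matrix.mul_assoc]
  calc ‖Matrix.trace ((M * X) * Yᴴ)‖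
      ≤ Real.sqrt (frobSq (M * X)) * Real.sqrt (frobSq Y) :=
        abs_trace_mul_conjTranspose_le _ _
    _ ≤ Real.sqrt (frobSq X) * Real.sqrt (frobSq Y) := by
        have := frobSq_mul_le hM X
        gcongr

end Stmt9Aux

open Stmt9Aux in
/-- For a density matrix `ρ` and an operator `M` with `‖M‖_∞ ≤ 1` on the `k`-fold tensor
power space, the map `U ↦ tr(M·(UρU†)^{⊗k})` is Lipschitz with constant `2k√(tr(ρ²))`
with respect to the Frobenius norm on the unitary group. -/
theorem stmt_9 (d k : ℕ) (hd : 1 ≤ d) (hk : 1 ≤ k)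
    (ρ : Matrix (Fin d) (Fin d) ℂ) (hρ : ρ.PosSemidef) (hρtr : ρ.trace = 1)
    (M : Matrix (Fin k → Fin d) (Fin k → Fin d) ℂ)
    (hM : (1 - Mᴴ * M).PosSemidef)
    (U V : Matrix.unitaryGroup (Fin d) ℂ) :
    ‖(Matrix.trace (M * tensorPow k
            ((U : Matrix (Fin d) (Fin d) ℂ) * ρ * (U : Matrix (Fin d) (Fin d) ℂ)ᴴ))
          - Matrix.trace (M * tensorPow k
            ((V : Matrix (Fin d) (Fin d) ℂ) * ρ * (V : Matrix (Fin d) (Fin d) ℂ)ᴴ)))‖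
      ≤ 2 * k * Real.sqrt ((Matrix.trace (ρ * ρ)).re) *
          frobNorm ((U : Matrix (Fin d) (Fin d) ℂ) - (V : Matrix (Fin d) (Fin d) ℂ)) := by
  classical
  set Um : Matrix (Fin d) (Fin d) ℂ := (U : Matrix (Fin d) (Fin d) ℂ) with hUm
  set Vm : Matrix (Fin d) (Fin d) ℂ := (V : Matrix (Fin d) (Fin d) ℂ) with hVm
  have hUu : Umᴴ * Um = 1 := by
    rw [← Matrix.star_eq_conjTranspose]
    exact Matrix.UnitaryGroup.star_mul_self U
  have hVu : Vmᴴ * Vm = 1 := by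
    rw [← Matrix.star_eq_conjTranspose]
    exact Matrix.UnitaryGroup.star_mul_self V
  obtain ⟨R, hRH, hRR⟩ : ∃ R : Matrix (Fin d) (Fin d) ℂ, Rᴴ = R ∧ R * R = ρ := by
    open scoped MatrixOrder in
    exact ⟨CFC.sqrt ρ, (CFC.sqrt_nonneg ρ).posSemidef.1, CFC.sqrt_mul_sqrt_self ρ hρ.nonneg⟩
  have hρH : ρᴴ = ρ := hρ.1
  set A : Matrix (Fin d) (Fin d) ℂ := Um * ρ * Umᴴ with hA
  set B : Matrix (Fin d) (Fin d) ℂ := Vm * ρ * Vmᴴ with hB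
  -- Frobenius norms of the elementary factors
  have hfUR : frobSq (Um * R) = 1 := by
    rw [frobSq_eq_re_trace]
    have h1 : (Um * R)ᴴ * (Um * R) = ρ := by
      rw [Matrix.conjTranspose_mul, hRH, Matrix.mul_assoc, ← Matrix.mul_assoc Umᴴ, hUu,
        Matrix.one_mul, hRR]
    rw [h1, hρtr]
    simp
  have hfVR : frobSq (Vm * R) = 1 := by
    rw [frobSq_eq_re_trace]
    have h1 : (Vm * R)ᴴ * (Vm * R) = ρ := by
      rw [Matrix.conjTranspose_mul, hRH, Matrix.mul_assoc, ← Matrix.mul_assoc Vmᴴ, hVu,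
        Matrix.one_mul, hRR]
    rw [h1, hρtr]
    simp
  have hfUρ : frobSq (Um * ρ) = (Matrix.trace (ρ * ρ)).re := by
    rw [frobSq_eq_re_trace]
    have h1 : (Um * ρ)ᴴ * (Um * ρ) = ρ * ρ := by
      rw [Matrix.conjTranspose_mul, hρH, Matrix.mul_assoc, ← Matrix.mul_assoc Umᴴ, hUu,
        Matrix.one_mul]
    rw [h1]
  have hfVρ : frobSq (Vm * ρ) = (Matrix.trace (ρ * ρ)).re := by
    rw [frobSq_eq_re_trace]
    have h1 : (Vm * ρ)ᴴ * (Vm * ρ) = ρ * ρ := by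
      rw [Matrix.conjTranspose_mul, hρH, Matrix.mul_assoc, ← Matrix.mul_assoc Vmᴴ, hVu,
        Matrix.one_mul]
    rw [h1]
  have hURA : (Um * R) * (Um * R)ᴴ = A := by
    rw [Matrix.conjTranspose_mul, hRH, Matrix.mul_assoc Um R, ← Matrix.mul_assoc R R, hRR,
      ← Matrix.mul_assoc]
  have hVRB : (Vm * R) * (Vm * R)ᴴ = B := by
    rw [Matrix.conjTranspose_mul, hRH, Matrix.mul_assoc Vm R, ← Matrix.mul_assoc R R, hRR,
      ← Matrix.mul_assoc]
  have hAB : A - B = (Um - Vm) * (Um * ρ)ᴴ + (Vm * ρ) * (Um - Vm)ᴴ := by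
    rw [hA, hB]
    simp only [Matrix.conjTranspose_mul, Matrix.conjTranspose_sub, hρH]
    noncomm_ring
  -- the telescoping family
  set F : ℕ → Matrix (Fin k → Fin d) (Fin k → Fin d) ℂ :=
    fun s => prodMat k (fun i => if (i : ℕ) < s then A else B) with hF
  have hF0 : F 0 = tensorPow k B := by
    rw [tensorPow_eq_prodMat]
    exact congrArg (prodMat k) (funext fun i => if_neg (Nat.not_lt_zero _))
  have hFk : F k = tensorPow k A := by
    rw [tensorPow_eq_prodMat]
    exact congrArg (prodMat k) (funext fun i => if_pos i.isLt)
  have htel : tensorPow k A - tensorPow k B = ∑ t ∈ Finset.range k, (F (t+1) - F t) := by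
    rw [Finset.sum_range_sub, hF0, hFk]
  -- the per-term bound
  have hterm : ∀ t ∈ Finset.range k,
      ‖Matrix.trace (M * (F (t+1) - F t))‖
        ≤ 2 * (Real.sqrt (frobSq (Um - Vm)) * Real.sqrt ((Matrix.trace (ρ * ρ)).re)) := by
    intro t htmem
    have ht : t < k := Finset.mem_range.mp htmem
    set t' : Fin k := ⟨t, ht⟩ with ht'
    set base : Fin k → Matrix (Fin d) (Fin d) ℂ :=
      fun i => if (i : ℕ) < t then A else B with hbase
    set W : Fin k → Matrix (Fin d) (Fin d) ℂ :=
      fun i => if (i : ℕ) < t then Um * R else Vm * R with hW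
    have hup1 : (fun i : Fin k => if (i : ℕ) < t + 1 then A else B)
        = Function.update base t' A := by
      funext i
      rcases eq_or_ne i t' with h | h
      · subst h
        simp [Function.update_self, hbase, ht']
      · rw [Function.update_of_ne h, hbase]
        have hne : (i : ℕ) ≠ t := fun hc => h (Fin.ext hc)
        simp [Nat.lt_succ_iff_lt_or_eq, le_iff_lt_or_eq, hne]
    have hup2 : base = Function.update base t' B := by
      funext i
      rcases eq_or_ne i t' with h | h
      · subst h
        simp [Function.update_self, hbase, ht']
      · rw [Function.update_of_ne h]
    have hFdiff : F (t+1) - F t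
        = prodMat k (Function.update base t' ((Um - Vm) * (Um * ρ)ᴴ))
          + prodMat k (Function.update base t' ((Vm * ρ) * (Um - Vm)ᴴ)) := by
      have e1 : F (t+1) = prodMat k (Function.update base t' A) :=
        congrArg (prodMat k) hup1
      have e2 : F t = prodMat k (Function.update base t' B) :=
        congrArg (prodMat k) hup2
      have e3 : Function.update base t' (A - B)
          = Function.update base t' ((Um - Vm) * (Um * ρ)ᴴ + (Vm * ρ) * (Um - Vm)ᴴ) := by
        rw [hAB]
      rw [e1, e2, ← prodMat_update_sub, e3, prodMat_update_add]
    -- factorizations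
    have hWW : ∀ i : Fin k, i ≠ t' → W i * (W i)ᴴ = base i := by
      intro i h
      simp only [hW, hbase]
      by_cases hlt : (i : ℕ) < t
      · rw [if_pos hlt, if_pos hlt, hURA]
      · rw [if_neg hlt, if_neg hlt, hVRB]
    have hfact1 : prodMat k (Function.update base t' ((Um - Vm) * (Um * ρ)ᴴ))
        = prodMat k (Function.update W t' (Um - Vm))
          * (prodMat k (Function.update W t' (Um * ρ)))ᴴ := by
      rw [prodMat_conjTranspose, prodMat_mul]
      refine congrArg (prodMat k) (funext fun i => ?_)
      rcases eq_or_ne i t' with h | h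
      · subst h
        rw [Function.update_self, Function.update_self, Function.update_self]
      · rw [Function.update_of_ne h, Function.update_of_ne h, Function.update_of_ne h]
        exact (hWW i h).symm
    have hfact2 : prodMat k (Function.update base t' ((Vm * ρ) * (Um - Vm)ᴴ))
        = prodMat k (Function.update W t' (Vm * ρ))
          * (prodMat k (Function.update W t' (Um - Vm)))ᴴ := by
      rw [prodMat_conjTranspose, prodMat_mul]
      refine congrArg (prodMat k) (funext fun i => ?_)
      rcases eq_or_ne i t' with h | h
      · subst h
        rw [Function.update_self, Function.update_self, Function.update_self]
      · rw [Function.update_of_ne h, Function.update_of_ne h, Function.update_of_ne h]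
        exact (hWW i h).symm
    have hfup : ∀ c : Matrix (Fin d) (Fin d) ℂ,
        frobSq (prodMat k (Function.update W t' c)) = frobSq c := by
      intro c
      rw [frobSq_prodMat, ← Finset.mul_prod_erase _ _ (Finset.mem_univ t'),
        Function.update_self]
      rw [Finset.prod_eq_one, mul_one]
      intro i hi
      rw [Function.update_of_ne (Finset.ne_of_mem_erase hi)]
      simp only [hW]
      by_cases hlt : (i : ℕ) < t
      · rw [if_pos hlt]
        exact hfUR
      · rw [if_neg hlt]
        exact hfVR
    rw [hFdiff, Matrix.mul_add, Matrix.trace_add]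
    calc ‖Matrix.trace (M * prodMat k (Function.update base t' ((Um - Vm) * (Um * ρ)ᴴ)))
          + Matrix.trace (M * prodMat k (Function.update base t' ((Vm * ρ) * (Um - Vm)ᴴ)))‖
        ≤ ‖Matrix.trace (M * prodMat k (Function.update base t' ((Um - Vm) * (Um * ρ)ᴴ)))‖
          + ‖Matrix.trace (M * prodMat k (Function.update base t' ((Vm * ρ) * (Um - Vm)ᴴ)))‖ :=
        norm_add_le _ _
      _ ≤ Real.sqrt (frobSq (Um - Vm)) * Real.sqrt (frobSq (Um * ρ))
          + Real.sqrt (frobSq (Vm * ρ)) * Real.sqrt (frobSq (Um - Vm)) := by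
          refine add_le_add ?_ ?_
          ·
            rw [hfact1]
            calc ‖Matrix.trace (M * (prodMat k (Function.update W t' (Um - Vm))
                  * (prodMat k (Function.update W t' (Um * ρ)))ᴴ))‖
                ≤ Real.sqrt (frobSq (prodMat k (Function.update W t' (Um - Vm))))
                  * Real.sqrt (frobSq (prodMat k (Function.update W t' (Um * ρ)))) :=
                key_bound hM _ _
              _ = Real.sqrt (frobSq (Um - Vm)) * Real.sqrt (frobSq (Um * ρ)) := by
                  rw [hfup, hfup]
          ·
            rw [hfact2]
            calc ‖Matrix.trace (M * (prodMat k (Function.update W t' (Vm * ρ))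
                  * (prodMat k (Function.update W t' (Um - Vm)))ᴴ))‖
                ≤ Real.sqrt (frobSq (prodMat k (Function.update W t' (Vm * ρ))))
                  * Real.sqrt (frobSq (prodMat k (Function.update W t' (Um - Vm)))) :=
                key_bound hM _ _
              _ = Real.sqrt (frobSq (Vm * ρ)) * Real.sqrt (frobSq (Um - Vm)) := by
                  rw [hfup, hfup]
      _ = 2 * (Real.sqrt (frobSq (Um - Vm)) * Real.sqrt ((Matrix.trace (ρ * ρ)).re)) := by
          rw [hfUρ, hfVρ]
          ring
  -- put everything together
  have hsum : Matrix.trace (M * tensorPow k A) - Matrix.trace (M * tensorPow k B)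
      = ∑ t ∈ Finset.range k, Matrix.trace (M * (F (t+1) - F t)) := by
    rw [← Matrix.trace_sub, ← Matrix.mul_sub, htel, Matrix.mul_sum, Matrix.trace_sum]
  rw [hsum]
  calc ‖∑ t ∈ Finset.range k, Matrix.trace (M * (F (t+1) - F t))‖
      ≤ ∑ t ∈ Finset.range k, ‖Matrix.trace (M * (F (t+1) - F t))‖ :=
      norm_sum_le _ _
    _ ≤ ∑ t ∈ Finset.range k,
          2 * (Real.sqrt (frobSq (Um - Vm)) * Real.sqrt ((Matrix.trace (ρ * ρ)).re)) :=
      Finset.sum_le_sum hterm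
    _ = 2 * k * Real.sqrt ((Matrix.trace (ρ * ρ)).re) * frobNorm (Um - Vm) := by
      rw [Finset.sum_const, Finset.card_range, frobNorm_eq, nsmul_eq_mul]
      ring
end

section
/- Let m and n be finite types, and let A, C be complex square matrices indexed by m and B, D be complex square matrices indexed by n. If ‖A‖₁ = ‖D‖₁ = 1, then ‖A ⊗ B − C ⊗ D‖₁ ≤ ‖B − D‖₁ + ‖A − C‖₁, where ⊗ denotes the Kronecker (tensor) product of matrices. -/
open Matrix
open scoped ComplexOrder Kronecker

/-- The trace norm of a complex square matrix: the trace of the positive semidefinite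
square root of `XᴴX`. -/
noncomputable def traceNorm {m : Type*} [Fintype m] [DecidableEq m] (X : Matrix m m ℂ) : ℝ :=
  (((Matrix.posSemidef_conjTranspose_mul_self X).1.eigenvectorUnitary : Matrix m m ℂ) *
      diagonal (((↑) : ℝ → ℂ) ∘ Real.sqrt ∘ (Matrix.posSemidef_conjTranspose_mul_self X).1.eigenvalues) *
      (star (Matrix.posSemidef_conjTranspose_mul_self X).1.eigenvectorUnitary : Matrix m m ℂ)).trace.re

section aux

variable {n : Type*} [Fintype n] [DecidableEq n]

lemma traceNorm_eq_sum (X : Matrix n n ℂ) :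
    traceNorm X = ∑ i, Real.sqrt
      ((Matrix.posSemidef_conjTranspose_mul_self X).1.eigenvalues i) := by
  set hH := (Matrix.posSemidef_conjTranspose_mul_self X).1
  have h : ((hH.eigenvectorUnitary : Matrix n n ℂ) *
      diagonal (((↑) : ℝ → ℂ) ∘ Real.sqrt ∘ hH.eigenvalues) *
      (star hH.eigenvectorUnitary : Matrix n n ℂ)).trace
      = ∑ i, (Real.sqrt (hH.eigenvalues i) : ℂ) := by
    rw [Matrix.trace_mul_cycle]
    rw [show (star hH.eigenvectorUnitary.1 : Matrix n n ℂ) * hH.eigenvectorUnitary.1 = 1 from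
      (Matrix.mem_unitaryGroup_iff').mp hH.eigenvectorUnitary.2, one_mul, Matrix.trace_diagonal]
    rfl
  rw [traceNorm, h]
  simp

lemma diag_entry_nonneg {M : Matrix n n ℂ} (hM : M.PosSemidef) (i : n) : 0 ≤ M i i := by
  exact hM.diag_nonneg

lemma re_trace_conjTranspose_mul_le (X V : Matrix n n ℂ) (hV : (1 - Vᴴ * V).PosSemidef) :
    (Matrix.trace (Vᴴ * X)).re ≤ traceNorm X := by
  set hH := (Matrix.posSemidef_conjTranspose_mul_self X).1 with hHdef
  set W : Matrix n n ℂ := (hH.eigenvectorUnitary : Matrix n n ℂ) with hWdef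
  have hW1 : W * Wᴴ = 1 := by
    simpa [Matrix.star_eq_conjTranspose] using
      (Matrix.mem_unitaryGroup_iff).mp hH.eigenvectorUnitary.2
  have hW2 : Wᴴ * W = 1 := by
    simpa [Matrix.star_eq_conjTranspose] using
      (Matrix.mem_unitaryGroup_iff').mp hH.eigenvectorUnitary.2
  have hdiag : Wᴴ * (Xᴴ * X) * W = Matrix.diagonal (Complex.ofReal ∘ hH.eigenvalues) := by
    simpa [Matrix.star_eq_conjTranspose, hWdef, Unitary.conjStarAlgAut_apply] using
      hH.conjStarAlgAut_star_eigenvectorUnitary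
  have key : Matrix.trace (Vᴴ * X) = Matrix.trace ((V * W)ᴴ * (X * W)) := by
    rw [Matrix.conjTranspose_mul]
    calc Matrix.trace (Vᴴ * X) = Matrix.trace (W * Wᴴ * (Vᴴ * X)) := by rw [hW1, one_mul]
    _ = Matrix.trace (Wᴴ * (Vᴴ * X) * W) := (Matrix.trace_mul_cycle _ _ _).symm
    _ = Matrix.trace (Wᴴ * Vᴴ * (X * W)) := by rw [mul_assoc, mul_assoc, mul_assoc]
  set a : n → EuclideanSpace ℂ n := fun i => (WithLp.equiv 2 _).symm (fun k => (V * W) k i)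
    with hadef
  set b : n → EuclideanSpace ℂ n := fun i => (WithLp.equiv 2 _).symm (fun k => (X * W) k i)
    with hbdef
  have hent : ∀ (M N : Matrix n n ℂ) (i : n),
      (Mᴴ * N) i i = dotProduct (star fun k => M k i) (fun k => N k i) := by
    intro M N i
    simp [Matrix.mul_apply, Matrix.conjTranspose_apply, dotProduct]
  have hinner : ∀ i, (inner ℂ (a i) (b i) : ℂ) = ((V * W)ᴴ * (X * W)) i i := by
    intro i
    rw [hadef, hbdef, WithLp.equiv_symm_apply, EuclideanSpace.inner_toLp_toLp, dotProduct_comm, hent]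
  have hXW : (X * W)ᴴ * (X * W) = Matrix.diagonal (Complex.ofReal ∘ hH.eigenvalues) := by
    rw [Matrix.conjTranspose_mul, ← hdiag]
    noncomm_ring
  have hb : ∀ i, ‖b i‖ = Real.sqrt (hH.eigenvalues i) := by
    intro i
    have h1 : (inner ℂ (b i) (b i) : ℂ) = ((X * W)ᴴ * (X * W)) i i := by
      rw [hbdef, WithLp.equiv_symm_apply, EuclideanSpace.inner_toLp_toLp, dotProduct_comm, hent]
    rw [@norm_eq_sqrt_re_inner ℂ]
    congr 1
    rw [h1, hXW]
    simp
  have ha : ∀ i, ‖a i‖ ≤ 1 := by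
    intro i
    have hC : (Wᴴ * (1 - Vᴴ * V) * W).PosSemidef := hV.conjTranspose_mul_mul_same W
    have hsplit : Wᴴ * (1 - Vᴴ * V) * W = 1 - Wᴴ * (Vᴴ * V) * W := by
      rw [Matrix.mul_sub, Matrix.sub_mul, mul_one, hW2]
    have hle := diag_entry_nonneg (hsplit ▸ hC) i
    have h1 : (inner ℂ (a i) (a i) : ℂ) = (Wᴴ * (Vᴴ * V) * W) i i := by
      rw [hadef, WithLp.equiv_symm_apply, EuclideanSpace.inner_toLp_toLp, dotProduct_comm, ← hent,
        show (V * W)ᴴ * (V * W) = Wᴴ * (Vᴴ * V) * W by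
          rw [Matrix.conjTranspose_mul]; noncomm_ring]
    have hre : RCLike.re (inner ℂ (a i) (a i) : ℂ) ≤ 1 := by
      have := (Complex.le_def.mp hle).1
      simp only [Matrix.sub_apply, Matrix.one_apply_eq, Complex.sub_re, Complex.one_re,
        Complex.zero_re] at this
      rw [h1]
      simpa using this
    rw [@norm_eq_sqrt_re_inner ℂ]
    calc Real.sqrt (RCLike.re (inner ℂ (a i) (a i) : ℂ)) ≤ Real.sqrt 1 :=
      Real.sqrt_le_sqrt hre
    _ = 1 := Real.sqrt_one
  calc (Matrix.trace (Vᴴ * X)).re = ∑ i, (((V * W)ᴴ * (X * W)) i i).re := by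
        rw [key, Matrix.trace]; simp [Matrix.diag]
  _ = ∑ i, (inner ℂ (a i) (b i) : ℂ).re := by simp_rw [hinner]
  _ ≤ ∑ i, ‖(inner ℂ (a i) (b i) : ℂ)‖ := Finset.sum_le_sum fun i _ => Complex.re_le_norm _
  _ ≤ ∑ i, ‖a i‖ * ‖b i‖ := Finset.sum_le_sum fun i _ => norm_inner_le_norm _ _
  _ ≤ ∑ i, 1 * Real.sqrt (hH.eigenvalues i) := by
      refine Finset.sum_le_sum fun i _ => ?_
      rw [hb i]
      exact mul_le_mul_of_nonneg_right (ha i) (Real.sqrt_nonneg _)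
  _ = traceNorm X := by rw [traceNorm_eq_sum]; simp

end aux

section aux2

variable {n : Type*} [Fintype n] [DecidableEq n]

lemma traceNorm_add_le (X Y : Matrix n n ℂ) :
    traceNorm (X + Y) ≤ traceNorm X + traceNorm Y := by
  set Z := X + Y with hZdef
  set hH := (Matrix.posSemidef_conjTranspose_mul_self Z).1 with hHdef
  set W : Matrix n n ℂ := (hH.eigenvectorUnitary : Matrix n n ℂ) with hWdef
  have hW1 : W * Wᴴ = 1 := by
    simpa [Matrix.star_eq_conjTranspose] using
      (Matrix.mem_unitaryGroup_iff).mp hH.eigenvectorUnitary.2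
  have hW2 : Wᴴ * W = 1 := by
    simpa [Matrix.star_eq_conjTranspose] using
      (Matrix.mem_unitaryGroup_iff').mp hH.eigenvectorUnitary.2
  set d := hH.eigenvalues with hddef
  have hd : ∀ i, 0 ≤ d i := (Matrix.posSemidef_conjTranspose_mul_self Z).eigenvalues_nonneg
  have hdiag : Wᴴ * (Zᴴ * Z) * W = Matrix.diagonal (Complex.ofReal ∘ d) := by
    simpa [Matrix.star_eq_conjTranspose, hWdef, hddef, Unitary.conjStarAlgAut_apply] using
      hH.conjStarAlgAut_star_eigenvectorUnitary
  have hspec : Zᴴ * Z = W * Matrix.diagonal (Complex.ofReal ∘ d) * Wᴴ := by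
    rw [← hdiag]
    calc Zᴴ * Z = (W * Wᴴ) * (Zᴴ * Z) * (W * Wᴴ) := by rw [hW1, one_mul, mul_one]
    _ = W * (Wᴴ * (Zᴴ * Z) * W) * Wᴴ := by noncomm_ring
  have hWmid : ∀ M : Matrix n n ℂ, Wᴴ * (W * M) = M := fun M => by
    rw [← mul_assoc, hW2, one_mul]
  have hmul : ∀ u v : n → ℂ, (W * Matrix.diagonal u * Wᴴ) * (W * Matrix.diagonal v * Wᴴ)
      = W * Matrix.diagonal (u * v) * Wᴴ := by
    intro u v
    simp only [Matrix.mul_assoc, hWmid]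
    rw [← Matrix.mul_assoc (Matrix.diagonal u), Matrix.diagonal_mul_diagonal]
    rfl
  set f : n → ℝ := fun i => (Real.sqrt (d i))⁻¹ with hfdef
  set T : Matrix n n ℂ := W * Matrix.diagonal (Complex.ofReal ∘ f) * Wᴴ with hTdef
  have hTher : Tᴴ = T := by
    rw [hTdef, Matrix.conjTranspose_mul, Matrix.conjTranspose_mul,
      Matrix.diagonal_conjTranspose, Matrix.conjTranspose_conjTranspose]
    have : star (Complex.ofReal ∘ f) = Complex.ofReal ∘ f := by
      funext i; simp [Function.comp, Complex.conj_ofReal]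
    rw [this, Matrix.mul_assoc]
  set V : Matrix n n ℂ := Z * T with hVdef
  have hfd : ∀ i, f i * d i = Real.sqrt (d i) := by
    intro i
    rcases eq_or_lt_of_le (hd i) with h | h
    · simp [hfdef, ← h]
    · have hs : Real.sqrt (d i) ≠ 0 := ne_of_gt (Real.sqrt_pos.mpr h)
      show (Real.sqrt (d i))⁻¹ * d i = Real.sqrt (d i)
      field_simp
      rw [Real.sq_sqrt h.le]
  have hfdf : ∀ i, f i * d i * f i = if d i = 0 then 0 else 1 := by
    intro i
    rcases eq_or_lt_of_le (hd i) with h | h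
    · simp [← h]
    · rw [if_neg (ne_of_gt h), hfd i]
      show Real.sqrt (d i) * (Real.sqrt (d i))⁻¹ = 1
      exact mul_inv_cancel₀ (ne_of_gt (Real.sqrt_pos.mpr h))
  have hVZ : Vᴴ * Z = W * Matrix.diagonal (Complex.ofReal ∘ fun i => Real.sqrt (d i)) * Wᴴ := by
    have hfun : (Complex.ofReal ∘ f) * (Complex.ofReal ∘ d)
        = Complex.ofReal ∘ fun i => Real.sqrt (d i) := by
      funext i
      simp only [Pi.mul_apply, Function.comp_apply, ← Complex.ofReal_mul]
      rw [hfd i]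
    rw [hVdef, Matrix.conjTranspose_mul, hTher, Matrix.mul_assoc, hspec, hTdef, hmul, hfun]
  have hVV : (1 - Vᴴ * V).PosSemidef := by
    have hVVeq : Vᴴ * V = W * Matrix.diagonal
        (Complex.ofReal ∘ fun i => f i * d i * f i) * Wᴴ := by
      calc Vᴴ * V = T * (Zᴴ * Z) * T := by
            rw [hVdef, Matrix.conjTranspose_mul, hTher]; noncomm_ring
      _ = (T * (W * Matrix.diagonal (Complex.ofReal ∘ d) * Wᴴ)) * T := by
            rw [hspec, Matrix.mul_assoc]
      _ = W * Matrix.diagonal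
            (Complex.ofReal ∘ f * (Complex.ofReal ∘ d) * (Complex.ofReal ∘ f)) * Wᴴ := by
            rw [hTdef, hmul, hmul]
      _ = W * Matrix.diagonal (Complex.ofReal ∘ fun i => f i * d i * f i) * Wᴴ := by
            have hfun2 : Complex.ofReal ∘ f * (Complex.ofReal ∘ d) * (Complex.ofReal ∘ f)
                = Complex.ofReal ∘ fun i => f i * d i * f i := by
              funext i
              simp [Function.comp, ← Complex.ofReal_mul]
            rw [hfun2]
    have hone : (1 : Matrix n n ℂ) = W * Matrix.diagonal (fun _ => (1 : ℂ)) * Wᴴ := by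
      rw [Matrix.diagonal_one, mul_one, hW1]
    rw [hVVeq, hone, ← Matrix.sub_mul, ← Matrix.mul_sub, Matrix.diagonal_sub]
    refine Matrix.PosSemidef.mul_mul_conjTranspose_same ?_ W
    refine Matrix.PosSemidef.diagonal fun i => ?_
    have h01 : (0:ℝ) ≤ 1 - f i * d i * f i := by
      rw [hfdf i]; split <;> norm_num
    show (0:ℂ) ≤ 1 - Complex.ofReal (f i * d i * f i)
    rw [show (1 : ℂ) - Complex.ofReal (f i * d i * f i)
        = Complex.ofReal (1 - f i * d i * f i) by push_cast; ring]
    rw [Complex.le_def]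
    simp [h01]
  have htr : (Matrix.trace (Vᴴ * Z)).re = traceNorm Z := by
    rw [hVZ, Matrix.trace_mul_cycle, hW2, one_mul, Matrix.trace_diagonal, traceNorm_eq_sum]
    simp [Function.comp]
    rfl
  have hXY : (Matrix.trace (Vᴴ * Z)).re
      = (Matrix.trace (Vᴴ * X)).re + (Matrix.trace (Vᴴ * Y)).re := by
    rw [hZdef, Matrix.mul_add, Matrix.trace_add, Complex.add_re]
  calc traceNorm Z = (Matrix.trace (Vᴴ * X)).re + (Matrix.trace (Vᴴ * Y)).re := by
        rw [← hXY, htr]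
  _ ≤ traceNorm X + traceNorm Y :=
      add_le_add (re_trace_conjTranspose_mul_le X V hVV) (re_trace_conjTranspose_mul_le Y V hVV)

open scoped MatrixOrder in
lemma sqrt_congr {A B : Matrix n n ℂ} (h : A = B) :
    CFC.sqrt A = CFC.sqrt B := by subst h; rfl

open scoped MatrixOrder in
lemma traceNorm_eq_cfcSqrt (X : Matrix n n ℂ) :
    traceNorm X = (CFC.sqrt (Xᴴ * X)).trace.re := by
  have hP := Matrix.posSemidef_conjTranspose_mul_self X
  rw [CFC.sqrt_eq_cfc, cfc_nnreal_eq_real _ (Xᴴ * X) hP.nonneg, hP.1.cfc_eq]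
  simp only [IsHermitian.cfc, Unitary.conjStarAlgAut_apply, Real.coe_sqrt, Real.coe_toNNReal']
  rw [traceNorm]
  congr 5
  funext i
  simp [max_eq_left (hP.eigenvalues_nonneg i)]

lemma trace_im_zero {M : Matrix n n ℂ} (hM : M.IsHermitian) : (Matrix.trace M).im = 0 := by
  exact Complex.conj_eq_iff_im.mp
    (by rw [← Complex.star_def, ← Matrix.trace_conjTranspose, hM.eq])

end aux2

section kron

variable {m n : Type*} [Fintype m] [DecidableEq m] [Fintype n] [DecidableEq n]

lemma kron_conjTranspose (A : Matrix m m ℂ) (B : Matrix n n ℂ) :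
    (A ⊗ₖ B)ᴴ = Aᴴ ⊗ₖ Bᴴ := by
  ext ⟨i, k⟩ ⟨j, l⟩
  simp [Matrix.conjTranspose_apply, Matrix.kroneckerMap_apply, mul_comm]

open scoped MatrixOrder in
lemma traceNorm_kronecker (X : Matrix m m ℂ) (Y : Matrix n n ℂ) :
    traceNorm (X ⊗ₖ Y) = traceNorm X * traceNorm Y := by
  have hX := Matrix.posSemidef_conjTranspose_mul_self X
  have hY := Matrix.posSemidef_conjTranspose_mul_self Y
  have hK : (X ⊗ₖ Y)ᴴ * (X ⊗ₖ Y) = (Xᴴ * X) ⊗ₖ (Yᴴ * Y) := by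
    rw [kron_conjTranspose, ← Matrix.mul_kronecker_mul]
  have hSxPSD : (CFC.sqrt (Xᴴ * X)).PosSemidef :=
    Matrix.nonneg_iff_posSemidef.mp (CFC.sqrt_nonneg _)
  have hSyPSD : (CFC.sqrt (Yᴴ * Y)).PosSemidef :=
    Matrix.nonneg_iff_posSemidef.mp (CFC.sqrt_nonneg _)
  have hkronPSD := hSxPSD.kronecker hSyPSD
  have hsq : CFC.sqrt (Xᴴ * X) ⊗ₖ CFC.sqrt (Yᴴ * Y) * (CFC.sqrt (Xᴴ * X) ⊗ₖ CFC.sqrt (Yᴴ * Y))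
      = (Xᴴ * X) ⊗ₖ (Yᴴ * Y) := by
    rw [← Matrix.mul_kronecker_mul, CFC.sqrt_mul_sqrt_self _ hX.nonneg,
      CFC.sqrt_mul_sqrt_self _ hY.nonneg]
  have h2 : CFC.sqrt ((X ⊗ₖ Y)ᴴ * (X ⊗ₖ Y)) = CFC.sqrt (Xᴴ * X) ⊗ₖ CFC.sqrt (Yᴴ * Y) := by
    rw [hK]; exact CFC.sqrt_unique hsq hkronPSD.nonneg
  rw [traceNorm_eq_cfcSqrt, h2, Matrix.trace_kronecker, Complex.mul_re,
    trace_im_zero hSxPSD.1, trace_im_zero hSyPSD.1, traceNorm_eq_cfcSqrt X, traceNorm_eq_cfcSqrt Y]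
  simp

end kron

/-- If `‖A‖₁ = ‖D‖₁ = 1`, then `‖A ⊗ B − C ⊗ D‖₁ ≤ ‖B − D‖₁ + ‖A − C‖₁` for the
Kronecker product of complex square matrices. -/
theorem stmt_10 (m n : Type*) [Fintype m] [DecidableEq m] [Fintype n] [DecidableEq n]
    (A C : Matrix m m ℂ) (B D : Matrix n n ℂ)
    (hA : traceNorm A = 1) (hD : traceNorm D = 1) :
    traceNorm (A ⊗ₖ B - C ⊗ₖ D) ≤ traceNorm (B - D) + traceNorm (A - C) := by
  have hsplit : A ⊗ₖ B - C ⊗ₖ D = A ⊗ₖ (B - D) + (A - C) ⊗ₖ D := by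
    ext ⟨i, k⟩ ⟨j, l⟩
    simp [Matrix.kroneckerMap_apply]
    ring
  calc traceNorm (A ⊗ₖ B - C ⊗ₖ D)
      = traceNorm (A ⊗ₖ (B - D) + (A - C) ⊗ₖ D) := by rw [hsplit]
  _ ≤ traceNorm (A ⊗ₖ (B - D)) + traceNorm ((A - C) ⊗ₖ D) := traceNorm_add_le _ _
  _ = traceNorm A * traceNorm (B - D) + traceNorm (A - C) * traceNorm D := by
      rw [traceNorm_kronecker, traceNorm_kronecker]
  _ = traceNorm (B - D) + traceNorm (A - C) := by rw [hA, hD]; ring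
end

section
/- Let d > 0 be a real number and a, b natural numbers. Then ∏_{i=0}^{b−1} (d + i)/(d + a + i) ≥ exp(−(a·b)/d). -/
open Finset

/-- For real `d > 0` and naturals `a, b`:
`∏_{i=0}^{b−1} (d + i)/(d + a + i) ≥ exp(−ab/d)`. -/
theorem stmt_11 (d : ℝ) (hd : 0 < d) (a b : ℕ) :
    ∏ i ∈ Finset.range b, (d + i) / (d + a + i) ≥ Real.exp (-(a * b : ℝ) / d) := by
  have hb : ∀ i ∈ Finset.range b, Real.exp (-(a : ℝ) / d) ≤ (d + i) / (d + a + i) := by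
    intro i _
    have hdi : (0 : ℝ) < d + i := by positivity
    have hdai : (0 : ℝ) < d + a + i := by positivity
    have h1 : (a : ℝ) / d + 1 ≤ Real.exp ((a : ℝ) / d) := Real.add_one_le_exp _
    have h2 : (d + i) * ((a : ℝ) / d) = a + i * a / d := by field_simp
    have h3 : (0 : ℝ) ≤ i * a / d := by positivity
    have h4 : (d + i) * ((a : ℝ) / d + 1) ≤ (d + i) * Real.exp ((a : ℝ) / d) :=
      mul_le_mul_of_nonneg_left h1 hdi.le
    have key : d + a + i ≤ (d + i) * Real.exp ((a : ℝ) / d) := by nlinarith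
    rw [neg_div, Real.exp_neg, ← one_div, div_le_div_iff₀ (Real.exp_pos _) hdai]
    nlinarith
  calc Real.exp (-(a * b : ℝ) / d)
      = ∏ _i ∈ Finset.range b, Real.exp (-(a : ℝ) / d) := by
        rw [Finset.prod_const, Finset.card_range, ← Real.exp_nat_mul]
        congr 1
        ring
    _ ≤ ∏ i ∈ Finset.range b, (d + i) / (d + a + i) :=
        Finset.prod_le_prod (fun i _ => (Real.exp_pos _).le) hb
end

section
/- Let r, d ≥ 1 be natural numbers, let μ be the Haar probability measure on the unitary group of d×d complex matrices, let e₀ be a fixed standard basis unit vector of ℂ^d, and let μ^r be the r-fold product of μ on (Fin r → U(d)). Then ∫ (1/r²)·Σ_{i,j : Fin r} |⟨U_i e₀, U_j e₀⟩|² dμ^r(U) = 1/r + (r − 1)/(r·d). That is, the expected purity of the uniform convex mixture ρ = (1/r) Σ_{i=1}^r |ψ_i⟩⟨ψ_i| of r i.i.d. Haar-random pure states ψ_i = U_i e₀ equals (1/r²)(r + r(r−1)/d). -/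
open MeasureTheory Matrix

section aux
variable {d : ℕ}

instance : SecondCountableTopology (Matrix (Fin d) (Fin d) ℂ) :=
  inferInstanceAs (SecondCountableTopology (Fin d → Fin d → ℂ))

instance : SecondCountableTopology (Matrix.unitaryGroup (Fin d) ℂ) :=
  TopologicalSpace.Subtype.secondCountableTopology _

lemma aux_dot (A B : Matrix (Fin d) (Fin d) ℂ) (x y : Fin d → ℂ) :
    star (A.mulVec x) ⬝ᵥ (B.mulVec y) = star x ⬝ᵥ ((Aᴴ * B).mulVec y) := by
  rw [star_mulVec, ← dotProduct_mulVec, mulVec_mulVec]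

lemma aux_dot' (U V : Matrix.unitaryGroup (Fin d) ℂ) (x y : Fin d → ℂ) :
    star ((U : Matrix (Fin d) (Fin d) ℂ).mulVec x) ⬝ᵥ ((V : Matrix (Fin d) (Fin d) ℂ).mulVec y)
      = star x ⬝ᵥ (((U⁻¹ * V : Matrix.unitaryGroup (Fin d) ℂ) :
          Matrix (Fin d) (Fin d) ℂ).mulVec y) := by
  rw [aux_dot]; congr 2

lemma aux_e (k : Fin d) (w : Fin d → ℂ) :
    star (fun i => if i = k then (1:ℂ) else 0) ⬝ᵥ w = w k := by
  simp only [dotProduct, Pi.star_apply]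
  rw [Finset.sum_eq_single k]
  · simp
  · intro b _ hb; simp [hb]
  · simp

lemma aux_norm (U : Matrix.unitaryGroup (Fin d) ℂ) (x : Fin d → ℂ) :
    star ((U : Matrix (Fin d) (Fin d) ℂ).mulVec x) ⬝ᵥ ((U : Matrix (Fin d) (Fin d) ℂ).mulVec x)
      = star x ⬝ᵥ x := by
  rw [aux_dot' U U x x, inv_mul_cancel]
  simp

lemma aux_perm_mem (σ : Equiv.Perm (Fin d)) :
    (Matrix.of fun a b => if a = σ b then (1:ℂ) else 0) ∈ Matrix.unitaryGroup (Fin d) ℂ := by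
  constructor
  · ext a b
    simp only [Matrix.mul_apply, Matrix.star_apply, Matrix.of_apply, Matrix.one_apply,
      apply_ite (star : ℂ → ℂ), star_one, star_zero]
    rw [Finset.sum_eq_single (σ a)]
    · simp [σ.injective.eq_iff, eq_comm]
    · intro c _ hc
      rw [if_neg (fun h => hc h), zero_mul]
    · simp
  · ext a b
    simp only [Matrix.mul_apply, Matrix.star_apply, Matrix.of_apply, Matrix.one_apply,
      apply_ite (star : ℂ → ℂ), star_one, star_zero]
    rw [Finset.sum_eq_single (σ.symm a)]
    · by_cases h : a = b <;> simp [h, Equiv.apply_symm_apply, Equiv.symm_apply_eq, eq_comm]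
    · intro c _ hc
      rw [if_neg (fun h => hc ((σ.symm_apply_eq.mpr h).symm)), zero_mul]
    · simp

lemma aux_perm_mulVec (σ : Equiv.Perm (Fin d)) (x : Fin d → ℂ) :
    ((Matrix.of fun a b => if a = σ b then (1:ℂ) else 0).mulVec x) = fun a => x (σ.symm a) := by
  ext a
  simp only [Matrix.mulVec, dotProduct, Matrix.of_apply]
  rw [Finset.sum_eq_single (σ.symm a)]
  · simp
  · intro c _ hc
    rw [if_neg (fun h => hc ((σ.symm_apply_eq.mpr h).symm)), zero_mul]
  · simp

lemma contA (x y : Fin d → ℂ) :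
    Continuous (fun p : Matrix (Fin d) (Fin d) ℂ × Matrix (Fin d) (Fin d) ℂ =>
      star (p.1.mulVec x) ⬝ᵥ (p.2.mulVec y)) := by
  simp only [dotProduct, Matrix.mulVec, Pi.star_apply]
  fun_prop

lemma contB (x y : Fin d → ℂ) :
    Continuous (fun A : Matrix (Fin d) (Fin d) ℂ => star x ⬝ᵥ (A.mulVec y)) := by
  simp only [dotProduct, Matrix.mulVec, Pi.star_apply]
  fun_prop

lemma auxCS (x y : Fin d → ℂ) (hx : star x ⬝ᵥ x = 1) (hy : star y ⬝ᵥ y = 1) :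
    ‖star x ⬝ᵥ y‖ ≤ 1 := by
  set x' : EuclideanSpace ℂ (Fin d) := (WithLp.equiv 2 _).symm x
  set y' : EuclideanSpace ℂ (Fin d) := (WithLp.equiv 2 _).symm y
  have hxy : inner ℂ x' y' = star x ⬝ᵥ y := (EuclideanSpace.inner_toLp_toLp x y).trans (dotProduct_comm _ _)
  have hx' : ‖x'‖ = 1 := by
    have h1 : (inner ℂ x' x' : ℂ) = 1 := ((EuclideanSpace.inner_toLp_toLp x x).trans (dotProduct_comm _ _)).trans hx
    have := inner_self_eq_norm_sq (𝕜 := ℂ) x'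
    rw [h1, RCLike.one_re] at this
    nlinarith [norm_nonneg x']
  have hy' : ‖y'‖ = 1 := by
    have h1 : (inner ℂ y' y' : ℂ) = 1 := ((EuclideanSpace.inner_toLp_toLp y y).trans (dotProduct_comm _ _)).trans hy
    have := inner_self_eq_norm_sq (𝕜 := ℂ) y'
    rw [h1, RCLike.one_re] at this
    nlinarith [norm_nonneg y']
  calc ‖star x ⬝ᵥ y‖ = ‖(inner ℂ x' y' : ℂ)‖ := by rw [hxy]
    _ ≤ ‖x'‖ * ‖y'‖ := norm_inner_le_norm x' y'
    _ = 1 := by rw [hx', hy', mul_one]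

lemma sum_abs_sq (w : Fin d → ℂ) :
    ∑ k, ‖w k‖ ^ 2 = (star w ⬝ᵥ w).re := by
  simp only [dotProduct, Pi.star_apply, Complex.re_sum]
  congr 1
  ext k
  rw [Complex.sq_norm, RCLike.star_def, ← Complex.normSq_eq_conj_mul_self, Complex.ofReal_re]

lemma cont_f (x y : Fin d → ℂ) :
    Continuous (fun V : Matrix.unitaryGroup (Fin d) ℂ =>
      ‖star x ⬝ᵥ ((V : Matrix (Fin d) (Fin d) ℂ).mulVec y)‖ ^ 2) :=
  (continuous_norm.comp ((contB x y).comp continuous_subtype_val)).pow 2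

lemma integrable_f (μ : Measure (Matrix.unitaryGroup (Fin d) ℂ)) [IsProbabilityMeasure μ]
    (x y : Fin d → ℂ) (hx : star x ⬝ᵥ x = 1) (hy : star y ⬝ᵥ y = 1) :
    Integrable (fun V : Matrix.unitaryGroup (Fin d) ℂ =>
      ‖star x ⬝ᵥ ((V : Matrix (Fin d) (Fin d) ℂ).mulVec y)‖ ^ 2) μ := by
  refine Integrable.mono' (integrable_const 1) (cont_f x y).aestronglyMeasurable
    (ae_of_all _ fun V => ?_)
  rw [Real.norm_eq_abs, abs_of_nonneg (by positivity)]
  have h := auxCS x ((V : Matrix (Fin d) (Fin d) ℂ).mulVec y) hx (by rw [aux_norm]; exact hy)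
  nlinarith [norm_nonneg
    (star x ⬝ᵥ ((V : Matrix (Fin d) (Fin d) ℂ).mulVec y))]

lemma inner_integral (hd : 0 < d) (μ : Measure (Matrix.unitaryGroup (Fin d) ℂ))
    [IsProbabilityMeasure μ] [μ.IsMulLeftInvariant]
    (e₀ : Fin d → ℂ) (he₀ : e₀ = fun i => if i = ⟨0, hd⟩ then 1 else 0)
    (U : Matrix.unitaryGroup (Fin d) ℂ) :
    ∫ V : Matrix.unitaryGroup (Fin d) ℂ,
      ‖star ((U : Matrix (Fin d) (Fin d) ℂ).mulVec e₀) ⬝ᵥ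
        ((V : Matrix (Fin d) (Fin d) ℂ).mulVec e₀)‖ ^ 2 ∂μ = 1 / d := by
  have he1 : star e₀ ⬝ᵥ e₀ = 1 := by subst he₀; rw [aux_e]; simp
  set h : Matrix.unitaryGroup (Fin d) ℂ → ℝ := fun V =>
    ‖star e₀ ⬝ᵥ ((V : Matrix (Fin d) (Fin d) ℂ).mulVec e₀)‖ ^ 2 with hh
  have key : ∀ W : Matrix.unitaryGroup (Fin d) ℂ,
      (∫ V : Matrix.unitaryGroup (Fin d) ℂ,
        ‖star ((W : Matrix (Fin d) (Fin d) ℂ).mulVec e₀) ⬝ᵥ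
          ((V : Matrix (Fin d) (Fin d) ℂ).mulVec e₀)‖ ^ 2 ∂μ) = ∫ V, h V ∂μ := by
    intro W
    have hpt : ∀ V : Matrix.unitaryGroup (Fin d) ℂ,
        ‖star ((W : Matrix (Fin d) (Fin d) ℂ).mulVec e₀) ⬝ᵥ
          ((V : Matrix (Fin d) (Fin d) ℂ).mulVec e₀)‖ ^ 2 = h (W⁻¹ * V) := fun V => by
      rw [hh]; simp only []; rw [aux_dot']
    simp_rw [hpt]
    exact integral_mul_left_eq_self h W⁻¹
  rw [key U]
  have step2 : ∀ k : Fin d,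
      (∫ V : Matrix.unitaryGroup (Fin d) ℂ,
        ‖star (fun a => if a = k then (1:ℂ) else 0) ⬝ᵥ
          ((V : Matrix (Fin d) (Fin d) ℂ).mulVec e₀)‖ ^ 2 ∂μ) = ∫ V, h V ∂μ := by
    intro k
    set σ := Equiv.swap (⟨0, hd⟩ : Fin d) k with hσ
    set P : Matrix.unitaryGroup (Fin d) ℂ := ⟨_, aux_perm_mem σ⟩ with hP
    have hPe : ((P : Matrix (Fin d) (Fin d) ℂ).mulVec e₀) =
        fun a => if a = k then (1:ℂ) else 0 := by
      rw [hP]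
      show ((Matrix.of fun a b => if a = σ b then (1:ℂ) else 0).mulVec e₀) = _
      rw [aux_perm_mulVec]
      ext a
      rw [he₀]
      simp only []
      have : σ.symm a = ⟨0, hd⟩ ↔ a = k := by
        rw [Equiv.symm_apply_eq, hσ, Equiv.swap_apply_left]
      simp [this]
    rw [← hPe]
    exact key P
  have hsum : ∀ V : Matrix.unitaryGroup (Fin d) ℂ,
      (∑ k : Fin d, ‖star (fun a => if a = k then (1:ℂ) else 0) ⬝ᵥ
        ((V : Matrix (Fin d) (Fin d) ℂ).mulVec e₀)‖ ^ 2) = 1 := by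
    intro V
    have : ∀ k : Fin d, ‖star (fun a => if a = k then (1:ℂ) else 0) ⬝ᵥ
        ((V : Matrix (Fin d) (Fin d) ℂ).mulVec e₀)‖ ^ 2
        = ‖((V : Matrix (Fin d) (Fin d) ℂ).mulVec e₀) k‖ ^ 2 := fun k => by
      rw [aux_e]
    simp_rw [this]
    rw [sum_abs_sq, aux_norm, he1]
    simp
  have hek : ∀ k : Fin d, star (fun a => if a = k then (1:ℂ) else 0) ⬝ᵥ
      (fun a => if a = k then (1:ℂ) else 0) = 1 := fun k => by rw [aux_e]; simp
  have step3 : (d : ℝ) * ∫ V, h V ∂μ = 1 := by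
    calc (d : ℝ) * ∫ V, h V ∂μ
        = ∑ _k : Fin d, ∫ V, h V ∂μ := by rw [Finset.sum_const, Finset.card_fin, nsmul_eq_mul]
      _ = ∑ k : Fin d, ∫ V : Matrix.unitaryGroup (Fin d) ℂ,
            ‖star (fun a => if a = k then (1:ℂ) else 0) ⬝ᵥ
              ((V : Matrix (Fin d) (Fin d) ℂ).mulVec e₀)‖ ^ 2 ∂μ :=
          Finset.sum_congr rfl fun k _ => (step2 k).symm
      _ = ∫ V : Matrix.unitaryGroup (Fin d) ℂ, ∑ k : Fin d,
            ‖star (fun a => if a = k then (1:ℂ) else 0) ⬝ᵥ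
              ((V : Matrix (Fin d) (Fin d) ℂ).mulVec e₀)‖ ^ 2 ∂μ :=
          (integral_finset_sum _ fun k _ => integrable_f μ _ _ (hek k) he1).symm
      _ = ∫ _V : Matrix.unitaryGroup (Fin d) ℂ, (1:ℝ) ∂μ :=
          integral_congr_ae (ae_of_all _ fun V => hsum V)
      _ = 1 := by simp
  have hd' : (d : ℝ) ≠ 0 := Nat.cast_ne_zero.mpr hd.ne'
  field_simp at step3 ⊢
  linarith [step3]

end aux

lemma map_pair {α : Type*} [MeasurableSpace α] (μ : Measure α) [IsProbabilityMeasure μ]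
    {r : ℕ} {i j : Fin r} (hij : i ≠ j) :
    Measure.map (fun U : Fin r → α => (U i, U j)) (Measure.pi fun _ => μ) = μ.prod μ := by
  refine (Measure.prod_eq fun s t hs ht => ?_).symm
  rw [Measure.map_apply ((measurable_pi_apply i).prodMk (measurable_pi_apply j)) (hs.prod ht)]
  have hpre : (fun U : Fin r → α => (U i, U j)) ⁻¹' (s ×ˢ t)
      = Set.pi Set.univ (fun k => if k = i then s else if k = j then t else Set.univ) := by
    ext U
    simp only [Set.mem_preimage, Set.mem_prod, Set.mem_pi, Set.mem_univ, true_implies]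
    constructor
    · rintro ⟨h1, h2⟩ k
      by_cases hk : k = i
      · subst hk; simp [h1]
      · by_cases hk' : k = j
        · subst hk'; simp [hk, h2]
        · simp [hk, hk']
    · intro h
      refine ⟨?_, ?_⟩
      · have := h i; simpa using this
      · have := h j; simpa [Ne.symm hij] using this
  rw [hpre, Measure.pi_pi]
  rw [← Finset.mul_prod_erase Finset.univ _ (Finset.mem_univ i)]
  rw [← Finset.mul_prod_erase _ _
    (Finset.mem_erase.mpr ⟨Ne.symm hij, Finset.mem_univ j⟩)]
  rw [if_pos rfl, if_neg (Ne.symm hij), if_pos rfl]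
  rw [Finset.prod_eq_one, mul_one]
  intro k hk
  simp only [Finset.mem_erase] at hk
  rw [if_neg hk.2.1, if_neg hk.1, measure_univ]


/-- The squared overlap of the two random pure states. -/
noncomputable def Fq {d : ℕ} (e₀ : Fin d → ℂ) (u v : Matrix.unitaryGroup (Fin d) ℂ) : ℝ :=
  ‖star ((u : Matrix (Fin d) (Fin d) ℂ).mulVec e₀) ⬝ᵥ
    ((v : Matrix (Fin d) (Fin d) ℂ).mulVec e₀)‖ ^ 2

section Fq
variable {d : ℕ} (e₀ : Fin d → ℂ) (he1 : star e₀ ⬝ᵥ e₀ = 1)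

lemma Fq_nonneg (u v : Matrix.unitaryGroup (Fin d) ℂ) : 0 ≤ Fq e₀ u v := by
  unfold Fq; positivity

include he1 in
lemma Fq_le (u v : Matrix.unitaryGroup (Fin d) ℂ) : Fq e₀ u v ≤ 1 := by
  have hu : star ((u : Matrix (Fin d) (Fin d) ℂ).mulVec e₀) ⬝ᵥ
      ((u : Matrix (Fin d) (Fin d) ℂ).mulVec e₀) = 1 := by rw [aux_norm]; exact he1
  have hv : star ((v : Matrix (Fin d) (Fin d) ℂ).mulVec e₀) ⬝ᵥ
      ((v : Matrix (Fin d) (Fin d) ℂ).mulVec e₀) = 1 := by rw [aux_norm]; exact he1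
  have h := auxCS _ _ hu hv
  have h0 := norm_nonneg
    (star ((u : Matrix (Fin d) (Fin d) ℂ).mulVec e₀) ⬝ᵥ
      ((v : Matrix (Fin d) (Fin d) ℂ).mulVec e₀))
  unfold Fq
  nlinarith

include he1 in
lemma Fq_diag (u : Matrix.unitaryGroup (Fin d) ℂ) : Fq e₀ u u = 1 := by
  unfold Fq
  rw [aux_norm, he1]
  simp

lemma Fq_cont : Continuous (fun p : Matrix.unitaryGroup (Fin d) ℂ ×
    Matrix.unitaryGroup (Fin d) ℂ => Fq e₀ p.1 p.2) :=
  (continuous_norm.comp ((contA e₀ e₀).comp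
      ((continuous_subtype_val.comp continuous_fst).prodMk
        (continuous_subtype_val.comp continuous_snd)))).pow 2

end Fq

/-- The expected purity of the uniform mixture `ρ = (1/r) Σᵢ |ψᵢ⟩⟨ψᵢ|` of `r` i.i.d.
Haar-random pure states `ψᵢ = Uᵢe₀` in dimension `d` equals `1/r + (r − 1)/(r·d)`.
The Haar probability measure is encoded as an arbitrary left-invariant Borel probability
measure `μ` on the unitary group (such a measure is unique, and is the Haar measure). -/
theorem stmt_12 (r d : ℕ) (hr : 0 < r) (hd : 0 < d)
    (μ : Measure (Matrix.unitaryGroup (Fin d) ℂ))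
    [IsProbabilityMeasure μ] [μ.IsMulLeftInvariant]
    (e₀ : Fin d → ℂ) (he₀ : e₀ = fun i => if i = ⟨0, hd⟩ then 1 else 0) :
    ∫ U : Fin r → Matrix.unitaryGroup (Fin d) ℂ,
        (1 / (r : ℝ) ^ 2) * ∑ i : Fin r, ∑ j : Fin r,
          ‖(star ((U i : Matrix (Fin d) (Fin d) ℂ).mulVec e₀) ⬝ᵥ
              ((U j : Matrix (Fin d) (Fin d) ℂ).mulVec e₀))‖ ^ 2
        ∂(Measure.pi fun _ : Fin r => μ)
      = 1 / (r : ℝ) + ((r : ℝ) - 1) / ((r : ℝ) * d) := by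
  have he1 : star e₀ ⬝ᵥ e₀ = 1 := by rw [he₀, aux_e]; simp
  set ν : Measure (Fin r → Matrix.unitaryGroup (Fin d) ℂ) :=
    Measure.pi fun _ : Fin r => μ with hν
  haveI : IsProbabilityMeasure ν := by rw [hν]; infer_instance
  have hInt : ∀ i j : Fin r,
      Integrable (fun U : Fin r → Matrix.unitaryGroup (Fin d) ℂ => Fq e₀ (U i) (U j)) ν := by
    intro i j
    have hcont := Fq_cont e₀
    have hc : Continuous (fun U : Fin r → Matrix.unitaryGroup (Fin d) ℂ =>
        Fq e₀ (U i) (U j)) := by fun_prop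
    refine Integrable.mono' (integrable_const 1) hc.aestronglyMeasurable
      (ae_of_all _ fun U => ?_)
    rw [Real.norm_eq_abs, abs_of_nonneg (Fq_nonneg _ _ _)]
    exact Fq_le e₀ he1 _ _
  have hdiag : ∀ i : Fin r, (∫ U, Fq e₀ (U i) (U i) ∂ν) = 1 := by
    intro i
    simp only [Fq_diag e₀ he1]
    simp
  have hoff : ∀ i j : Fin r, i ≠ j → (∫ U, Fq e₀ (U i) (U j) ∂ν) = 1 / d := by
    intro i j hij
    have hmeas : Measurable (fun U : Fin r → Matrix.unitaryGroup (Fin d) ℂ => (U i, U j)) :=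
      (measurable_pi_apply i).prodMk (measurable_pi_apply j)
    have h1 : (∫ U, Fq e₀ (U i) (U j) ∂ν) =
        ∫ p : Matrix.unitaryGroup (Fin d) ℂ × Matrix.unitaryGroup (Fin d) ℂ,
          Fq e₀ p.1 p.2 ∂(μ.prod μ) := by
      rw [hν, ← map_pair μ hij,
        integral_map hmeas.aemeasurable (Fq_cont e₀).aestronglyMeasurable]
    rw [h1]
    have hIntProd : Integrable (fun p : Matrix.unitaryGroup (Fin d) ℂ ×
        Matrix.unitaryGroup (Fin d) ℂ => Fq e₀ p.1 p.2) (μ.prod μ) := by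
      refine Integrable.mono' (integrable_const 1) (Fq_cont e₀).aestronglyMeasurable
        (ae_of_all _ fun p => ?_)
      rw [Real.norm_eq_abs, abs_of_nonneg (Fq_nonneg _ _ _)]
      exact Fq_le e₀ he1 _ _
    rw [integral_prod _ hIntProd]
    have hin : ∀ u : Matrix.unitaryGroup (Fin d) ℂ, (∫ v, Fq e₀ u v ∂μ) = 1 / d := fun u =>
      inner_integral hd μ e₀ he₀ u
    rw [integral_congr_ae (ae_of_all _ hin)]
    simp
  have hswap : (∫ U : Fin r → Matrix.unitaryGroup (Fin d) ℂ,
        (1 / (r : ℝ) ^ 2) * ∑ i : Fin r, ∑ j : Fin r, Fq e₀ (U i) (U j) ∂ν)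
      = (1 / (r : ℝ) ^ 2) * ∑ i : Fin r, ∑ j : Fin r, (∫ U, Fq e₀ (U i) (U j) ∂ν) := by
    rw [integral_const_mul]
    congr 1
    rw [integral_finset_sum _ fun i _ => integrable_finset_sum _ fun j _ => hInt i j]
    exact Finset.sum_congr rfl fun i _ => integral_finset_sum _ fun j _ => hInt i j
  have hval : ∀ i : Fin r, (∑ j : Fin r, (∫ U, Fq e₀ (U i) (U j) ∂ν))
      = (r : ℝ) * (1 / d) + (1 - 1 / d) := by
    intro i
    have hterm : ∀ j : Fin r, (∫ U, Fq e₀ (U i) (U j) ∂ν)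
        = 1 / (d : ℝ) + (if j = i then 1 - 1 / (d : ℝ) else 0) := by
      intro j
      by_cases h : j = i
      · subst h; rw [hdiag, if_pos rfl]; ring
      · rw [hoff i j (fun hh => h hh.symm), if_neg h]; ring
    rw [Finset.sum_congr rfl fun j _ => hterm j, Finset.sum_add_distrib,
      Finset.sum_const, Finset.card_fin, Finset.sum_ite_eq' Finset.univ i
        (fun _ => 1 - 1 / (d : ℝ)), if_pos (Finset.mem_univ i), nsmul_eq_mul]
  calc ∫ U : Fin r → Matrix.unitaryGroup (Fin d) ℂ,
        (1 / (r : ℝ) ^ 2) * ∑ i : Fin r, ∑ j : Fin r,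
          ‖star ((U i : Matrix (Fin d) (Fin d) ℂ).mulVec e₀) ⬝ᵥ
              ((U j : Matrix (Fin d) (Fin d) ℂ).mulVec e₀)‖ ^ 2 ∂ν
      = (1 / (r : ℝ) ^ 2) * ∑ i : Fin r, ∑ j : Fin r, (∫ U, Fq e₀ (U i) (U j) ∂ν) := hswap
    _ = (1 / (r : ℝ) ^ 2) * ∑ _i : Fin r, ((r : ℝ) * (1 / d) + (1 - 1 / d)) := by
        rw [Finset.sum_congr rfl fun i _ => hval i]
    _ = (1 / (r : ℝ) ^ 2) * ((r : ℝ) * ((r : ℝ) * (1 / d) + (1 - 1 / d))) := by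
        rw [Finset.sum_const, Finset.card_fin, nsmul_eq_mul]
    _ = 1 / (r : ℝ) + ((r : ℝ) - 1) / ((r : ℝ) * d) := by
        have hr' : (r : ℝ) ≠ 0 := Nat.cast_ne_zero.mpr hr.ne'
        have hd' : (d : ℝ) ≠ 0 := Nat.cast_ne_zero.mpr hd.ne'
        field_simp
        ring
end
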